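/- arXiv:math/9912194 — 9 statements merged into one kernel-verified Lean document; each statement's English description precedes it below -/
import Mathlib

section
/- Let β be a Pisot unit. For ξ ∈ ℝ, one has ξ ∈ P_β if and only if ξ ∈ ℚ(β) and Tr(aξ) ∈ ℤ for every a ∈ ℤ[β]. In other words, P_β is the dual lattice of ℤ[β] with respect to the trace form. -/
open Filter Polynomial

/-- Distance from a real number to the nearest integer. -/
noncomputable def nearestIntDist (y : ℝ) : ℝ := |y - (round y : ℤ)|

/-- `P_β = {ξ ∈ ℝ : ‖ξ βⁿ‖ → 0 as n → +∞}`. -/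
def PisotSet (β : ℝ) : Set ℝ :=
  {ξ : ℝ | Filter.Tendsto (fun n : ℕ => nearestIntDist (ξ * β ^ n)) Filter.atTop (nhds 0)}

/-- `β` is a Pisot unit. -/
def IsPisotUnit (β : ℝ) : Prop :=
  1 < β ∧ IsIntegral ℤ β ∧
    (∀ z : ℂ, ((minpoly ℤ β).map (Int.castRingHom ℂ)).IsRoot z → z ≠ (β : ℂ) →
      ‖z‖ < 1) ∧
    ((minpoly ℤ β).coeff 0 = 1 ∨ (minpoly ℤ β).coeff 0 = -1)

open IntermediateField

lemma traceA (β : ℝ) (hβ : IsPisotUnit β) (x : ℚ⟮β⟯) :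
    Tendsto (fun n : ℕ => ((Algebra.trace ℚ ℚ⟮β⟯ (x * (AdjoinSimple.gen ℚ β)^n) : ℚ) : ℝ)
      - (x : ℝ) * β ^ n) atTop (nhds 0) := by
  have hQ : IsIntegral ℚ β := hβ.2.1.tower_top
  haveI : FiniteDimensional ℚ ℚ⟮β⟯ := adjoin.finiteDimensional hQ
  classical
  set g : ℚ⟮β⟯ := AdjoinSimple.gen ℚ β with hg
  let σ₀ : ℚ⟮β⟯ →ₐ[ℚ] ℂ := (Complex.ofRealHom.comp (algebraMap ℚ⟮β⟯ ℝ)).toRatAlgHom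
  have hσ₀ : ∀ y : ℚ⟮β⟯, σ₀ y = ((y : ℝ) : ℂ) := fun y => rfl
  have hgβ : ((g : ℝ) : ℂ) = (β : ℂ) := by
    norm_cast
  have hmin : minpoly ℚ g = (minpoly ℤ β).map (Int.castRingHom ℚ) := by
    have h1 : minpoly ℚ ((algebraMap ℚ⟮β⟯ ℝ) g) = minpoly ℚ g :=
      minpoly.algebraMap_eq (algebraMap ℚ⟮β⟯ ℝ).injective g
    rw [AdjoinSimple.algebraMap_gen] at h1
    rw [← h1]
    simpa using minpoly.isIntegrallyClosed_eq_field_fractions' ℚ hβ.2.1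
  have hsmall : ∀ σ : ℚ⟮β⟯ →ₐ[ℚ] ℂ, σ ≠ σ₀ → ‖σ g‖ < 1 := by
    intro σ hσ
    have hroot : aeval (σ g) (minpoly ℚ g) = 0 := by
      rw [Polynomial.aeval_algHom_apply]
      simp [minpoly.aeval]
    apply hβ.2.2.1
    · rw [hmin, Polynomial.aeval_def, Polynomial.eval₂_eq_eval_map, Polynomial.map_map] at hroot
      rw [Polynomial.IsRoot]
      rwa [show (algebraMap ℚ ℂ).comp (Int.castRingHom ℚ) = Int.castRingHom ℂ from
        Subsingleton.elim _ _] at hroot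
    · intro h
      apply hσ
      apply PowerBasis.algHom_ext (adjoin.powerBasis hQ)
      rw [adjoin.powerBasis_gen]
      exact h.trans hgβ.symm
  have htr : ∀ n : ℕ, ((((Algebra.trace ℚ ℚ⟮β⟯ (x * g ^ n) : ℚ) : ℝ)
      - (x : ℝ) * β ^ n : ℝ) : ℂ) = ∑ σ ∈ Finset.univ.erase σ₀, σ x * σ g ^ n := by
    intro n
    have h1 := trace_eq_sum_embeddings (E := ℂ) (K := ℚ) (L := ℚ⟮β⟯) (x := x * g ^ n)
    have h2 : ∑ σ : ℚ⟮β⟯ →ₐ[ℚ] ℂ, σ (x * g ^ n)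
        = σ₀ (x * g ^ n) + ∑ σ ∈ Finset.univ.erase σ₀, σ x * σ g ^ n := by
      rw [← Finset.add_sum_erase _ _ (Finset.mem_univ σ₀)]
      congr 1
      exact Finset.sum_congr rfl fun σ _ => by rw [map_mul, map_pow]
    have h3 : algebraMap ℚ ℂ (Algebra.trace ℚ ℚ⟮β⟯ (x * g ^ n))
        = (((Algebra.trace ℚ ℚ⟮β⟯ (x * g ^ n) : ℚ) : ℝ) : ℂ) := by
      push_cast
      rfl
    have h4 : σ₀ (x * g ^ n) = (((x : ℝ) * β ^ n : ℝ) : ℂ) := by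
      rw [hσ₀]
      push_cast
      rw [← hgβ]
    rw [h3, h2, h4] at h1
    push_cast at h1 ⊢
    linear_combination h1
  have hsum : Tendsto (fun n : ℕ => ∑ σ ∈ Finset.univ.erase σ₀, σ x * σ g ^ n)
      atTop (nhds 0) := by
    have h0 : (0:ℂ) = ∑ _σ ∈ Finset.univ.erase σ₀, (0:ℂ) := Finset.sum_const_zero.symm
    rw [h0]
    apply tendsto_finset_sum
    intro σ hσ
    simpa using (tendsto_pow_atTop_nhds_zero_of_norm_lt_one (x := σ g)
      (by simpa using hsmall σ (Finset.ne_of_mem_erase hσ))).const_mul (σ x)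
  have hsum2 : Tendsto (fun n : ℕ => ((((Algebra.trace ℚ ℚ⟮β⟯ (x * g ^ n) : ℚ) : ℝ)
      - (x : ℝ) * β ^ n : ℝ) : ℂ)) atTop (nhds 0) := by
    simp only [htr]
    exact hsum
  rw [← Filter.tendsto_ofReal_iff]
  exact hsum2


set_option maxHeartbeats 1000000 in
lemma forwardA (β : ℝ) (hβ : IsPisotUnit β) (ξ : ℝ) (hP : ξ ∈ PisotSet β) :
    ∃ η : ℚ⟮β⟯, (η : ℝ) = ξ ∧
      ∀ n : ℕ, ∃ z : ℤ, Algebra.trace ℚ ℚ⟮β⟯ (η * (AdjoinSimple.gen ℚ β)^n) = (z : ℚ) := by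
  classical
  have hβ1 := hβ.1
  have hint := hβ.2.1
  have hβ0 : (0:ℝ) < β := lt_trans one_pos hβ1
  have hQ : IsIntegral ℚ β := hint.tower_top
  haveI : FiniteDimensional ℚ ℚ⟮β⟯ := adjoin.finiteDimensional hQ
  set gp : ℤ[X] := minpoly ℤ β with hgp
  set m : ℕ := gp.natDegree with hm
  have hm0 : 0 < m := minpoly.natDegree_pos hint
  set g : ℚ⟮β⟯ := AdjoinSimple.gen ℚ β with hgdef
  have hgR : (g : ℝ) = β := rfl
  have hg0 : g ≠ 0 := by
    intro h
    rw [show (0:ℝ) = ((0 : ℚ⟮β⟯) : ℝ) from rfl, ← h, hgR] at hβ0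
    exact lt_irrefl _ hβ0
  have hminQ : minpoly ℚ β = gp.map (Int.castRingHom ℚ) := by
    simpa using minpoly.isIntegrallyClosed_eq_field_fractions' ℚ hint
  have hming : minpoly ℚ g = gp.map (Int.castRingHom ℚ) := by
    have h1 : minpoly ℚ ((algebraMap ℚ⟮β⟯ ℝ) g) = minpoly ℚ g :=
      minpoly.algebraMap_eq (algebraMap ℚ⟮β⟯ ℝ).injective g
    rw [AdjoinSimple.algebraMap_gen] at h1
    rw [← h1, hminQ]
  set gQ : ℚ[X] := gp.map (Int.castRingHom ℚ) with hgQ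
  have hgQdeg : gQ.natDegree = m := (minpoly.monic hint).natDegree_map _
  have hgQcoeff : ∀ i, gQ.coeff i = (gp.coeff i : ℚ) := fun i => Polynomial.coeff_map _ _
  have hgQm : gQ.coeff m = 1 := by
    rw [hgQcoeff]
    have := (minpoly.monic hint).coeff_natDegree
    rw [← hm] at this
    rw [this, Int.cast_one]
  -- the rounding sequence
  set c : ℕ → ℤ := fun n => round (ξ * β ^ n) with hc
  have hεtend : Tendsto (fun n : ℕ => ξ * β ^ n - (c n : ℝ)) atTop (nhds 0) := by
    have h1 : Tendsto (fun n : ℕ => |ξ * β ^ n - (c n : ℝ)|) atTop (nhds 0) := hP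
    have h2 : Tendsto (fun n : ℕ => -|ξ * β ^ n - (c n : ℝ)|) atTop (nhds 0) := by
      simpa using h1.neg
    exact tendsto_of_tendsto_of_tendsto_of_le_of_le h2 h1
      (fun n => neg_abs_le _) (fun n => le_abs_self _)
  -- aeval of gp at β is zero, in ℝ
  have haevalβ : ∑ i ∈ Finset.range (m+1), (gp.coeff i : ℝ) * β ^ i = 0 := by
    have h0 : aeval β gp = 0 := minpoly.aeval ℤ β
    rw [Polynomial.aeval_eq_sum_range] at h0
    simpa [zsmul_eq_mul] using h0
  -- u sequence
  set u : ℕ → ℤ := fun n => ∑ i ∈ Finset.range (m+1), gp.coeff i * c (n+i) with hu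
  have huval : ∀ n, (u n : ℝ) =
      -∑ i ∈ Finset.range (m+1), (gp.coeff i : ℝ) * (ξ * β ^ (n+i) - (c (n+i) : ℝ)) := by
    intro n
    have h1 : ∑ i ∈ Finset.range (m+1), (gp.coeff i : ℝ) * (ξ * β ^ (n+i)) = 0 := by
      have : ∀ i, (gp.coeff i : ℝ) * (ξ * β ^ (n+i)) = (ξ * β ^ n) * ((gp.coeff i : ℝ) * β ^ i) := by
        intro i; rw [pow_add]; ring
      rw [Finset.sum_congr rfl (fun i _ => this i), ← Finset.mul_sum, haevalβ, mul_zero]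
    rw [hu]
    push_cast
    simp only [mul_sub]
    rw [Finset.sum_sub_distrib]
    linarith [h1]
  have hutend : Tendsto (fun n => (u n : ℝ)) atTop (nhds 0) := by
    have h1 : ∀ i : ℕ, Tendsto (fun n : ℕ => (gp.coeff i : ℝ) * (ξ * β ^ (n+i) - (c (n+i) : ℝ)))
        atTop (nhds 0) := by
      intro i
      have h2 : Tendsto (fun n : ℕ => ξ * β ^ (n+i) - (c (n+i) : ℝ)) atTop (nhds 0) :=
        hεtend.comp (tendsto_add_atTop_nat i)
      simpa using h2.const_mul _
    have h3 : Tendsto (fun n : ℕ => ∑ i ∈ Finset.range (m+1),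
        (gp.coeff i : ℝ) * (ξ * β ^ (n+i) - (c (n+i) : ℝ))) atTop (nhds 0) := by
      have := tendsto_finset_sum (Finset.range (m+1)) (fun i _ => h1 i)
      simpa using this
    simp only [huval]
    simpa using h3.neg
  obtain ⟨N, hN⟩ : ∃ N, ∀ n ≥ N, u n = 0 := by
    have habs : Tendsto (fun n => |(u n : ℝ)|) atTop (nhds 0) := by simpa using hutend.abs
    have h1 : ∀ᶠ n in atTop, |(u n : ℝ)| < 1 :=
      habs.eventually_lt_const (by norm_num)
    obtain ⟨N, hN⟩ := eventually_atTop.mp h1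
    refine ⟨N, fun n hn => ?_⟩
    have h2 := hN n hn
    have h3 : |u n| < 1 := by exact_mod_cast (by push_cast; exact h2 : ((|u n| : ℤ) : ℝ) < 1)
    have := abs_lt.mp h3
    omega
  -- power basis and dual basis
  set pb := adjoin.powerBasis hQ with hpb
  have hpbgen : pb.gen = g := adjoin.powerBasis_gen hQ
  have hpbdim : pb.dim = m := by
    rw [hpb, adjoin.powerBasis_dim, hminQ, hgQdeg]
  set B := Algebra.traceForm ℚ ℚ⟮β⟯ with hB
  have hBnd : B.Nondegenerate := traceForm_nondegenerate ℚ ℚ⟮β⟯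
  set db := B.dualBasis hBnd pb.basis with hdb
  set w : ℚ⟮β⟯ := ∑ i : Fin pb.dim, (c (N + (i:ℕ)) : ℚ) • db i with hw
  have htrw : ∀ j : Fin pb.dim, Algebra.trace ℚ ℚ⟮β⟯ (w * g ^ (j:ℕ)) = c (N + (j:ℕ)) := by
    intro j
    have h1 : Algebra.trace ℚ ℚ⟮β⟯ (w * g ^ (j:ℕ)) = B w (pb.basis j) := by
      rw [PowerBasis.coe_basis, hpbgen]
      rfl
    rw [h1, hw]
    simp only [map_sum, LinearMap.sum_apply, map_smul, LinearMap.smul_apply, smul_eq_mul,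
      hdb, LinearMap.BilinForm.apply_dualBasis_left]
    simp [Finset.sum_ite_eq]
  set q : ℕ → ℚ⟮β⟯ := fun i => algebraMap ℚ ℚ⟮β⟯ (gQ.coeff i) with hq
  have htrq : ∀ (i : ℕ) (x : ℚ⟮β⟯), Algebra.trace ℚ ℚ⟮β⟯ (q i * x)
      = gQ.coeff i * Algebra.trace ℚ ℚ⟮β⟯ x := by
    intro i x
    rw [hq, ← Algebra.smul_def, map_smul, smul_eq_mul]
  have hgm : g ^ m = -∑ i ∈ Finset.range m, q i * g ^ i := by
    have h0 : aeval g gQ = 0 := by rw [← hming]; exact minpoly.aeval ℚ g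
    rw [Polynomial.aeval_eq_sum_range, hgQdeg, Finset.sum_range_succ, hgQm, one_smul] at h0
    have h1 := eq_neg_of_add_eq_zero_right h0
    rw [h1, neg_inj]
    exact Finset.sum_congr rfl fun i _ => (Algebra.smul_def _ _)
  have hmain : ∀ k : ℕ, ∀ j : ℕ, j < pb.dim →
      Algebra.trace ℚ ℚ⟮β⟯ (g ^ k * w * g ^ j) = c (N + k + j) := by
    intro k
    induction k with
    | zero =>
      intro j hj
      have := htrw ⟨j, hj⟩
      simpa using this
    | succ k ih =>
      intro j hj
      have hstep : g ^ (k+1) * w * g ^ j = g ^ k * w * g ^ (j+1) := by ring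
      rw [hstep]
      by_cases hj1 : j + 1 < pb.dim
      · rw [ih (j+1) hj1]
        have : N + k + (j+1) = N + (k+1) + j := by omega
        rw [this]
      · have hj1' : j + 1 = m := by omega
        rw [hj1', hgm]
        have hexp : g ^ k * w * -∑ i ∈ Finset.range m, q i * g ^ i
            = -∑ i ∈ Finset.range m, q i * (g ^ k * w * g ^ i) := by
          rw [mul_neg, Finset.mul_sum, neg_inj]
          exact Finset.sum_congr rfl fun i _ => by ring
        rw [hexp, map_neg, map_sum]
        have hterm : ∀ i ∈ Finset.range m,
            Algebra.trace ℚ ℚ⟮β⟯ (q i * (g ^ k * w * g ^ i))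
              = (gp.coeff i : ℚ) * (c (N + k + i) : ℚ) := by
          intro i hi
          rw [htrq, ih i (by rw [hpbdim]; exact Finset.mem_range.mp hi), hgQcoeff]
        rw [Finset.sum_congr rfl hterm]
        have hu0 : (0:ℚ) = ∑ i ∈ Finset.range (m+1), (gp.coeff i : ℚ) * (c (N + k + i) : ℚ) := by
          have h2 : ∑ i ∈ Finset.range (m+1), gp.coeff i * c (N + k + i) = 0 :=
            hN (N + k) (by omega)
          have h3 : ((∑ i ∈ Finset.range (m+1), gp.coeff i * c (N + k + i) : ℤ) : ℚ) = 0 := by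
            rw [h2]; norm_num
          push_cast at h3
          linarith [h3]
        rw [Finset.sum_range_succ] at hu0
        have hcm : (gp.coeff m : ℚ) = 1 := by rw [← hgQcoeff]; exact hgQm
        rw [hcm, one_mul] at hu0
        have : N + (k+1) + j = N + k + m := by omega
        rw [this]
        linarith [hu0]
  set η : ℚ⟮β⟯ := w * (g ^ N)⁻¹ with hη
  set t : ℕ → ℚ := fun n => Algebra.trace ℚ ℚ⟮β⟯ (η * g ^ n) with ht
  have htc : ∀ n, N ≤ n → t n = c n := by
    intro n hn
    have h1 : η * g ^ n = g ^ (n - N) * w * g ^ 0 := by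
      rw [hη, pow_zero, mul_one]
      have hgN : (g : ℚ⟮β⟯) ^ N ≠ 0 := pow_ne_zero _ hg0
      field_simp
      have h6 : g ^ n = g ^ (n - N) * g ^ N := by
        rw [← pow_add]
        congr 1
        omega
      rw [h6]
      ring
    have h2 : t n = Algebra.trace ℚ ℚ⟮β⟯ (η * g ^ n) := rfl
    rw [h2, h1, hmain (n - N) 0 (by rw [hpbdim]; exact hm0)]
    congr 2
    omega
  have hR : ∀ n, ∑ i ∈ Finset.range (m+1), gQ.coeff i * t (n+i) = 0 := by
    intro n
    have h1 : ∑ i ∈ Finset.range (m+1), gQ.coeff i • (η * g ^ (n+i)) = 0 := by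
      have h2 : ∀ i ∈ Finset.range (m+1),
          gQ.coeff i • (η * g ^ (n+i)) = (η * g ^ n) * (gQ.coeff i • g ^ i) := by
        intro i _
        rw [Algebra.smul_def, Algebra.smul_def, pow_add]
        ring
      rw [Finset.sum_congr rfl h2, ← Finset.mul_sum]
      have h3 : ∑ i ∈ Finset.range (m+1), gQ.coeff i • g ^ i = 0 := by
        have h0 : aeval g gQ = 0 := by rw [← hming]; exact minpoly.aeval ℚ g
        rw [Polynomial.aeval_eq_sum_range, hgQdeg] at h0
        exact h0
      rw [h3, mul_zero]
    have h4 := congrArg (Algebra.trace ℚ ℚ⟮β⟯) h1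
    rw [map_sum, map_zero] at h4
    rw [← h4]
    exact Finset.sum_congr rfl fun i _ => by rw [map_smul, smul_eq_mul]
  have hI : ∀ dd n : ℕ, N ≤ n + dd → ∃ z : ℤ, t n = z := by
    intro dd
    induction dd with
    | zero => intro n hn; exact ⟨c n, htc n (by omega)⟩
    | succ dd ih =>
      intro n _hn
      by_cases hn' : N ≤ n
      · exact ⟨c n, htc n hn'⟩
      · have hR' := hR n
        rw [Finset.sum_range_succ'] at hR'
        obtain ⟨Z, hZ⟩ : ∃ Z : ℤ,
            (Z : ℚ) = ∑ i ∈ Finset.range m, gQ.coeff (i+1) * t (n+(i+1)) := by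
          have hmem : ∑ i ∈ Finset.range m, gQ.coeff (i+1) * t (n+(i+1))
              ∈ (Int.castRingHom ℚ).range := by
            apply Subring.sum_mem
            intro i _hi
            obtain ⟨z, hzz⟩ := ih (n+(i+1)) (by omega)
            refine ⟨gp.coeff (i+1) * z, ?_⟩
            simp only [map_mul, eq_intCast, hgQcoeff, hzz]
          obtain ⟨Z, hZ⟩ := hmem
          exact ⟨Z, by rw [← hZ]; simp⟩
        rw [← hZ] at hR'
        have hc0 := hβ.2.2.2
        rcases hc0 with hc0 | hc0
        · refine ⟨-Z, ?_⟩
          have : gQ.coeff 0 = 1 := by rw [hgQcoeff, hc0]; norm_num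
          rw [this, one_mul] at hR'
          push_cast
          have hn0 : n + 0 = n := rfl
          rw [hn0] at hR'
          linarith [hR']
        · refine ⟨Z, ?_⟩
          have : gQ.coeff 0 = -1 := by rw [hgQcoeff, hc0]; norm_num
          rw [this] at hR'
          have hn0 : n + 0 = n := rfl
          rw [hn0] at hR'
          linarith [hR']
  have hηt := traceA β hβ η
  have hA : Tendsto (fun n : ℕ => (c n : ℝ) - (η:ℝ) * β ^ n) atTop (nhds 0) := by
    apply hηt.congr'
    filter_upwards [eventually_ge_atTop N] with n hn
    show ((t n : ℚ) : ℝ) - (η:ℝ) * β ^ n = (c n : ℝ) - (η:ℝ) * β ^ n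
    rw [htc n hn]
    norm_num
  have hdiff : Tendsto (fun n : ℕ => (ξ - (η:ℝ)) * β ^ n) atTop (nhds 0) := by
    have h5 := hεtend.add hA
    rw [add_zero] at h5
    apply h5.congr
    intro n
    ring
  have hξη : (η : ℝ) = ξ := by
    by_contra hne
    have hd0 : ξ - (η:ℝ) ≠ 0 := fun h => hne (by linarith [sub_eq_zero.mp h])
    have habs : Tendsto (fun n : ℕ => |(ξ - (η:ℝ)) * β ^ n|) atTop (nhds 0) := by
      simpa using hdiff.abs
    have h2 := habs.eventually_lt_const (abs_pos.mpr hd0)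
    obtain ⟨n, hn⟩ := (eventually_atTop.mp h2)
    have h3 := hn n le_rfl
    have h4 : (1:ℝ) ≤ β ^ n := one_le_pow₀ (le_of_lt hβ1)
    rw [abs_mul, abs_pow, abs_of_pos hβ0] at h3
    nlinarith [abs_pos.mpr hd0]
  exact ⟨η, hξη, fun n => hI N n (by omega)⟩

/-- `ξ ∈ P_β` iff `ξ ∈ ℚ(β)` and `Tr(aξ) ∈ ℤ` for every `a ∈ ℤ[β]`;
i.e. `P_β` is the dual lattice of `ℤ[β]` with respect to the trace form. -/
theorem pisotSet_eq_dual_lattice (β : ℝ) (hβ : IsPisotUnit β) (ξ : ℝ) :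
    ξ ∈ PisotSet β ↔
      ∃ hK : ξ ∈ IntermediateField.adjoin ℚ ({β} : Set ℝ),
        ∀ a : (IntermediateField.adjoin ℚ ({β} : Set ℝ)),
          (a : ℝ) ∈ Subring.closure ({β} : Set ℝ) →
            ∃ n : ℤ, Algebra.trace ℚ (IntermediateField.adjoin ℚ ({β} : Set ℝ))
              (a * ⟨ξ, hK⟩) = (n : ℚ) := by
  constructor
  · intro hP
    obtain ⟨η, hηξ, hT⟩ := forwardA β hβ ξ hP
    have hK : ξ ∈ IntermediateField.adjoin ℚ ({β} : Set ℝ) := hηξ ▸ η.2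
    refine ⟨hK, ?_⟩
    intro a ha
    have hξη : (⟨ξ, hK⟩ : IntermediateField.adjoin ℚ ({β} : Set ℝ)) = η :=
      Subtype.ext hηξ.symm
    rw [hξη]
    have ha' : (a : ℝ) ∈ Algebra.adjoin ℤ ({β} : Set ℝ) := by
      rw [Algebra.adjoin_int]
      exact ha
    rw [Algebra.adjoin_singleton_eq_range_aeval] at ha'
    obtain ⟨p, hp⟩ := ha'
    have har : a = aeval (AdjoinSimple.gen ℚ β) p := by
      apply Subtype.ext
      have h1 := Polynomial.aeval_algHom_apply
        ((algebraMap (IntermediateField.adjoin ℚ ({β} : Set ℝ)) ℝ).toIntAlgHom)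
        (AdjoinSimple.gen ℚ β) p
      have h2 : (algebraMap (IntermediateField.adjoin ℚ ({β} : Set ℝ)) ℝ).toIntAlgHom
          (AdjoinSimple.gen ℚ β) = β := rfl
      rw [h2] at h1
      have hp' : aeval β p = (a : ℝ) := hp
      exact (h1.symm.trans hp').symm
    rw [har]
    have hmem : Algebra.trace ℚ (IntermediateField.adjoin ℚ ({β} : Set ℝ))
        (aeval (AdjoinSimple.gen ℚ β) p * η) ∈ (Int.castRingHom ℚ).range := by
      rw [Polynomial.aeval_eq_sum_range (x := AdjoinSimple.gen ℚ β) (p := p),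
        Finset.sum_mul, map_sum]
      apply Subring.sum_mem
      intro i _
      obtain ⟨z, hz⟩ := hT i
      refine ⟨p.coeff i * z, ?_⟩
      rw [smul_mul_assoc, map_zsmul, show AdjoinSimple.gen ℚ β ^ i * η
        = η * AdjoinSimple.gen ℚ β ^ i from mul_comm _ _, hz]
      rw [zsmul_eq_mul]
      simp [map_mul]
    obtain ⟨n, hn⟩ := hmem
    exact ⟨n, by rw [← hn]; simp⟩
  · rintro ⟨hK, hT⟩
    have hz : ∀ n : ℕ, ∃ z : ℤ, Algebra.trace ℚ (IntermediateField.adjoin ℚ ({β} : Set ℝ))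
        ((⟨ξ, hK⟩ : IntermediateField.adjoin ℚ ({β} : Set ℝ))
          * (AdjoinSimple.gen ℚ β) ^ n) = (z : ℚ) := by
      intro n
      have hgen : ((AdjoinSimple.gen ℚ β ^ n :
          IntermediateField.adjoin ℚ ({β} : Set ℝ)) : ℝ) ∈ Subring.closure ({β} : Set ℝ) := by
        have h1 : ((AdjoinSimple.gen ℚ β ^ n :
            IntermediateField.adjoin ℚ ({β} : Set ℝ)) : ℝ) = β ^ n := by
          push_cast
          rfl
        rw [h1]
        exact pow_mem (Subring.subset_closure (Set.mem_singleton β)) n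
      obtain ⟨z, hz⟩ := hT (AdjoinSimple.gen ℚ β ^ n) hgen
      exact ⟨z, by rw [← hz]; ring_nf⟩
    have hta := traceA β hβ ⟨ξ, hK⟩
    show Tendsto (fun n : ℕ => nearestIntDist (ξ * β ^ n)) atTop (nhds 0)
    have habs : Tendsto (fun n : ℕ =>
        |((Algebra.trace ℚ ℚ⟮β⟯ ((⟨ξ, hK⟩ : ℚ⟮β⟯) * (AdjoinSimple.gen ℚ β) ^ n) : ℚ) : ℝ)
          - ξ * β ^ n|) atTop (nhds 0) := by
      simpa using hta.abs
    apply squeeze_zero (fun n => abs_nonneg _) _ habs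
    intro n
    obtain ⟨z, hzn⟩ := hz n
    have h1 : ((Algebra.trace ℚ ℚ⟮β⟯ ((⟨ξ, hK⟩ : ℚ⟮β⟯) * (AdjoinSimple.gen ℚ β) ^ n) : ℚ) : ℝ)
        = (z : ℝ) := by exact_mod_cast congrArg (fun x : ℚ => (x : ℝ)) hzn
    rw [h1, show |(z:ℝ) - ξ * β ^ n| = |ξ * β ^ n - (z:ℝ)| from abs_sub_comm _ _]
    exact round_le (ξ * β ^ n) z
end

section
/- Let β be a Pisot unit with minimal polynomial g(x) = x^m − k₁x^{m−1} − ⋯ − k_m. For each ξ ∈ P_β, define T(n) to be the integer nearest to ξβⁿ. Then the sequence T eventually satisfies the linear recurrence associated with g: there exists j such that T(n+m) = k₁T(n+m−1) + k₂T(n+m−2) + ⋯ + k_m T(n) for all n ≥ j. -/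
open Filter Polynomial

/-- for `ξ ∈ P_β`, the sequence `T(n) = round(ξβⁿ)` of nearest integers
eventually satisfies the linear recurrence of the minimal polynomial
`g(x) = x^m - k₁x^{m-1} - ⋯ - k_m` of `β` (here `k_{m-i} = -g.coeff i`). -/
theorem round_pisotSet_satisfies_recurrence (β : ℝ) (hβ : IsPisotUnit β)
    (ξ : ℝ) (hξ : ξ ∈ PisotSet β) :
    ∃ j : ℕ, ∀ n ≥ j,
      round (ξ * β ^ (n + (minpoly ℤ β).natDegree)) =
        -∑ i ∈ Finset.range (minpoly ℤ β).natDegree,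
          (minpoly ℤ β).coeff i * round (ξ * β ^ (n + i)) := by
  classical
  obtain ⟨hβ1, hβint, -, -⟩ := hβ
  set g := minpoly ℤ β with hg
  set m := g.natDegree with hm
  have hmonic : g.Monic := minpoly.monic hβint
  -- error sequence
  set e : ℕ → ℝ := fun n => ξ * β ^ n - round (ξ * β ^ n) with he
  have habs : Tendsto (fun n => |e n|) atTop (nhds 0) := hξ
  have he0 : Tendsto e atTop (nhds 0) :=
    squeeze_zero_norm (fun n => (Real.norm_eq_abs _).le) habs
  -- polynomial root identity
  have hroot : ∑ i ∈ Finset.range (m + 1), (g.coeff i : ℝ) * β ^ i = 0 := by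
    have h := minpoly.aeval ℤ β
    rw [Polynomial.aeval_eq_sum_range] at h
    simpa [zsmul_eq_mul] using h
  have hβm : (β ^ m : ℝ) = -∑ i ∈ Finset.range m, (g.coeff i : ℝ) * β ^ i := by
    have h1 : g.coeff m = 1 := hmonic.coeff_natDegree
    rw [Finset.sum_range_succ, h1] at hroot
    push_cast at hroot
    linarith
  -- integer sequence
  set Z : ℕ → ℤ := fun n =>
    round (ξ * β ^ (n + m)) + ∑ i ∈ Finset.range m, g.coeff i * round (ξ * β ^ (n + i))
    with hZ
  have hrd : ∀ k : ℕ, (round (ξ * β ^ k) : ℝ) = ξ * β ^ k - e k := by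
    intro k; simp [he]
  have hcancel : ∀ n, (Z n : ℝ) =
      -(e (n + m) + ∑ i ∈ Finset.range m, (g.coeff i : ℝ) * e (n + i)) := by
    intro n
    have hz : (Z n : ℝ) = (ξ * β ^ (n + m) - e (n + m)) +
        ∑ i ∈ Finset.range m, (g.coeff i : ℝ) * (ξ * β ^ (n + i) - e (n + i)) := by
      simp only [hZ]
      push_cast
      rw [hrd]
      congr 1
      exact Finset.sum_congr rfl fun i _ => by rw [hrd]
    have hmain : ξ * β ^ (n + m) +
        ∑ i ∈ Finset.range m, (g.coeff i : ℝ) * (ξ * β ^ (n + i)) = 0 := by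
      have hs : ∑ i ∈ Finset.range m, (g.coeff i : ℝ) * (ξ * β ^ (n + i)) =
          ξ * β ^ n * ∑ i ∈ Finset.range m, (g.coeff i : ℝ) * β ^ i := by
        rw [Finset.mul_sum]
        exact Finset.sum_congr rfl fun i _ => by rw [pow_add]; ring
      rw [hs, pow_add, hβm]; ring
    calc (Z n : ℝ) = (ξ * β ^ (n + m) +
          ∑ i ∈ Finset.range m, (g.coeff i : ℝ) * (ξ * β ^ (n + i))) -
          (e (n + m) + ∑ i ∈ Finset.range m, (g.coeff i : ℝ) * e (n + i)) := by
          rw [hz]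
          have hsplit : ∑ i ∈ Finset.range m, (g.coeff i : ℝ) * (ξ * β ^ (n + i) - e (n + i)) =
              ∑ i ∈ Finset.range m, (g.coeff i : ℝ) * (ξ * β ^ (n + i)) -
                ∑ i ∈ Finset.range m, (g.coeff i : ℝ) * e (n + i) := by
            rw [← Finset.sum_sub_distrib]
            exact Finset.sum_congr rfl fun i _ => by ring
          rw [hsplit]; ring
      _ = _ := by rw [hmain]; ring
  -- tendsto
  have hshift : ∀ k : ℕ, Tendsto (fun n => e (n + k)) atTop (nhds 0) :=
    fun k => he0.comp (tendsto_add_atTop_nat k)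
  have hsum : Tendsto (fun n => ∑ i ∈ Finset.range m, (g.coeff i : ℝ) * e (n + i))
      atTop (nhds 0) := by
    have h := tendsto_finset_sum (Finset.range m)
      (fun i _ => ((hshift i).const_mul ((g.coeff i : ℝ))))
    simpa using h
  have hS : Tendsto (fun n => (Z n : ℝ)) atTop (nhds 0) := by
    have h := ((hshift m).add hsum).neg
    simp only [add_zero, neg_zero] at h
    exact Tendsto.congr (fun n => (hcancel n).symm) h
  have hev : ∀ᶠ n in atTop, |(Z n : ℝ)| < 1 := by
    have habsS : Tendsto (fun n => |(Z n : ℝ)|) atTop (nhds 0) := by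
      simpa using hS.abs
    exact habsS.eventually_lt_const one_pos
  obtain ⟨j, hj⟩ := eventually_atTop.mp hev
  refine ⟨j, fun n hn => ?_⟩
  have hZ0 : Z n = 0 := by
    have h1 : |Z n| < 1 := by exact_mod_cast (by push_cast; exact hj n hn : |(Z n : ℝ)| < 1)
    rw [abs_lt] at h1; omega
  have := hZ0
  simp only [hZ] at this
  linarith
end

section
/- Let β be a Pisot unit with minimal polynomial g(x) = x^m − k₁x^{m−1} − ⋯ − k_m, and let R_β be the additive group of sequences T : ℕ → ℤ that eventually satisfy the recurrence T(n+m) = k₁T(n+m−1) + ⋯ + k_m T(n). The map Φ sending T ∈ R_β to lim_{n→∞} β^{−n}T(n) is a well-defined additive group homomorphism from R_β onto P_β (surjective), and its kernel is exactly the set of sequences T ∈ R_β that are eventually zero. Consequently P_β is isomorphic to the quotient of R_β by the subgroup of eventually-zero sequences. -/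
open Filter Polynomial

/-- `R_β`: integer sequences that eventually satisfy the linear recurrence of the
minimal polynomial `g(x) = x^m - k₁x^{m-1} - ⋯ - k_m` of `β` (here `k_{m-i} = -g.coeff i`). -/
def RecSet (β : ℝ) : Set (ℕ → ℤ) :=
  {T : ℕ → ℤ | ∃ j : ℕ, ∀ n ≥ j, T (n + (minpoly ℤ β).natDegree) =
    -∑ i ∈ Finset.range (minpoly ℤ β).natDegree, (minpoly ℤ β).coeff i * T (n + i)}


lemma round_eq_of_abs_lt {y : ℝ} {z : ℤ} (h : |y - z| < 1/2) : round y = z := by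
  have hz : round (y - z) = 0 := by
    rw [round_eq_zero_iff]
    exact ⟨by nlinarith [abs_lt.mp h], (abs_lt.mp h).2⟩
  have h2 := round_sub_intCast y z
  omega

lemma nearestIntDist_le (y : ℝ) (z : ℤ) : nearestIntDist y ≤ |y - z| := by
  rcases le_or_gt (1/2 : ℝ) (|y - z|) with h | h
  · exact le_trans (abs_sub_round y) h
  · rw [nearestIntDist, round_eq_of_abs_lt h]


/-- Root equation for a monic integer polynomial over a commutative ring. -/
lemma root_pow_eq {K : Type*} [Field K] (q : ℤ[X]) (hq : q.Monic)
    (x : K) (hx : Polynomial.aeval x q = 0) :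
    x ^ q.natDegree = -∑ i ∈ Finset.range q.natDegree, (q.coeff i : K) * x ^ i := by
  have h0 : Polynomial.eval x (q.map (algebraMap ℤ K)) = 0 := by
    rwa [Polynomial.eval_map, ← Polynomial.aeval_def]
  have hdeg : (q.map (algebraMap ℤ K)).natDegree = q.natDegree :=
    hq.natDegree_map _
  rw [Polynomial.eval_eq_sum_range, hdeg, Finset.sum_range_succ] at h0
  have hlc : (q.map (algebraMap ℤ K)).coeff q.natDegree = 1 := by
    rw [Polynomial.coeff_map, hq.coeff_natDegree, _root_.map_one]
  rw [hlc, one_mul] at h0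
  have : ∀ i ∈ Finset.range q.natDegree,
      (q.map (algebraMap ℤ K)).coeff i * x ^ i = (q.coeff i : K) * x ^ i := by
    intro i _
    rw [Polynomial.coeff_map, algebraMap_int_eq, Int.coe_castRingHom]
  rw [Finset.sum_congr rfl this] at h0
  linear_combination h0


lemma pisot_roots (β : ℝ) (hβ : IsPisotUnit β) :
    ∃ γ : Fin (minpoly ℤ β).natDegree → ℂ, ∃ iβ : Fin (minpoly ℤ β).natDegree,
      Function.Injective γ ∧ γ iβ = (β : ℂ) ∧
      (∀ i, γ i ≠ 0) ∧
      (∀ i, i ≠ iβ → ‖γ i‖ < 1) ∧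
      (∀ i, (γ i) ^ (minpoly ℤ β).natDegree =
        -∑ k ∈ Finset.range (minpoly ℤ β).natDegree, ((minpoly ℤ β).coeff k : ℂ) * (γ i) ^ k) := by
  obtain ⟨hβ1, hint, hconj, hc0⟩ := hβ
  set g := minpoly ℤ β with hg
  set m := g.natDegree with hm
  set p := g.map (Int.castRingHom ℂ) with hp
  have hmonic : g.Monic := minpoly.monic hint
  have hpmonic : p.Monic := hmonic.map _
  have hpdeg : p.natDegree = m := hmonic.natDegree_map _
  -- p = (minpoly ℚ β).map (ℚ → ℂ)
  have hQ : minpoly ℚ β = g.map (algebraMap ℤ ℚ) := by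
    simpa using minpoly.isIntegrallyClosed_eq_field_fractions ℚ ℝ hint
  have hQint : IsIntegral ℚ β := hint.tower_top
  have hsepQ : (minpoly ℚ β).Separable := (minpoly.irreducible hQint).separable
  have hsep : p.Separable := by
    have := hsepQ.map (f := algebraMap ℚ ℂ)
    rw [hQ, Polynomial.map_map] at this
    convert this using 2
    · rfl
    · exact RingHom.ext_int (Int.castRingHom ℂ) ((algebraMap ℚ ℂ).comp (algebraMap ℤ ℚ))
  have hnodup : p.roots.Nodup := Polynomial.nodup_roots hsep
  have hcard : Multiset.card p.roots = m := by
    rw [← hpdeg]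
    exact Polynomial.splits_iff_card_roots.mp (IsAlgClosed.splits p)
  have hβroot : (β : ℂ) ∈ p.roots := by
    rw [Polynomial.mem_roots (hpmonic.ne_zero)]
    show Polynomial.eval _ p = 0
    rw [hp, Polynomial.eval_map, ← algebraMap_int_eq, ← Polynomial.aeval_def,
      ← Complex.coe_algebraMap, Polynomial.aeval_algebraMap_apply]
    rw [hg, minpoly.aeval]
    simp
  have hrooteval : ∀ z ∈ p.roots, Polynomial.aeval z g = 0 := by
    intro z hz
    have : Polynomial.eval z p = 0 := (Polynomial.mem_roots (hpmonic.ne_zero)).mp hz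
    rwa [hp, Polynomial.eval_map, ← algebraMap_int_eq, ← Polynomial.aeval_def] at this
  have hzero : ∀ z ∈ p.roots, z ≠ 0 := by
    intro z hz hz0
    have h0 : Polynomial.eval z p = 0 := (Polynomial.mem_roots (hpmonic.ne_zero)).mp hz
    rw [hz0] at h0
    have hco : ((g.coeff 0 : ℤ) : ℂ) = 0 := by
      rw [← Polynomial.coeff_zero_eq_eval_zero] at h0
      rw [← h0, hp, Polynomial.coeff_map, Int.coe_castRingHom]
    rcases hc0 with h | h <;> rw [h] at hco <;> norm_num at hco
  -- enumeration
  set F := p.roots.toFinset with hF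
  have hFcard : F.card = m := by
    rw [hF, Multiset.toFinset_card_of_nodup hnodup, hcard]
  let e : {x // x ∈ F} ≃ Fin m := F.equivFin.trans (finCongr hFcard)
  have hβF : (β : ℂ) ∈ F := Multiset.mem_toFinset.mpr hβroot
  refine ⟨fun i => ((e.symm i : {x // x ∈ F}) : ℂ), e ⟨β, hβF⟩, ?_, ?_, ?_, ?_, ?_⟩
  · intro a b hab
    have := Subtype.coe_injective hab
    exact e.symm.injective this
  · simp
  · intro i
    exact hzero _ (Multiset.mem_toFinset.mp (e.symm i).2)
  · intro i hi
    apply hconj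
    · exact (Polynomial.mem_roots (hpmonic.ne_zero)).mp (Multiset.mem_toFinset.mp (e.symm i).2)
    · intro hcontra
      apply hi
      have : (e.symm i : {x // x ∈ F}) = ⟨(β:ℂ), hβF⟩ := Subtype.ext hcontra
      rw [← this]
      simp
  · intro i
    exact root_pow_eq g hmonic _ (hrooteval _ (Multiset.mem_toFinset.mp (e.symm i).2))

lemma pisot_key (β : ℝ) (hβ : IsPisotUnit β) (T : ℕ → ℤ) (hT : T ∈ RecSet β) :
    ∃ ξ : ℝ, Tendsto (fun n : ℕ => (T n : ℝ) - ξ * β ^ n) atTop (nhds 0) := by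
  classical
  obtain ⟨γ, iβ, hinj, hγβ, hne0, hlt, hpow⟩ := pisot_roots β hβ
  obtain ⟨j, hrec⟩ := hT
  set M : Matrix (Fin (minpoly ℤ β).natDegree) (Fin (minpoly ℤ β).natDegree) ℂ :=
    Matrix.of (fun k i => γ i ^ (j + (k : ℕ))) with hM
  have hdet : M.det ≠ 0 := by
    have hMeq : M = ((Matrix.diagonal fun i => γ i ^ j) * Matrix.vandermonde γ).transpose := by
      ext k i
      simp [hM, Matrix.transpose_apply, Matrix.diagonal_mul, Matrix.vandermonde, pow_add]
    rw [hMeq, Matrix.det_transpose, Matrix.det_mul, Matrix.det_diagonal,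
      Matrix.det_vandermonde]
    apply mul_ne_zero
    · exact Finset.prod_ne_zero_iff.mpr fun i _ => pow_ne_zero _ (hne0 i)
    · refine Finset.prod_ne_zero_iff.mpr fun i _ => Finset.prod_ne_zero_iff.mpr fun k hk => ?_
      exact sub_ne_zero.mpr fun h => (Finset.mem_Ioi.mp hk).ne' (hinj h)
  set v : Fin (minpoly ℤ β).natDegree → ℂ := fun k => (T (j + (k : ℕ)) : ℂ) with hv
  set c : Fin (minpoly ℤ β).natDegree → ℂ := M⁻¹.mulVec v with hc
  have hMc : M.mulVec c = v := by
    rw [hc, Matrix.mulVec_mulVec, Matrix.mul_nonsing_inv _ (Ne.isUnit hdet),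
      Matrix.one_mulVec]
  have hsol : ∀ n, j ≤ n → (T n : ℂ) = ∑ l, c l * γ l ^ n := by
    intro n
    induction n using Nat.strong_induction_on with
    | _ n ih =>
      intro hn
      rcases lt_or_ge n (j + (minpoly ℤ β).natDegree) with hlt' | hge
      · have hk : n - j < (minpoly ℤ β).natDegree := by omega
        have hco : ∑ l, γ l ^ (j + (n - j)) * c l = (T (j + (n - j)) : ℂ) := by
          simpa [hM, Matrix.mulVec, dotProduct, hv] using congrFun hMc ⟨n - j, hk⟩
        have hjn : j + (n - j) = n := by omega
        rw [hjn] at hco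
        rw [← hco]
        exact Finset.sum_congr rfl fun l _ => mul_comm _ _
      · have hnm : (n - (minpoly ℤ β).natDegree) + (minpoly ℤ β).natDegree = n := by omega
        have hrecn := hrec (n - (minpoly ℤ β).natDegree) (by omega)
        have hcast : (T ((n - (minpoly ℤ β).natDegree) + (minpoly ℤ β).natDegree) : ℂ)
            = -∑ i ∈ Finset.range (minpoly ℤ β).natDegree, ((minpoly ℤ β).coeff i : ℂ)
                * (T ((n - (minpoly ℤ β).natDegree) + i) : ℂ) := by
          rw [hrecn]; push_cast; ring
        have hih : ∀ i ∈ Finset.range (minpoly ℤ β).natDegree,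
            (T ((n - (minpoly ℤ β).natDegree) + i) : ℂ)
              = ∑ l, c l * γ l ^ ((n - (minpoly ℤ β).natDegree) + i) := by
          intro i hi
          have hi' : i < (minpoly ℤ β).natDegree := Finset.mem_range.mp hi
          exact ih _ (by omega) (by omega)
        calc (T n : ℂ)
            = (T ((n - (minpoly ℤ β).natDegree) + (minpoly ℤ β).natDegree) : ℂ) := by
              rw [hnm]
          _ = -∑ i ∈ Finset.range (minpoly ℤ β).natDegree, ((minpoly ℤ β).coeff i : ℂ)
                * ∑ l, c l * γ l ^ ((n - (minpoly ℤ β).natDegree) + i) := by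
              rw [hcast]
              exact congrArg Neg.neg (Finset.sum_congr rfl fun i hi => by rw [hih i hi])
          _ = ∑ l, c l * γ l ^ ((n - (minpoly ℤ β).natDegree) + (minpoly ℤ β).natDegree) := by
              simp only [Finset.mul_sum]
              rw [Finset.sum_comm, ← Finset.sum_neg_distrib]
              refine Finset.sum_congr rfl fun l _ => ?_
              rw [pow_add, hpow l]
              simp only [Finset.mul_sum, mul_neg, neg_inj]
              exact Finset.sum_congr rfl fun i _ => by ring
          _ = ∑ l, c l * γ l ^ n := by rw [hnm]
  refine ⟨(c iβ).re, ?_⟩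
  have htail : Tendsto (fun n : ℕ => ∑ l ∈ Finset.univ.erase iβ, c l * γ l ^ n)
      atTop (nhds 0) := by
    have hterm : ∀ l ∈ Finset.univ.erase iβ,
        Tendsto (fun n : ℕ => c l * γ l ^ n) atTop (nhds 0) := by
      intro l hl
      have hlt1 : ‖γ l‖ < 1 := by
        simpa using hlt l (Finset.ne_of_mem_erase hl)
      simpa using (tendsto_pow_atTop_nhds_zero_of_norm_lt_one hlt1).const_mul (c l)
    simpa using tendsto_finset_sum _ hterm
  have hCdiff : Tendsto (fun n : ℕ => (T n : ℂ) - c iβ * (β : ℂ) ^ n) atTop (nhds 0) := by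
    apply htail.congr'
    filter_upwards [eventually_ge_atTop j] with n hn
    rw [hsol n hn, ← hγβ, ← Finset.add_sum_erase _ _ (Finset.mem_univ iβ)]
    ring
  have hre : Tendsto (fun n : ℕ => ((T n : ℂ) - c iβ * (β : ℂ) ^ n).re) atTop (nhds 0) := by
    have := (Complex.continuous_re.tendsto 0).comp hCdiff
    rwa [Complex.zero_re] at this
  apply hre.congr
  intro n
  simp [Complex.sub_re, Complex.mul_re, ← Complex.ofReal_pow]

lemma tendsto_div_of_sub {β ξ : ℝ} (hβ1 : 1 < β) {u : ℕ → ℝ}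
    (h : Tendsto (fun n : ℕ => u n - ξ * β ^ n) atTop (nhds 0)) :
    Tendsto (fun n : ℕ => u n / β ^ n) atTop (nhds ξ) := by
  have hβ0 : (0:ℝ) < β := lt_trans one_pos hβ1
  have hinv : Tendsto (fun n : ℕ => (β⁻¹) ^ n) atTop (nhds 0) :=
    tendsto_pow_atTop_nhds_zero_of_lt_one (by positivity) (inv_lt_one_of_one_lt₀ hβ1)
  have h2 : Tendsto (fun n : ℕ => ξ + (u n - ξ * β ^ n) * (β⁻¹) ^ n) atTop (nhds ξ) := by
    have := (h.mul hinv).const_add ξ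
    simpa using this
  apply h2.congr
  intro n
  have hpow : β ^ n ≠ 0 := pow_ne_zero n (ne_of_gt hβ0)
  rw [inv_pow]
  field_simp
  ring

/-- the map `Φ : T ↦ lim β^{-n}T(n)` is a well-defined additive group
homomorphism from `R_β` onto `P_β`, with kernel exactly the eventually-zero sequences;
consequently `P_β ≅ R_β / {eventually-zero sequences}`. -/
theorem recSet_hom_onto_pisotSet (β : ℝ) (hβ : IsPisotUnit β)
    (R : AddSubgroup (ℕ → ℤ)) (hR : (R : Set (ℕ → ℤ)) = RecSet β)
    (P : AddSubgroup ℝ) (hP : (P : Set ℝ) = PisotSet β)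
    (Z0 : AddSubgroup R)
    (hZ0 : (Z0 : Set R) = {T : R | ∃ j : ℕ, ∀ n ≥ j, (T : ℕ → ℤ) n = 0}) :
    ∃ Φ : R →+ ℝ,
      (∀ T : R, Filter.Tendsto (fun n : ℕ => (((T : ℕ → ℤ) n : ℝ)) / β ^ n)
        Filter.atTop (nhds (Φ T))) ∧
      Set.range Φ = PisotSet β ∧
      (∀ T : R, Φ T = 0 ↔ ∃ j : ℕ, ∀ n ≥ j, (T : ℕ → ℤ) n = 0) ∧
      Nonempty ((↥R ⧸ Z0) ≃+ ↥P) := by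
  have hβ1 : 1 < β := hβ.1
  have hβ0 : (0:ℝ) < β := lt_trans one_pos hβ1
  have hmemR : ∀ T : R, (T : ℕ → ℤ) ∈ RecSet β := by
    intro T
    have h := T.2
    rw [← SetLike.mem_coe, hR] at h
    exact h
  have key : ∀ T : R, ∃ ξ : ℝ,
      Tendsto (fun n : ℕ => ((T : ℕ → ℤ) n : ℝ) - ξ * β ^ n) atTop (nhds 0) :=
    fun T => pisot_key β hβ _ (hmemR T)
  set f : R → ℝ := fun T => limUnder atTop (fun n : ℕ => (((T : ℕ → ℤ) n : ℝ)) / β ^ n)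
    with hfdef
  have hf : ∀ T : R,
      Tendsto (fun n : ℕ => (((T : ℕ → ℤ) n : ℝ)) / β ^ n) atTop (nhds (f T)) ∧
      Tendsto (fun n : ℕ => (((T : ℕ → ℤ) n : ℝ)) - f T * β ^ n) atTop (nhds 0) := by
    intro T
    obtain ⟨ξ, h2⟩ := key T
    have h1 := tendsto_div_of_sub hβ1 h2
    have hfT : f T = ξ := h1.limUnder_eq
    rw [hfT]
    exact ⟨h1, h2⟩
  have hadd : ∀ a b : R, f (a + b) = f a + f b := by
    intro a b
    have h1 := (hf a).1.add (hf b).1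
    have h2 : Tendsto (fun n : ℕ => (((a + b : R) : ℕ → ℤ) n : ℝ) / β ^ n) atTop
        (nhds (f a + f b)) := by
      apply h1.congr
      intro n
      have hab : ((a + b : R) : ℕ → ℤ) n = (a : ℕ → ℤ) n + (b : ℕ → ℤ) n := rfl
      rw [hab]
      push_cast
      rw [add_div]
    exact tendsto_nhds_unique (hf (a + b)).1 h2
  -- kernel characterization
  have hker : ∀ T : R, f T = 0 ↔ ∃ j : ℕ, ∀ n ≥ j, (T : ℕ → ℤ) n = 0 := by
    intro T
    constructor
    · intro h0
      have h2 := (hf T).2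
      rw [h0] at h2
      simp only [zero_mul, sub_zero] at h2
      have hev : ∀ᶠ n in atTop, |(((T : ℕ → ℤ) n : ℝ)) - 0| < 1 :=
        h2.eventually (eventually_abs_sub_lt 0 one_pos)
      rw [eventually_atTop] at hev
      obtain ⟨j, hj⟩ := hev
      refine ⟨j, fun n hn => ?_⟩
      have h3 : |((T : ℕ → ℤ) n : ℝ)| < 1 := by simpa using hj n hn
      rcases abs_lt.mp h3 with ⟨ha, hb⟩
      have ha' : (-1 : ℤ) < (T : ℕ → ℤ) n := by exact_mod_cast ha
      have hb' : (T : ℕ → ℤ) n < 1 := by exact_mod_cast hb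
      omega
    · rintro ⟨j, hj⟩
      have h1 : Tendsto (fun n : ℕ => (((T : ℕ → ℤ) n : ℝ)) / β ^ n) atTop (nhds 0) := by
        apply tendsto_const_nhds.congr'
        filter_upwards [eventually_ge_atTop j] with n hn
        rw [hj n hn]
        simp
      exact tendsto_nhds_unique (hf T).1 h1
  -- range characterization
  have hranset : Set.range f = PisotSet β := by
    ext ξ
    constructor
    · rintro ⟨T, rfl⟩
      show Tendsto (fun n : ℕ => nearestIntDist (f T * β ^ n)) atTop (nhds 0)
      have h2 := (hf T).2
      have h3 : Tendsto (fun n : ℕ => |f T * β ^ n - (((T : ℕ → ℤ) n : ℝ))|) atTop (nhds 0) := by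
        simpa [abs_sub_comm] using h2.abs
      exact squeeze_zero (fun n => abs_nonneg _)
        (fun n => nearestIntDist_le (f T * β ^ n) ((T : ℕ → ℤ) n)) h3
    · intro hξ
      set S : ℕ → ℤ := fun n => round (ξ * β ^ n) with hS
      have hDn : Tendsto (fun n : ℕ => (S n : ℝ) - ξ * β ^ n) atTop (nhds 0) := by
        apply squeeze_zero_norm (fun n => ?_) hξ
        show |(S n : ℝ) - ξ * β ^ n| ≤ nearestIntDist (ξ * β ^ n)
        rw [nearestIntDist, abs_sub_comm]
      have hβpow : β ^ (minpoly ℤ β).natDegree =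
          -∑ i ∈ Finset.range (minpoly ℤ β).natDegree, ((minpoly ℤ β).coeff i : ℝ) * β ^ i :=
        root_pow_eq _ (minpoly.monic hβ.2.1) β (minpoly.aeval ℤ β)
      set d := (minpoly ℤ β).natDegree with hd
      have hsR : ∀ n : ℕ,
          ((S (n + d) + ∑ i ∈ Finset.range d, (minpoly ℤ β).coeff i * S (n + i) : ℤ) : ℝ)
          = ((S (n + d) : ℝ) - ξ * β ^ (n + d))
            + ∑ i ∈ Finset.range d, ((minpoly ℤ β).coeff i : ℝ)
                * ((S (n + i) : ℝ) - ξ * β ^ (n + i)) := by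
        intro n
        have haux : ξ * β ^ (n + d)
            + ∑ i ∈ Finset.range d, ((minpoly ℤ β).coeff i : ℝ) * (ξ * β ^ (n + i)) = 0 := by
          have h1 : ∑ i ∈ Finset.range d, ((minpoly ℤ β).coeff i : ℝ) * (ξ * β ^ (n + i))
              = ξ * β ^ n * ∑ i ∈ Finset.range d, ((minpoly ℤ β).coeff i : ℝ) * β ^ i := by
            rw [Finset.mul_sum]
            exact Finset.sum_congr rfl fun i _ => by rw [pow_add]; ring
          rw [h1, pow_add, hβpow]
          ring
        push_cast
        simp only [mul_sub, Finset.sum_sub_distrib]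
        linear_combination haux
      have hs0 : Tendsto (fun n : ℕ =>
          ((S (n + d) + ∑ i ∈ Finset.range d, (minpoly ℤ β).coeff i * S (n + i) : ℤ) : ℝ))
          atTop (nhds 0) := by
        have hD1 : Tendsto (fun n : ℕ => (S (n + d) : ℝ) - ξ * β ^ (n + d)) atTop (nhds 0) :=
          hDn.comp (tendsto_add_atTop_nat d)
        have hD2 : Tendsto (fun n : ℕ => ∑ i ∈ Finset.range d, ((minpoly ℤ β).coeff i : ℝ)
            * ((S (n + i) : ℝ) - ξ * β ^ (n + i))) atTop (nhds 0) := by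
          have : ∀ i ∈ Finset.range d, Tendsto (fun n : ℕ => ((minpoly ℤ β).coeff i : ℝ)
              * ((S (n + i) : ℝ) - ξ * β ^ (n + i))) atTop (nhds 0) := by
            intro i _
            simpa using (hDn.comp (tendsto_add_atTop_nat i)).const_mul
              (((minpoly ℤ β).coeff i : ℝ))
          simpa using tendsto_finset_sum _ this
        have := hD1.add hD2
        rw [add_zero] at this
        exact this.congr fun n => (hsR n).symm
      have hev : ∀ᶠ n in atTop, |((S (n + d) + ∑ i ∈ Finset.range d,
          (minpoly ℤ β).coeff i * S (n + i) : ℤ) : ℝ) - 0| < 1 :=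
        hs0.eventually (eventually_abs_sub_lt 0 one_pos)
      rw [eventually_atTop] at hev
      obtain ⟨j, hj⟩ := hev
      have hSmem : S ∈ RecSet β := by
        refine ⟨j, fun n hn => ?_⟩
        have h3 := hj n hn
        rw [sub_zero] at h3
        have h4 : S (n + d) + ∑ i ∈ Finset.range d, (minpoly ℤ β).coeff i * S (n + i) = 0 := by
          rcases abs_lt.mp h3 with ⟨ha, hb⟩
          have ha' : (-1 : ℤ) < S (n + d) + ∑ i ∈ Finset.range d,
              (minpoly ℤ β).coeff i * S (n + i) := by exact_mod_cast ha
          have hb' : S (n + d) + ∑ i ∈ Finset.range d,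
              (minpoly ℤ β).coeff i * S (n + i) < 1 := by exact_mod_cast hb
          omega
        rw [← hd]
        exact eq_neg_of_add_eq_zero_left h4
      refine ⟨⟨S, by rw [← SetLike.mem_coe, hR]; exact hSmem⟩, ?_⟩
      exact tendsto_nhds_unique (hf ⟨S, by rw [← SetLike.mem_coe, hR]; exact hSmem⟩).1
        (tendsto_div_of_sub hβ1 hDn)
  -- assemble
  refine ⟨AddMonoidHom.mk' f hadd, fun T => (hf T).1, hranset, hker, ?_⟩
  have hZ0' : ∀ T : R, T ∈ Z0 ↔ ∃ j : ℕ, ∀ n ≥ j, (T : ℕ → ℤ) n = 0 := by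
    intro T
    rw [← SetLike.mem_coe, hZ0]
    exact Iff.rfl
  have hkerEq : Z0 = (AddMonoidHom.mk' f hadd).ker := by
    ext T
    rw [AddMonoidHom.mem_ker, hZ0' T]
    exact (hker T).symm
  have hrangeEq : (AddMonoidHom.mk' f hadd).range = P := by
    apply SetLike.ext'
    rw [AddMonoidHom.coe_range, hP]
    exact hranset
  exact ⟨((QuotientAddGroup.quotientAddEquivOfEq hkerEq).trans
    (QuotientAddGroup.quotientKerEquivRange (AddMonoidHom.mk' f hadd))).trans
    (AddEquiv.addSubgroupCongr hrangeEq)⟩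
end

section
/- Let k be a positive integer and ε ∈ {+1, −1}, with k ≥ 1 if ε = +1 and k ≥ 3 if ε = −1. Let β = (k + √(k²+4ε))/2 be the larger root of x² = kx + ε (a quadratic Pisot unit) and set D = k² + 4ε. Then P_β = (1/√D)·ℤ[β]; that is, for ξ ∈ ℝ one has ξ ∈ P_β if and only if √D·ξ ∈ ℤ[β]. -/
open Filter Polynomial

/-- Lucas-type integer sequence attached to `x² = kx + e`. -/
def lucasU (k e : ℤ) : ℕ → ℤ
  | 0 => 0
  | 1 => 1
  | (n+2) => k * lucasU k e (n+1) + e * lucasU k e n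

lemma lucasU_formula (k e : ℤ) (β γ s : ℝ) (hβ2 : β ^ 2 = k * β + e)
    (hγ2 : γ ^ 2 = k * γ + e) (hs : β - γ = s) :
    ∀ n : ℕ, s * (lucasU k e n : ℝ) = β ^ n - γ ^ n := by
  have key : ∀ n : ℕ, s * (lucasU k e n : ℝ) = β ^ n - γ ^ n ∧
      s * (lucasU k e (n+1) : ℝ) = β ^ (n+1) - γ ^ (n+1) := by
    intro n
    induction n with
    | zero =>
      constructor
      · simp [lucasU]
      · simp only [zero_add, lucasU, Int.cast_one, mul_one, pow_one]
        linarith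
    | succ m ih =>
      refine ⟨ih.2, ?_⟩
      have h1 := ih.1
      have h2 := ih.2
      show s * ((lucasU k e (m+2) : ℤ) : ℝ) = β ^ (m+2) - γ ^ (m+2)
      rw [show lucasU k e (m+2) = k * lucasU k e (m+1) + e * lucasU k e m from rfl]
      push_cast
      linear_combination (k : ℝ) * h2 + (e : ℝ) * h1 - β ^ m * hβ2 + γ ^ m * hγ2
  exact fun n => (key n).1

lemma closure_repr (k e : ℤ) (β : ℝ) (hβ2 : β ^ 2 = k * β + e) {x : ℝ}
    (hx : x ∈ Subring.closure ({β} : Set ℝ)) : ∃ a b : ℤ, x = (a : ℝ) + b * β := by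
  induction hx using Subring.closure_induction with
  | mem x hx =>
    rw [Set.mem_singleton_iff] at hx
    exact ⟨0, 1, by simp [hx]⟩
  | zero => exact ⟨0, 0, by simp⟩
  | one => exact ⟨1, 0, by simp⟩
  | add x y _ _ hx hy =>
    obtain ⟨a, b, rfl⟩ := hx
    obtain ⟨c, d, rfl⟩ := hy
    exact ⟨a + c, b + d, by push_cast; ring⟩
  | neg x _ hx =>
    obtain ⟨a, b, rfl⟩ := hx
    exact ⟨-a, -b, by push_cast; ring⟩
  | mul x y _ _ hx hy =>
    obtain ⟨a, b, rfl⟩ := hx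
    obtain ⟨c, d, rfl⟩ := hy
    refine ⟨a * c + e * (b * d), a * d + b * c + k * (b * d), ?_⟩
    push_cast
    linear_combination (b : ℝ) * (d : ℝ) * hβ2

/-- for a quadratic Pisot unit `β = (k + √(k²+4ε))/2`, the larger root of
`x² = kx + ε` (with `k ≥ 1` if `ε = 1` and `k ≥ 3` if `ε = -1`), and `D = k² + 4ε`,
one has `P_β = (1/√D)·ℤ[β]`, i.e. `ξ ∈ P_β ↔ √D·ξ ∈ ℤ[β]`. -/
theorem quadratic_pisotSet_eq_inv_sqrtD_smul (k e : ℤ) (he : e = 1 ∨ e = -1)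
    (hk1 : e = 1 → 1 ≤ k) (hk2 : e = -1 → 3 ≤ k)
    (β : ℝ) (hβ : β = ((k : ℝ) + Real.sqrt ((k : ℝ) ^ 2 + 4 * (e : ℝ))) / 2)
    (ξ : ℝ) :
    ξ ∈ PisotSet β ↔
      Real.sqrt (((k ^ 2 + 4 * e : ℤ) : ℝ)) * ξ ∈ Subring.closure ({β} : Set ℝ) := by
  have hcast : ((k ^ 2 + 4 * e : ℤ) : ℝ) = (k : ℝ) ^ 2 + 4 * (e : ℝ) := by push_cast; ring
  rw [hcast]
  set s : ℝ := Real.sqrt ((k : ℝ) ^ 2 + 4 * (e : ℝ)) with hs_def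
  -- basic numerical facts
  have hD5 : (5 : ℝ) ≤ (k : ℝ) ^ 2 + 4 * (e : ℝ) := by
    rcases he with rfl | rfl
    · have hk : (1 : ℝ) ≤ (k : ℝ) := by exact_mod_cast hk1 rfl
      push_cast; nlinarith
    · have hk : (3 : ℝ) ≤ (k : ℝ) := by exact_mod_cast hk2 rfl
      push_cast; nlinarith
  have hDpos : (0 : ℝ) < (k : ℝ) ^ 2 + 4 * (e : ℝ) := by linarith
  have hs2 : s ^ 2 = (k : ℝ) ^ 2 + 4 * (e : ℝ) := Real.sq_sqrt hDpos.le
  have hs_pos : 0 < s := Real.sqrt_pos.mpr hDpos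
  have hs0 : s ≠ 0 := ne_of_gt hs_pos
  have hβ2 : β ^ 2 = k * β + e := by
    rw [hβ]; linear_combination hs2 / 4
  obtain ⟨γ, hγ_def⟩ : ∃ x : ℝ, x = (k : ℝ) - β := ⟨_, rfl⟩
  have hγ2 : γ ^ 2 = k * γ + e := by
    rw [hγ_def]; linear_combination hβ2
  have hprod : β * γ = -(e : ℝ) := by
    rw [hγ_def]; linear_combination (-1 : ℝ) * hβ2
  have hdiff : β - γ = s := by
    rw [hγ_def, hβ]; ring
  have he2 : (e : ℝ) ^ 2 = 1 := by rcases he with rfl | rfl <;> norm_num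
  have hβ1 : (1 : ℝ) < β := by
    rw [hβ]
    have hsnn : 0 ≤ s := hs_pos.le
    rcases he with rfl | rfl
    · have hk : (1 : ℝ) ≤ (k : ℝ) := by exact_mod_cast hk1 rfl
      nlinarith [hs2]
    · have hk : (3 : ℝ) ≤ (k : ℝ) := by exact_mod_cast hk2 rfl
      nlinarith [hs2]
  have hβpos : (0 : ℝ) < β := lt_trans one_pos hβ1
  have hβne : β ≠ 0 := ne_of_gt hβpos
  have habsprod : |β| * |γ| = 1 := by
    rw [← abs_mul, hprod, abs_neg]
    rcases he with rfl | rfl <;> norm_num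
  have hγabs : |γ| < 1 := by
    have hβabs : 1 < |β| := by rwa [abs_of_pos hβpos]
    nlinarith [abs_nonneg γ]
  have hγ0 : Tendsto (fun n : ℕ => γ ^ n) atTop (nhds 0) :=
    tendsto_pow_atTop_nhds_zero_of_abs_lt_one hγabs
  constructor
  · -- forward direction: ξ ∈ P_β → s ξ ∈ ℤ[β]
    intro h
    simp only [PisotSet, Set.mem_setOf_eq, nearestIntDist] at h
    set c : ℕ → ℤ := fun n => round (ξ * β ^ n) with hc
    have hδ : Tendsto (fun n : ℕ => ξ * β ^ n - (c n : ℝ)) atTop (nhds 0) := by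
      rw [tendsto_zero_iff_abs_tendsto_zero]
      exact h
    -- the rounding sequence eventually satisfies the recurrence
    have heq : ∀ n : ℕ, ((c (n+2) - k * c (n+1) - e * c n : ℤ) : ℝ) =
        -(ξ * β ^ (n+2) - (c (n+2) : ℝ)) + k * (ξ * β ^ (n+1) - (c (n+1) : ℝ))
          + e * (ξ * β ^ n - (c n : ℝ)) := by
      intro n
      push_cast
      linear_combination (ξ * β ^ n) * hβ2
    have hg0 : Tendsto (fun n : ℕ => ((c (n+2) - k * c (n+1) - e * c n : ℤ) : ℝ))
        atTop (nhds 0) := by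
      have h2 : Tendsto (fun n : ℕ => ξ * β ^ (n+2) - (c (n+2) : ℝ)) atTop (nhds 0) :=
        hδ.comp (tendsto_add_atTop_nat 2)
      have h1 : Tendsto (fun n : ℕ => ξ * β ^ (n+1) - (c (n+1) : ℝ)) atTop (nhds 0) :=
        hδ.comp (tendsto_add_atTop_nat 1)
      have := ((h2.neg).add (h1.const_mul (k : ℝ))).add (hδ.const_mul (e : ℝ))
      simp only [neg_zero, mul_zero, add_zero, zero_add] at this
      refine Tendsto.congr (fun n => ?_) this
      rw [heq n]
    have hev : ∀ᶠ n in atTop, c (n+2) = k * c (n+1) + e * c n := by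
      filter_upwards [hg0 (Ioo_mem_nhds (by norm_num : (-1 : ℝ) < 0) one_pos)] with n hn
      simp only [Set.mem_preimage, Set.mem_Ioo] at hn
      have h1 : (-1 : ℤ) < c (n+2) - k * c (n+1) - e * c n := by exact_mod_cast hn.1
      have h2 : c (n+2) - k * c (n+1) - e * c n < 1 := by exact_mod_cast hn.2
      omega
    obtain ⟨N, hN⟩ := eventually_atTop.mp hev
    obtain ⟨A, hA⟩ : ∃ x : ℝ, x = ((c (N+1) : ℝ) - γ * (c N : ℝ)) / s := ⟨_, rfl⟩
    obtain ⟨B, hB⟩ : ∃ x : ℝ, x = (β * (c N : ℝ) - (c (N+1) : ℝ)) / s := ⟨_, rfl⟩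
    have key : ∀ m : ℕ, ((c (N+m) : ℝ) = A * β ^ m + B * γ ^ m) ∧
        ((c (N+m+1) : ℝ) = A * β ^ (m+1) + B * γ ^ (m+1)) := by
      intro m
      induction m with
      | zero =>
        constructor
        · simp only [Nat.add_zero, pow_zero, mul_one]
          rw [hA, hB, ← add_div, eq_div_iff hs0]
          linear_combination (-(c N : ℝ)) * hdiff
        · simp only [Nat.add_zero, zero_add, pow_one]
          rw [hA, hB, div_mul_eq_mul_div, div_mul_eq_mul_div, ← add_div,
            eq_div_iff hs0]
          linear_combination (-(c (N+1) : ℝ)) * hdiff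
      | succ m ih =>
        have ih1 := ih.1
        have ih2 := ih.2
        constructor
        · rw [show N + (m + 1) = N + m + 1 from rfl]
          exact ih2
        · have hrec : c (N + m + 2) = k * c (N + m + 1) + e * c (N + m) :=
            hN (N + m) (Nat.le_add_right N m)
          rw [show N + (m + 1) + 1 = N + m + 2 from rfl, hrec]
          push_cast
          linear_combination (k : ℝ) * ih2 + (e : ℝ) * ih1 - A * β ^ m * hβ2
            - B * γ ^ m * hγ2
    -- identify ξ β^N with A
    have hξA : ξ * β ^ N = A := by
      have h1 : Tendsto (fun m : ℕ => ξ * β ^ (N + m) - (c (N + m) : ℝ)) atTop (nhds 0) := by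
        have := hδ.comp (tendsto_add_atTop_nat N)
        refine Tendsto.congr (fun m => ?_) this
        simp [Nat.add_comm]
      have h2 : Tendsto (fun m : ℕ => (ξ * β ^ N - A) * β ^ m) atTop (nhds 0) := by
        have hB0 : Tendsto (fun m : ℕ => B * γ ^ m) atTop (nhds 0) := by
          have := hγ0.const_mul B
          simpa using this
        have := h1.add hB0
        simp only [add_zero] at this
        refine Tendsto.congr (fun m => ?_) this
        rw [(key m).1, pow_add]; ring
      have hinv : Tendsto (fun m : ℕ => (β⁻¹) ^ m) atTop (nhds 0) := by
        apply tendsto_pow_atTop_nhds_zero_of_abs_lt_one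
        rw [abs_of_pos (inv_pos.mpr hβpos)]
        rw [inv_lt_one_iff₀]
        right; exact hβ1
      have h3 : Tendsto (fun m : ℕ => ((ξ * β ^ N - A) * β ^ m) * (β⁻¹) ^ m)
          atTop (nhds 0) := by
        have := h2.mul hinv
        simpa using this
      have h4 : Tendsto (fun _ : ℕ => ξ * β ^ N - A) atTop (nhds 0) := by
        refine Tendsto.congr (fun m => ?_) h3
        rw [mul_assoc, ← mul_pow, mul_inv_cancel₀ hβne, one_pow, mul_one]
      have := tendsto_nhds_unique h4 tendsto_const_nhds
      linarith [this.symm]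
    -- conclude membership
    have hbase : β * ((-(e : ℝ)) * γ) = 1 := by
      linear_combination (-(e : ℝ)) * hprod + he2
    have h4 : β ^ N * ((-(e : ℝ)) * γ) ^ N = 1 := by
      rw [← mul_pow, hbase, one_pow]
    have hsA : s * A = (c (N+1) : ℝ) - γ * (c N : ℝ) := by
      rw [hA]; field_simp
    have hfinal : s * ξ = ((c (N+1) : ℝ) - γ * (c N : ℝ)) * ((-(e : ℝ)) * γ) ^ N := by
      calc s * ξ = s * ξ * (β ^ N * ((-(e : ℝ)) * γ) ^ N) := by rw [h4, mul_one]
        _ = (s * (ξ * β ^ N)) * ((-(e : ℝ)) * γ) ^ N := by ring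
        _ = (s * A) * ((-(e : ℝ)) * γ) ^ N := by rw [hξA]
        _ = ((c (N+1) : ℝ) - γ * (c N : ℝ)) * ((-(e : ℝ)) * γ) ^ N := by rw [hsA]
    rw [hfinal]
    have hβmem : β ∈ Subring.closure ({β} : Set ℝ) :=
      Subring.subset_closure (Set.mem_singleton β)
    have hγmem : γ ∈ Subring.closure ({β} : Set ℝ) := by
      rw [hγ_def]
      exact sub_mem (intCast_mem _ k) hβmem
    have hemem : (-(e : ℝ)) ∈ Subring.closure ({β} : Set ℝ) := by
      have : ((-e : ℤ) : ℝ) ∈ Subring.closure ({β} : Set ℝ) := intCast_mem _ (-e)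
      simpa using this
    exact mul_mem (sub_mem (intCast_mem _ (c (N+1))) (mul_mem hγmem (intCast_mem _ (c N))))
      (pow_mem (mul_mem hemem hγmem) N)
  · -- backward direction: s ξ ∈ ℤ[β] → ξ ∈ P_β
    intro h
    obtain ⟨a, b, hab⟩ := closure_repr k e β hβ2 h
    have hU := lucasU_formula k e β γ s hβ2 hγ2 hdiff
    have hkey : ∀ n : ℕ, ξ * β ^ n =
        ((a * lucasU k e n + b * lucasU k e (n+1) : ℤ) : ℝ)
          + ((a : ℝ) + (b : ℝ) * γ) / s * γ ^ n := by
      intro n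
      have h1 := hU n
      have h2 := hU (n+1)
      apply mul_left_cancel₀ hs0
      rw [mul_add]
      rw [show s * (((a : ℝ) + (b : ℝ) * γ) / s * γ ^ n) = ((a : ℝ) + (b : ℝ) * γ) * γ ^ n by
        field_simp]
      push_cast
      linear_combination β ^ n * hab - (a : ℝ) * h1 - (b : ℝ) * h2
    set r : ℕ → ℝ := fun n => ((a : ℝ) + (b : ℝ) * γ) / s * γ ^ n with hr_def
    have hr0 : Tendsto r atTop (nhds 0) := by
      have := hγ0.const_mul (((a : ℝ) + (b : ℝ) * γ) / s)
      simpa [hr_def] using this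
    have hev : ∀ᶠ n in atTop, |r n| < 1 / 2 := by
      filter_upwards [hr0 (Ioo_mem_nhds (by norm_num : (-(1/2) : ℝ) < 0)
        (by norm_num : (0 : ℝ) < 1/2))] with n hn
      simp only [Set.mem_preimage, Set.mem_Ioo] at hn
      rw [abs_lt]
      exact hn
    have heqev : (fun n : ℕ => |r n|) =ᶠ[atTop]
        (fun n : ℕ => nearestIntDist (ξ * β ^ n)) := by
      filter_upwards [hev] with n hn
      have habs := abs_lt.mp hn
      have hround : round (((a * lucasU k e n + b * lucasU k e (n+1) : ℤ) : ℝ) + r n)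
          = a * lucasU k e n + b * lucasU k e (n+1) := by
        rw [add_comm, round_add_intCast, round_eq_zero_iff.mpr ⟨le_of_lt habs.1, habs.2⟩, zero_add]
      rw [nearestIntDist, hkey n, hround, add_sub_cancel_left]
    have habs0 : Tendsto (fun n : ℕ => |r n|) atTop (nhds 0) := by
      have := hr0.abs
      simpa using this
    simp only [PisotSet, Set.mem_setOf_eq]
    exact habs0.congr' heqev
end

section
/- Let k be a positive integer and ε ∈ {+1, −1}, with k ≥ 1 if ε = +1 and k ≥ 3 if ε = −1. Let β = (k + √(k²+4ε))/2 be the larger root of x² = kx + ε and set D = k² + 4ε. Then the Pisot group A_β = P_β/ℤ[β] is isomorphic to ℤ/Dℤ if k is odd, and isomorphic to (ℤ/(D/2)ℤ) × (ℤ/2ℤ) if k is even. -/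
open Filter Polynomial

namespace QPisot
open Filter
/-- integer-pair multiplication modelling (a + bx)(c + dx) with x² = kx + e -/
def imul (k e : ℤ) (p q : ℤ × ℤ) : ℤ × ℤ :=
  (p.1 * q.1 + p.2 * q.2 * e, p.1 * q.2 + p.2 * q.1 + p.2 * q.2 * k)

lemma imul_spec {k e : ℤ} {x : ℝ} (hx : x ^ 2 = k * x + e) (p q : ℤ × ℤ) :
    ((p.1 : ℝ) + p.2 * x) * ((q.1 : ℝ) + q.2 * x)
      = ((imul k e p q).1 : ℝ) + ((imul k e p q).2 : ℝ) * x := by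
  simp only [imul]
  push_cast
  linear_combination (p.2 : ℝ) * q.2 * hx

def ipow (k e : ℤ) : ℕ → ℤ × ℤ
  | 0 => (1, 0)
  | n + 1 => imul k e (ipow k e n) (0, 1)

lemma ipow_spec {k e : ℤ} {x : ℝ} (hx : x ^ 2 = k * x + e) :
    ∀ n : ℕ, x ^ n = ((ipow k e n).1 : ℝ) + ((ipow k e n).2 : ℝ) * x := by
  intro n
  induction n with
  | zero => simp [ipow]
  | succ n ih =>
      have := imul_spec hx (ipow k e n) (0, 1)
      simp only [ipow]
      rw [pow_succ, ih]
      rw [← this]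
      push_cast
      ring

lemma nearestIntDist_le (x : ℝ) (m : ℤ) : nearestIntDist x ≤ |x - m| := by
  rcases le_or_gt (1/2 : ℝ) (|x - m|) with h | h
  · exact le_trans (abs_sub_round x) h
  · have hr : round x = m := by
      have : round (x - m + m) = round (x - m) + m := round_add_intCast _ _
      have h0 : round ((x : ℝ) - m) = 0 := by
        rw [round_eq_zero_iff]
        constructor
        · nlinarith [abs_nonneg (x - m), neg_abs_le (x - m)]
        · nlinarith [le_abs_self (x - m)]
      have hxm : x - m + m = x := by ring
      rw [hxm, h0] at this
      simpa using this
    unfold nearestIntDist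
    rw [hr]

lemma int_tendsto_eventually_zero {a : ℕ → ℤ}
    (h : Tendsto (fun n => (a n : ℝ)) atTop (nhds 0)) : ∀ᶠ n in atTop, a n = 0 := by
  have : ∀ᶠ n in atTop, |(a n : ℝ)| < 1/2 := by
    have := h.abs
    rw [abs_zero] at this
    exact this.eventually (eventually_lt_nhds (by norm_num : (0:ℝ) < 1/2))
  filter_upwards [this] with n hn
  have h1 : (a n : ℝ) < 1 := lt_trans (lt_of_abs_lt hn) (by norm_num)
  have h2 : (-1 : ℝ) < a n := lt_of_lt_of_le (by norm_num) (neg_le_of_abs_le hn.le)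
  have h1' : a n < 1 := by exact_mod_cast h1
  have h2' : -1 < a n := by exact_mod_cast h2
  omega


lemma nearestIntDist_nonneg (x : ℝ) : 0 ≤ nearestIntDist x := abs_nonneg _


section Main
variable {k e : ℤ} {β : ℝ}

/-- easy inclusion: (a + bβ)/s ∈ P_β, where s = 2β - k. -/
lemma mem_pisotSet (hsq : β ^ 2 = k * β + e) (hb' : |(k : ℝ) - β| < 1)
    (hs : (2 : ℝ) * β - k ≠ 0) (a b : ℤ) :
    ((a : ℝ) + b * β) / (2 * β - k) ∈ PisotSet β := by
  set s : ℝ := 2 * β - k with hs_def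
  set β' : ℝ := (k : ℝ) - β with hb_def
  have hsq' : β' ^ 2 = k * β' + e := by rw [hb_def]; linear_combination hsq
  -- pointwise description
  have key : ∀ n : ℕ, ∃ m : ℤ,
      ((a : ℝ) + b * β) / s * β ^ n - m = ((a : ℝ) + b * β') * β' ^ n / s := by
    intro n
    set C : ℤ × ℤ := imul k e (a, b) (ipow k e n) with hC
    refine ⟨C.2, ?_⟩
    have h1 : ((a : ℝ) + b * β) * β ^ n = (C.1 : ℝ) + C.2 * β := by
      rw [ipow_spec hsq n] at *
      exact imul_spec hsq (a, b) (ipow k e n)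
    have h2 : ((a : ℝ) + b * β') * β' ^ n = (C.1 : ℝ) + C.2 * β' := by
      rw [ipow_spec hsq' n]
      exact imul_spec hsq' (a, b) (ipow k e n)
    rw [div_mul_eq_mul_div, h1, h2]
    field_simp
    rw [hb_def, hs_def]
    ring
  have hbd : ∀ n : ℕ, nearestIntDist (((a : ℝ) + b * β) / s * β ^ n)
      ≤ |((a : ℝ) + b * β') / s| * |β'| ^ n := by
    intro n
    obtain ⟨m, hm⟩ := key n
    calc nearestIntDist (((a : ℝ) + b * β) / s * β ^ n)
        ≤ |((a : ℝ) + b * β) / s * β ^ n - m| := nearestIntDist_le _ m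
      _ = |((a : ℝ) + b * β') / s| * |β'| ^ n := by
          rw [hm, abs_div, abs_mul, abs_pow, abs_div]
          ring
  have hlim : Tendsto (fun n : ℕ => |((a : ℝ) + b * β') / s| * |β'| ^ n) atTop (nhds 0) := by
    have := tendsto_pow_atTop_nhds_zero_of_lt_one (abs_nonneg β') hb'
    simpa using this.const_mul (|((a : ℝ) + b * β') / s|)
  exact squeeze_zero (fun n => nearestIntDist_nonneg _) hbd hlim


lemma repr_mul (hsq : β ^ 2 = k * β + e) {x y : ℝ}
    (hx : ∃ a b : ℤ, x = (a : ℝ) + b * β) (hy : ∃ a b : ℤ, y = (a : ℝ) + b * β) :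
    ∃ a b : ℤ, x * y = (a : ℝ) + b * β := by
  obtain ⟨a, b, rfl⟩ := hx
  obtain ⟨c, d, rfl⟩ := hy
  exact ⟨(imul k e (a,b) (c,d)).1, (imul k e (a,b) (c,d)).2, imul_spec hsq (a,b) (c,d)⟩

lemma repr_pow (hsq : β ^ 2 = k * β + e) {x : ℝ}
    (hx : ∃ a b : ℤ, x = (a : ℝ) + b * β) :
    ∀ n : ℕ, ∃ a b : ℤ, x ^ n = (a : ℝ) + b * β := by
  intro n
  induction n with
  | zero => exact ⟨1, 0, by norm_num⟩
  | succ n ih => rw [pow_succ]; exact repr_mul hsq ih hx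

/-- hard inclusion: every element of P_β has the form (a + bβ)/(2β - k). -/
lemma pisot_mem_repr (hsq : β ^ 2 = k * β + e) (hβ1 : 1 < β)
    (hb' : |(k : ℝ) - β| < 1) (he2 : (e : ℝ) * e = 1) {ξ : ℝ} (hξ : ξ ∈ PisotSet β) :
    ∃ a b : ℤ, ξ = ((a : ℝ) + b * β) / (2 * β - k) := by
  set β' : ℝ := (k : ℝ) - β with hb_def
  have hsq' : β' ^ 2 = k * β' + e := by rw [hb_def]; linear_combination hsq
  have hs0 : (0 : ℝ) < 2 * β - k := by
    have h1 : β' < 1 := lt_of_abs_lt hb'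
    have : 2 * β - (k:ℝ) = β - β' := by rw [hb_def]; ring
    rw [this]; linarith
  have hsne : (2 : ℝ) * β - k ≠ 0 := ne_of_gt hs0
  have hβ0 : (0:ℝ) < β := lt_trans one_pos hβ1
  have hβne : β ≠ 0 := ne_of_gt hβ0
  have hb'ne : β' ≠ 0 := by
    intro h
    have : β * β' = -e := by rw [hb_def]; linear_combination -hsq
    rw [h, mul_zero] at this
    have he0 : (e:ℝ) = 0 := by linarith
    rw [he0] at he2; norm_num at he2
  -- the rounds
  set a : ℕ → ℤ := fun n => round (ξ * β ^ n) with ha_def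
  set ε : ℕ → ℝ := fun n => ξ * β ^ n - a n with hε_def
  have hεlim : Tendsto ε atTop (nhds 0) := by
    have habs : Tendsto (fun n => |ε n|) atTop (nhds 0) := hξ
    have h1 : ∀ n, -|ε n| ≤ ε n := fun n => neg_abs_le _
    have h2 : ∀ n, ε n ≤ |ε n| := fun n => le_abs_self _
    have := habs.neg
    rw [neg_zero] at this
    exact tendsto_of_tendsto_of_tendsto_of_le_of_le this habs h1 h2
  -- the recurrence defect
  set δ : ℕ → ℤ := fun n => a (n+2) - k * a (n+1) - e * a n with hδ_def
  have hδr : ∀ n, (δ n : ℝ) = -(ε (n+2) - k * ε (n+1) - e * ε n) := by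
    intro n
    have h2 : (a (n+2) : ℝ) = ξ * β ^ (n+2) - ε (n+2) := by rw [hε_def]; ring
    have h1 : (a (n+1) : ℝ) = ξ * β ^ (n+1) - ε (n+1) := by rw [hε_def]; ring
    have h0 : (a n : ℝ) = ξ * β ^ n - ε n := by rw [hε_def]; ring
    have : (δ n : ℝ) = (a (n+2) : ℝ) - k * a (n+1) - e * a n := by rw [hδ_def]; push_cast; ring
    rw [this, h2, h1, h0]
    have hpow : β ^ (n+2) = β ^ n * β ^ 2 := by ring
    rw [hpow, hsq]
    ring
  have hδlim : Tendsto (fun n => (δ n : ℝ)) atTop (nhds 0) := by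
    have hc : Tendsto (fun n => ε (n+2) - k * ε (n+1) - e * ε n) atTop (nhds 0) := by
      have l2 : Tendsto (fun n => ε (n+2)) atTop (nhds 0) := hεlim.comp (tendsto_add_atTop_nat 2)
      have l1 : Tendsto (fun n => ε (n+1)) atTop (nhds 0) := hεlim.comp (tendsto_add_atTop_nat 1)
      have := (l2.sub (l1.const_mul (k:ℝ))).sub (hεlim.const_mul (e:ℝ))
      simpa using this
    have := hc.neg
    rw [neg_zero] at this
    simpa only [hδr] using this
  obtain ⟨N, hN⟩ := eventually_atTop.mp (int_tendsto_eventually_zero hδlim)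
  have hrec : ∀ n ≥ N, (a (n+2) : ℝ) = k * a (n+1) + e * a n := by
    intro n hn
    have h0 := hN n hn
    rw [hδ_def] at h0
    simp only at h0
    have h2 : ((a (n+2) - k * a (n+1) - e * a n : ℤ) : ℝ) = 0 := by
      rw [h0]; norm_num
    push_cast at h2
    linarith
  -- the geometric solution
  set s : ℝ := β - β' with hs_def
  have hs0' : s ≠ 0 := by rw [hs_def, hb_def]; convert hsne using 1; ring
  set c : ℝ := ((a (N+1) : ℝ) - β' * a N) / (β ^ N * s) with hc_def
  set c' : ℝ := (β * (a N : ℝ) - a (N+1)) / (β' ^ N * s) with hc'_def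
  have hβpow : β ^ N ≠ 0 := pow_ne_zero _ hβne
  have hb'pow : β' ^ N ≠ 0 := pow_ne_zero _ hb'ne
  have hrep : ∀ m : ℕ, (a (N+m) : ℝ) = c * β ^ (N+m) + c' * β' ^ (N+m) := by
    have key : ∀ m : ℕ, ((a (N+m) : ℝ) = c * β ^ (N+m) + c' * β' ^ (N+m)) ∧
        ((a (N+m+1) : ℝ) = c * β ^ (N+m+1) + c' * β' ^ (N+m+1)) := by
      intro m
      induction m with
      | zero =>
          constructor
          · rw [hc_def, hc'_def]
            field_simp
            rw [hs_def]
            ring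
          · rw [hc_def, hc'_def]
            field_simp
            rw [pow_succ, pow_succ]
            ring
      | succ m ih =>
          refine ⟨ih.2, ?_⟩
          have h2 : (a (N+m+2) : ℝ) = k * a (N+m+1) + e * a (N+m) :=
            hrec (N+m) (Nat.le_add_right N m)
          have e1 := ih.1
          have e2 := ih.2
          have hNm2 : N + (m+1) + 1 = N + m + 2 := by omega
          rw [hNm2, h2, e1, e2]
          have p2 : β ^ (N+m+2) = β ^ (N+m) * β ^ 2 := by ring
          have p1 : β ^ (N+m+1) = β ^ (N+m) * β := by ring
          have q2 : β' ^ (N+m+2) = β' ^ (N+m) * β' ^ 2 := by ring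
          have q1 : β' ^ (N+m+1) = β' ^ (N+m) * β' := by ring
          rw [p2, p1, q2, q1, hsq, hsq']
          ring
    exact fun m => (key m).1
  -- ξ = c
  have hβ'lim : Tendsto (fun n : ℕ => c' * β' ^ (N+n)) atTop (nhds 0) := by
    have h1 : Tendsto (fun n : ℕ => β' ^ n) atTop (nhds 0) :=
      tendsto_pow_atTop_nhds_zero_of_abs_lt_one hb'
    have h2 := (h1.const_mul (c' * β' ^ N))
    rw [mul_zero] at h2
    refine h2.congr (fun n => ?_)
    rw [pow_add]; ring
  have hξc : ξ = c := by
    by_contra hne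
    have hεN : Tendsto (fun n : ℕ => ε (N+n)) atTop (nhds 0) := by
      have := hεlim.comp (tendsto_add_atTop_nat N)
      refine this.congr (fun n => ?_)
      simp [Nat.add_comm]
    have hform : ∀ n : ℕ, (ξ - c) * β ^ (N+n) = ε (N+n) + c' * β' ^ (N+n) := by
      intro n
      have := hrep n
      rw [hε_def]
      dsimp only
      rw [this]
      ring
    have hlim2 : Tendsto (fun n : ℕ => (ξ - c) * β ^ (N+n)) atTop (nhds 0) := by
      have := hεN.add hβ'lim
      rw [add_zero] at this
      exact this.congr (fun n => (hform n).symm)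
    have hlb : ∀ n : ℕ, |ξ - c| * β ^ N ≤ |(ξ - c) * β ^ (N+n)| := by
      intro n
      rw [abs_mul]
      have h1 : β ^ (N+n) ≤ |β ^ (N+n)| := le_abs_self _
      have h2 : β ^ N ≤ β ^ (N+n) := pow_le_pow_right₀ hβ1.le (Nat.le_add_right N n)
      nlinarith [abs_nonneg (ξ - c)]
    have hpos : 0 < |ξ - c| * β ^ N := by
      apply mul_pos (abs_pos.mpr (sub_ne_zero.mpr hne)) (pow_pos hβ0 N)
    have := hlim2.abs
    rw [abs_zero] at this
    have hev := this.eventually (eventually_lt_nhds hpos)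
    obtain ⟨n, hn⟩ := hev.exists
    exact absurd (hlb n) (not_le.mpr hn)
  -- now express c as (A + B β)/(2β - k)
  have hkey : c * β ^ N * s = (a (N+1) : ℝ) - β' * a N := by
    rw [hc_def]; field_simp
  have hinv : β * ((e : ℝ) * (β - k)) = 1 := by linear_combination (e:ℝ) * hsq + he2
  have hpowinv : β ^ N * ((e : ℝ) * (β - k)) ^ N = 1 := by
    rw [← mul_pow, hinv, one_pow]
  have hcs : c * (2 * β - k) = ((a (N+1) : ℝ) - β' * a N) * ((e : ℝ) * (β - k)) ^ N := by
    have hsval : (2:ℝ) * β - k = s := by rw [hs_def, hb_def]; ring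
    have h4 : c * s * (β ^ N * ((e:ℝ) * (β - k)) ^ N)
        = ((a (N+1) : ℝ) - β' * a N) * ((e:ℝ) * (β - k)) ^ N := by
      rw [← hkey]; ring
    rw [hpowinv, mul_one] at h4
    rw [hsval]; exact h4
  have hx1 : ∃ A B : ℤ, (a (N+1) : ℝ) - β' * a N = (A : ℝ) + B * β :=
    ⟨a (N+1) - k * a N, a N, by rw [hb_def]; push_cast; ring⟩
  have hx2 : ∃ A B : ℤ, ((e : ℝ) * (β - k)) ^ N = (A : ℝ) + B * β := by
    apply repr_pow hsq
    exact ⟨-(e * k), e, by push_cast; ring⟩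
  obtain ⟨A, B, hAB⟩ := repr_mul hsq hx1 hx2
  refine ⟨A, B, ?_⟩
  rw [hξc, eq_div_iff hsne, hcs, hAB]

lemma closure_eq (hsq : β ^ 2 = k * β + e) :
    (Subring.closure ({β} : Set ℝ) : Set ℝ) = {x : ℝ | ∃ a b : ℤ, x = (a : ℝ) + b * β} := by
  have hT : ∃ T : Subring ℝ, (T : Set ℝ) = {x : ℝ | ∃ a b : ℤ, x = (a : ℝ) + b * β} := by
    refine ⟨⟨⟨⟨⟨{x : ℝ | ∃ a b : ℤ, x = (a : ℝ) + b * β}, ?_⟩, ?_⟩, ?_, ?_⟩, ?_⟩, rfl⟩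
    · rintro x y ⟨a, b, rfl⟩ ⟨c, d, rfl⟩
      exact repr_mul hsq ⟨a, b, rfl⟩ ⟨c, d, rfl⟩
    · exact ⟨1, 0, by norm_num⟩
    · rintro x y ⟨a, b, rfl⟩ ⟨c, d, rfl⟩
      exact ⟨a + c, b + d, by push_cast; ring⟩
    · exact ⟨0, 0, by norm_num⟩
    · rintro x ⟨a, b, rfl⟩
      exact ⟨-a, -b, by push_cast; ring⟩
  obtain ⟨T, hTeq⟩ := hT
  have h1 : Subring.closure ({β} : Set ℝ) = T := by
    apply le_antisymm
    · apply Subring.closure_le.mpr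
      intro x hx
      rw [Set.mem_singleton_iff] at hx
      subst hx
      rw [hTeq]
      exact ⟨0, 1, by norm_num⟩
    · intro x hx
      rw [← SetLike.mem_coe, hTeq] at hx
      obtain ⟨a, b, rfl⟩ := hx
      exact add_mem (intCast_mem (Subring.closure ({β} : Set ℝ)) a)
        (mul_mem (intCast_mem (Subring.closure ({β} : Set ℝ)) b) (Subring.subset_closure rfl))
  rw [h1, hTeq]

end Main
end QPisot

theorem quadratic_pisot_group_structure (k e : ℤ) (he : e = 1 ∨ e = -1)
    (hk1 : e = 1 → 1 ≤ k) (hk2 : e = -1 → 3 ≤ k)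
    (β : ℝ) (hβ : β = ((k : ℝ) + Real.sqrt ((k : ℝ) ^ 2 + 4 * (e : ℝ))) / 2)
    (P : AddSubgroup ℝ) (hP : (P : Set ℝ) = PisotSet β)
    (Z : AddSubgroup ℝ) (hZ : (Z : Set ℝ) = (Subring.closure ({β} : Set ℝ) : Set ℝ)) :
    (Odd k → Nonempty ((↥P ⧸ Z.addSubgroupOf P) ≃+ ZMod (k ^ 2 + 4 * e).toNat)) ∧
    (Even k → Nonempty ((↥P ⧸ Z.addSubgroupOf P) ≃+
      (ZMod ((k ^ 2 + 4 * e).toNat / 2) × ZMod 2))) := by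
  -- integer basics
  have he2 : e * e = 1 := by rcases he with h | h <;> simp [h]
  have he2R : (e : ℝ) * e = 1 := by exact_mod_cast congrArg (fun z : ℤ => (z : ℝ)) he2
  have hD5 : 5 ≤ k ^ 2 + 4 * e := by
    rcases he with h | h
    · have := hk1 h; subst h; nlinarith
    · have := hk2 h; subst h; nlinarith
  have hD0 : (0 : ℤ) < k ^ 2 + 4 * e := by linarith
  have nsq : ¬ IsSquare (k ^ 2 + 4 * e) := by
    rintro ⟨r, hr⟩
    have hr' : |r| * |r| = k ^ 2 + 4 * e := by rw [← abs_mul, ← hr, abs_of_pos hD0]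
    set q := |r| with hq
    have hq0 : 0 ≤ q := abs_nonneg r
    rcases he with h | h
    · have hk := hk1 h
      subst h
      rcases le_or_gt q k with hqk | hqk
      · nlinarith
      · have h1 : k + 1 ≤ q := hqk
        rcases eq_or_lt_of_le h1 with h2 | h2
        · rw [← h2] at hr'
          have h5 : 2 * k + 1 = 4 := by linear_combination hr'
          omega
        · have h3 : k + 2 ≤ q := by omega
          have h4 : (k + 2) * (k + 2) ≤ q * q := mul_le_mul h3 h3 (by linarith) hq0
          nlinarith
    · have hk := hk2 h
      subst h
      rcases le_or_gt k q with hqk | hqk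
      · nlinarith
      · have : q ≤ k - 1 := by omega
        nlinarith
  have hDn : (((k ^ 2 + 4 * e).toNat : ℤ)) = k ^ 2 + 4 * e := Int.toNat_of_nonneg hD0.le
  -- real basics
  set s : ℝ := Real.sqrt ((k : ℝ) ^ 2 + 4 * e) with hs_def
  have hDR : ((k : ℝ) ^ 2 + 4 * e) = ((k ^ 2 + 4 * e : ℤ) : ℝ) := by push_cast; ring
  have hDRpos : (0 : ℝ) < (k : ℝ) ^ 2 + 4 * e := by rw [hDR]; exact_mod_cast hD0
  have hs_sq : s ^ 2 = (k : ℝ) ^ 2 + 4 * e := Real.sq_sqrt hDRpos.le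
  have hs_pos : 0 < s := Real.sqrt_pos.mpr hDRpos
  have hsβ : 2 * β - k = s := by rw [hβ]; ring
  have hsne : (2 : ℝ) * β - k ≠ 0 := by rw [hsβ]; exact ne_of_gt hs_pos
  have hsq : β ^ 2 = k * β + e := by rw [hβ]; linear_combination hs_sq / 4
  have hirr_s : Irrational s := by
    have h1 : s = Real.sqrt ((k ^ 2 + 4 * e : ℤ) : ℝ) := by rw [hs_def, hDR]
    rw [h1]
    exact irrational_sqrt_intCast_iff.mpr ⟨nsq, hD0.le⟩
  have hβ1 : 1 < β := by
    rw [hβ]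
    rcases he with h | h
    · have hk := hk1 h
      subst h
      have hk' : (1 : ℝ) ≤ k := by exact_mod_cast hk
      have hss : s * s = (k : ℝ) ^ 2 + 4 := by rw [← sq]; rw [hs_sq]; norm_num
      have h1 : (1 : ℝ) ≤ (k : ℝ) ^ 2 := by nlinarith
      have h2 : 1 < s := by
        by_contra hcon
        push_neg at hcon
        have : s * s ≤ 1 := mul_le_one₀ hcon hs_pos.le hcon
        linarith
      linarith
    · have hk := hk2 h
      subst h
      have hk' : (3 : ℝ) ≤ k := by exact_mod_cast hk
      linarith
  have hβ0 : (0 : ℝ) < β := lt_trans one_pos hβ1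
  have hββ' : β * ((k : ℝ) - β) = -e := by linear_combination -hsq
  have hb'abs : |(k : ℝ) - β| < 1 := by
    have habs : |β| * |(k : ℝ) - β| = 1 := by
      rw [← abs_mul, hββ']
      rcases he with h | h <;> subst h <;> norm_num
    rw [abs_of_pos hβ0] at habs
    nlinarith [abs_nonneg ((k : ℝ) - β)]
  have hirrβ : Irrational β := by
    rintro ⟨q, hq⟩
    apply hirr_s
    have hcast : ((2 * q - k : ℚ) : ℝ) = 2 * (q : ℚ) - (k : ℝ) := by push_cast; ring
    refine ⟨2 * q - k, ?_⟩
    rw [hcast, ← hsβ, ← hq]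
  -- uniqueness of representation
  have huniq : ∀ a b c d : ℤ, (a : ℝ) + b * β = c + d * β → a = c ∧ b = d := by
    intro a b c d h
    by_cases hbd : b = d
    · subst hbd
      have h1 : (a : ℝ) = c := by linarith [h]
      exact ⟨by exact_mod_cast h1, rfl⟩
    · exfalso
      apply hirrβ
      have hdb : ((d - b : ℤ) : ℝ) ≠ 0 :=
        Int.cast_ne_zero.mpr (sub_ne_zero.mpr (Ne.symm hbd))
      refine ⟨((a - c : ℤ) : ℚ) / ((d - b : ℤ) : ℚ), ?_⟩
      push_cast
      rw [div_eq_iff (by exact_mod_cast hdb)]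
      push_cast at h ⊢
      linarith [h]
  -- membership characterizations
  have hPmem : ∀ x : ℝ, x ∈ P ↔ ∃ a b : ℤ, x = ((a : ℝ) + b * β) / s := by
    intro x
    rw [← SetLike.mem_coe, hP]
    constructor
    · intro hx
      obtain ⟨a, b, hab⟩ := QPisot.pisot_mem_repr hsq hβ1 hb'abs he2R hx
      exact ⟨a, b, by rw [hab, hsβ]⟩
    · rintro ⟨a, b, rfl⟩
      have := QPisot.mem_pisotSet hsq hb'abs hsne a b
      rwa [hsβ] at this
  have hZmem : ∀ x : ℝ, x ∈ Z ↔ ∃ a b : ℤ, x = (a : ℝ) + b * β := by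
    intro x
    rw [← SetLike.mem_coe, hZ, QPisot.closure_eq hsq]
    exact Iff.rfl
  -- pair-level membership in Z
  have hZpair : ∀ a b : ℤ, (((a : ℝ) + b * β) / s ∈ Z) ↔
      ∃ x y : ℤ, a = -k * x + 2 * e * y ∧ b = 2 * x + k * y := by
    intro a b
    rw [hZmem]
    constructor
    · rintro ⟨a', b', hab⟩
      rw [div_eq_iff (ne_of_gt hs_pos)] at hab
      rw [← hsβ] at hab
      have h1 : (a : ℝ) + b * β = ((-(a' * k) + 2 * b' * e : ℤ) : ℝ)
          + ((2 * a' + b' * k : ℤ) : ℝ) * β := by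
        push_cast
        linear_combination hab + 2 * (b' : ℝ) * hsq
      obtain ⟨ha, hb⟩ := huniq _ _ _ _ h1
      exact ⟨a', b', by rw [ha]; ring, by rw [hb]; ring⟩
    · rintro ⟨x, y, rfl, rfl⟩
      refine ⟨x, y, ?_⟩
      rw [div_eq_iff (ne_of_gt hs_pos), ← hsβ]
      push_cast
      linear_combination (-2) * (y : ℝ) * hsq
  -- the equivalence ℤ × ℤ ≃+ P
  have hgadd : ∀ p q : ℤ × ℤ, (((p.1 + q.1 : ℤ) : ℝ) + ((p.2 + q.2 : ℤ) : ℝ) * β) / s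
      = ((p.1 : ℝ) + p.2 * β) / s + ((q.1 : ℝ) + q.2 * β) / s := by
    intro p q
    push_cast
    field_simp
    ring
  let g : ℤ × ℤ →+ ℝ := AddMonoidHom.mk' (fun p => ((p.1 : ℝ) + p.2 * β) / s)
    (fun p q => hgadd p q)
  have hgP : ∀ p : ℤ × ℤ, g p ∈ P := fun p => (hPmem _).mpr ⟨p.1, p.2, rfl⟩
  let g' : ℤ × ℤ →+ P := g.codRestrict P hgP
  have hg'inj : Function.Injective g' := by
    intro p q h
    have h0 : g p = g q := congrArg Subtype.val h
    have h1 : ((p.1 : ℝ) + p.2 * β) / s = ((q.1 : ℝ) + q.2 * β) / s := h0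
    rw [div_eq_div_iff (ne_of_gt hs_pos) (ne_of_gt hs_pos)] at h1
    have h2 : ((p.1 : ℝ) + p.2 * β) = ((q.1 : ℝ) + q.2 * β) :=
      mul_right_cancel₀ (ne_of_gt hs_pos) h1
    obtain ⟨h3, h4⟩ := huniq _ _ _ _ h2
    exact Prod.ext h3 h4
  have hg'surj : Function.Surjective g' := by
    rintro ⟨x, hx⟩
    obtain ⟨a, b, hab⟩ := (hPmem x).mp hx
    exact ⟨(a, b), Subtype.ext hab.symm⟩
  let E : (ℤ × ℤ) ≃+ P := AddEquiv.ofBijective g' ⟨hg'inj, hg'surj⟩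
  have hEval : ∀ p : ℤ × ℤ, ((E p : P) : ℝ) = ((p.1 : ℝ) + p.2 * β) / s := fun p => rfl
  constructor
  · -- odd case
    intro hodd
    obtain ⟨t, ht⟩ := hodd
    set Dn : ℕ := (k ^ 2 + 4 * e).toNat with hDn_def
    have hφadd : ∀ p q : ℤ × ℤ,
        (((2 * (p.1 + q.1) + k * (p.2 + q.2) : ℤ) : ZMod Dn))
          = ((2 * p.1 + k * p.2 : ℤ) : ZMod Dn) + ((2 * q.1 + k * q.2 : ℤ) : ZMod Dn) := by
      intro p q
      push_cast
      ring
    let φ : ℤ × ℤ →+ ZMod Dn := AddMonoidHom.mk'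
      (fun p => ((2 * p.1 + k * p.2 : ℤ) : ZMod Dn)) (fun p q => hφadd p q)
    have hφsurj : Function.Surjective φ := by
      intro z
      obtain ⟨z', rfl⟩ := ZMod.intCast_surjective z
      refine ⟨(-t * z', z'), ?_⟩
      show ((2 * (-t * z') + k * z' : ℤ) : ZMod Dn) = (z' : ZMod Dn)
      have h1 : 2 * (-t * z') + k * z' = z' := by rw [ht]; ring
      rw [h1]
    -- kernel arithmetic
    have hDdvd : ∀ a b : ℤ, ((Dn : ℤ) ∣ 2 * a + k * b) ↔
        (∃ x y : ℤ, a = -k * x + 2 * e * y ∧ b = 2 * x + k * y) := by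
      intro a b
      rw [hDn]
      constructor
      · rintro ⟨yy, hyy⟩
        have h2 : 2 * (k * a - 2 * e * b) = (k ^ 2 + 4 * e) * (k * yy - b) := by
          linear_combination k * hyy
        have hDodd : Odd (k ^ 2 + 4 * e) := ⟨2 * t ^ 2 + 2 * t + 2 * e, by rw [ht]; ring⟩
        have hEv : Even ((k ^ 2 + 4 * e) * (k * yy - b)) := ⟨k * a - 2 * e * b, by linarith⟩
        have hm : Even (k * yy - b) := by
          rcases Int.even_mul.mp hEv with h | h
          · exact absurd h (Int.not_even_iff_odd.mpr hDodd)
          · exact h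
        obtain ⟨m', hm'⟩ := hm
        have hxx : k * a - 2 * e * b = (k ^ 2 + 4 * e) * m' := by
          have h3 : 2 * (k * a - 2 * e * b) = 2 * ((k ^ 2 + 4 * e) * m') := by
            rw [h2, hm']; ring
          linarith
        refine ⟨-m', yy, ?_, ?_⟩
        · have h4 : (k ^ 2 + 4 * e) * a = (k ^ 2 + 4 * e) * (-k * (-m') + 2 * e * yy) := by
            linear_combination k * hxx + 2 * e * hyy + a * he2 * 4 - 4 * a * he2
          have := mul_left_cancel₀ (ne_of_gt hD0) h4
          linarith
        · have h4 : (k ^ 2 + 4 * e) * b = (k ^ 2 + 4 * e) * (2 * (-m') + k * yy) := by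
            linear_combination (-2) * hxx + k * hyy
          have := mul_left_cancel₀ (ne_of_gt hD0) h4
          linarith
      · rintro ⟨x, y, rfl, rfl⟩
        exact ⟨y, by ring⟩
    have hφker : ∀ p : ℤ × ℤ, φ p = 0 ↔ ((E p : P) : ℝ) ∈ Z := by
      intro p
      have h1 : φ p = 0 ↔ ((Dn : ℤ) ∣ 2 * p.1 + k * p.2) :=
        ZMod.intCast_zmod_eq_zero_iff_dvd _ _
      rw [h1, hDdvd, hEval, hZpair]
    have hmap : (AddMonoidHom.ker φ).map E.toAddMonoidHom = Z.addSubgroupOf P := by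
      ext x
      constructor
      · rintro ⟨p, hp, rfl⟩
        rw [AddSubgroup.mem_addSubgroupOf]
        exact (hφker p).mp hp
      · intro hx
        rw [AddSubgroup.mem_addSubgroupOf] at hx
        obtain ⟨p, hp⟩ := E.surjective x
        refine ⟨p, ?_, hp⟩
        show φ p = 0
        rw [hφker p, hp]
        exact hx
    exact ⟨((QuotientAddGroup.congr (AddMonoidHom.ker φ) (Z.addSubgroupOf P) E hmap).symm.trans
      (QuotientAddGroup.quotientKerEquivOfSurjective φ hφsurj))⟩
  · -- even case
    intro heven
    obtain ⟨m, hm⟩ := heven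
    set Dh : ℕ := (k ^ 2 + 4 * e).toNat / 2 with hDh_def
    have hw2 : 2 ≤ m ^ 2 + e := by
      have h4 : k ^ 2 + 4 * e = 4 * (m ^ 2 + e) := by rw [hm]; ring
      by_contra hcon
      push_neg at hcon
      have : m ^ 2 + e ≤ 1 := by linarith
      linarith
    have hDh : ((Dh : ℕ) : ℤ) = 2 * (m ^ 2 + e) := by
      have h4 : ((k ^ 2 + 4 * e).toNat : ℤ) = 4 * (m ^ 2 + e) := by rw [hDn, hm]; ring
      rw [hDh_def]
      generalize hww : m ^ 2 + e = w at h4 hw2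
      omega
    have hφadd : ∀ p q : ℤ × ℤ,
        ((((p.1 + q.1) + m * (p.2 + q.2) : ℤ) : ZMod Dh), (((p.2 + q.2 : ℤ)) : ZMod 2))
          = (((p.1 + m * p.2 : ℤ) : ZMod Dh), ((p.2 : ℤ) : ZMod 2))
            + (((q.1 + m * q.2 : ℤ) : ZMod Dh), ((q.2 : ℤ) : ZMod 2)) := by
      intro p q
      simp only [Prod.mk_add_mk, Prod.mk.injEq]
      constructor <;> (push_cast; ring)
    let φ : ℤ × ℤ →+ ZMod Dh × ZMod 2 := AddMonoidHom.mk'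
      (fun p => (((p.1 + m * p.2 : ℤ) : ZMod Dh), ((p.2 : ℤ) : ZMod 2)))
      (fun p q => hφadd p q)
    have hφsurj : Function.Surjective φ := by
      rintro ⟨z1, z2⟩
      obtain ⟨z', rfl⟩ := ZMod.intCast_surjective z1
      obtain ⟨w', rfl⟩ := ZMod.intCast_surjective z2
      refine ⟨(z' - m * w', w'), ?_⟩
      show ((((z' - m * w') + m * w' : ℤ) : ZMod Dh), ((w' : ℤ) : ZMod 2))
        = ((z' : ZMod Dh), (w' : ZMod 2))
      have h1 : (z' - m * w') + m * w' = z' := by ring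
      rw [h1]
    have harith : ∀ a b : ℤ, ((2 * (m ^ 2 + e) ∣ a + m * b) ∧ ((2 : ℤ) ∣ b)) ↔
        (∃ x y : ℤ, a = -k * x + 2 * e * y ∧ b = 2 * x + k * y) := by
      intro a b
      constructor
      · rintro ⟨⟨yy, hyy⟩, ⟨xx, hxxb⟩⟩
        refine ⟨xx - m * yy, yy, ?_, ?_⟩
        · linear_combination hyy - m * hxxb + (xx - m * yy) * hm
        · linear_combination hxxb - yy * hm
      · rintro ⟨x, y, rfl, rfl⟩
        constructor
        · exact ⟨y, by linear_combination (m * y - x) * hm⟩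
        · exact ⟨x + m * y, by linear_combination y * hm⟩
    have hφker : ∀ p : ℤ × ℤ, φ p = 0 ↔ ((E p : P) : ℝ) ∈ Z := by
      intro p
      have h1 : φ p = 0 ↔
          (((p.1 + m * p.2 : ℤ) : ZMod Dh) = 0 ∧ ((p.2 : ℤ) : ZMod 2) = 0) := by
        show ((((p.1 + m * p.2 : ℤ) : ZMod Dh), ((p.2 : ℤ) : ZMod 2)) = (0, 0)) ↔ _
        rw [Prod.mk.injEq]
      rw [h1, ZMod.intCast_zmod_eq_zero_iff_dvd, ZMod.intCast_zmod_eq_zero_iff_dvd,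
        hDh, hEval, hZpair]
      have h2 : ((2 : ℕ) : ℤ) = 2 := by norm_num
      rw [h2]
      exact harith p.1 p.2
    have hmap : (AddMonoidHom.ker φ).map E.toAddMonoidHom = Z.addSubgroupOf P := by
      ext x
      constructor
      · rintro ⟨p, hp, rfl⟩
        rw [AddSubgroup.mem_addSubgroupOf]
        exact (hφker p).mp hp
      · intro hx
        rw [AddSubgroup.mem_addSubgroupOf] at hx
        obtain ⟨p, hp⟩ := E.surjective x
        refine ⟨p, ?_, hp⟩
        show φ p = 0
        rw [hφker p, hp]
        exact hx
    exact ⟨((QuotientAddGroup.congr (AddMonoidHom.ker φ) (Z.addSubgroupOf P) E hmap).symm.trans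
      (QuotientAddGroup.quotientKerEquivOfSurjective φ hφsurj))⟩
end

section
/- Let β be the real root of x³ = x² + x + 1 (the tribonacci number, a Pisot unit). Then the Pisot group A_β = P_β/ℤ[β] is isomorphic to (ℤ/22ℤ) × (ℤ/2ℤ); in particular its order is 44 = |D(β)|, where D(β) = −44 is the discriminant of x³ − x² − x − 1. -/
open Filter Polynomial

def tri : ℕ → ℤ
  | 0 => 0
  | 1 => 0
  | 2 => 1
  | n + 3 => tri (n + 2) + tri (n + 1) + tri n

section TribAux
variable {β : ℝ}

lemma tri_lb (hβ : β ^ 3 = β ^ 2 + β + 1) : 1.8 < β := by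
  nlinarith [sq_nonneg (β + 0.4)]

lemma tri_ub (hβ : β ^ 3 = β ^ 2 + β + 1) : β < 1.9 := by
  nlinarith [sq_nonneg (β + 0.45)]

lemma Fpos (hβ : β ^ 3 = β ^ 2 + β + 1) : 0 < 3 * β ^ 2 - 2 * β - 1 := by
  have h1 := tri_lb hβ; nlinarith

lemma bpos (hβ : β ^ 3 = β ^ 2 + β + 1) : 0 < β := lt_trans (by norm_num) (tri_lb hβ)

lemma quad_of_cubic (hβ : β ^ 3 = β ^ 2 + β + 1) (s : ℕ → ℝ)
    (hrec : ∀ n, s (n + 3) = s (n + 2) + s (n + 1) + s n)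
    (h0 : s 2 + (β - 1) * s 1 + s 0 / β = 0) :
    ∀ n, s (n + 2) + (β - 1) * s (n + 1) + s n / β = 0 := by
  have hb0 : β ≠ 0 := ne_of_gt (bpos hβ)
  have hq : ∀ n, s (n + 3) + (β - 1) * s (n + 2) + s (n + 1) / β =
      β * (s (n + 2) + (β - 1) * s (n + 1) + s n / β) := by
    intro n
    rw [hrec n]
    field_simp
    linear_combination (-s (n + 1)) * hβ
  intro n
  induction n with
  | zero => exact h0
  | succ k ih =>
    have h := hq k
    rw [ih, mul_zero] at h
    simpa [show k + 1 + 2 = k + 3 by omega, show k + 1 + 1 = k + 2 by omega] using h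

lemma tendsto_zero_of_quad (hβ : β ^ 3 = β ^ 2 + β + 1) (s : ℕ → ℝ)
    (hs : ∀ n, s (n + 2) + (β - 1) * s (n + 1) + s n / β = 0) :
    Tendsto s atTop (nhds 0) := by
  have hlb := tri_lb hβ; have hub := tri_ub hβ
  have hb0 : (0:ℝ) < β := by linarith
  set W : ℕ → ℝ := fun n => s (n + 1) ^ 2 - s (n + 2) * s n with hWdef
  have hWrec : ∀ n, W (n + 1) = W n / β := by
    intro n
    have h2 := hs n
    have h3 := hs (n + 1)
    simp only [show n + 1 + 2 = n + 3 by omega, show n + 1 + 1 = n + 2 by omega] at h3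
    have e3 : s (n + 3) = -((β - 1) * s (n + 2) + s (n + 1) / β) := by linarith
    have e2 : s (n + 2) = -((β - 1) * s (n + 1) + s n / β) := by linarith
    simp only [hWdef, show n + 1 + 2 = n + 3 by omega, show n + 1 + 1 = n + 2 by omega]
    rw [e3, e2]
    field_simp
    ring
  have hWn : ∀ n, W n = W 0 * (1 / β) ^ n := by
    intro n; induction n with
    | zero => rw [pow_zero, mul_one]
    | succ k ih => rw [hWrec k, ih]; ring
  have hκpos : (0:ℝ) < 1 / β - (β - 1) ^ 2 / 4 := by
    rw [sub_pos, div_lt_div_iff₀ (by norm_num) hb0]; nlinarith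
  set κ : ℝ := 1 / β - (β - 1) ^ 2 / 4 with hκdef
  have hVlow : ∀ n, κ * s n ^ 2 ≤ s (n + 1) ^ 2 + (β - 1) * s (n + 1) * s n + s n ^ 2 / β := by
    intro n
    have h := sq_nonneg (s (n + 1) + (β - 1) * s n / 2)
    rw [hκdef]
    field_simp
    nlinarith [mul_nonneg hb0.le h]
  have hV : ∀ n, s (n + 2) ^ 2 + (β - 1) * s (n + 2) * s (n + 1) + s (n + 1) ^ 2 / β = W n / β := by
    intro n
    have h2 := hs n
    have e2 : s (n + 2) = -((β - 1) * s (n + 1) + s n / β) := by linarith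
    simp only [hWdef]
    rw [e2]
    field_simp
    ring
  have hW0 : 0 ≤ W 0 := by
    have h1 := hVlow 1
    have h2 := hV 0
    norm_num at h1 h2
    have h4 : 0 ≤ W 0 / β := by
      rw [h2] at h1
      exact le_trans (mul_nonneg hκpos.le (sq_nonneg (s 1))) h1
    rcases div_nonneg_iff.mp h4 with h | h
    · exact h.1
    · linarith [h.2]
  have key : ∀ n, s (n + 1) ^ 2 ≤ W 0 / κ * (1 / β) ^ n := by
    intro n
    have h1 := hVlow (n + 1)
    simp only [show n + 1 + 1 = n + 2 by omega] at h1
    have h2 := hV n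
    have h3 := hWn n
    have hWpos : 0 ≤ W n := by rw [h3]; positivity
    have hd : W n / β ≤ W n := div_le_self hWpos (by linarith)
    have hk : κ * s (n + 1) ^ 2 ≤ W n := by
      calc κ * s (n + 1) ^ 2 ≤ W n / β := by rw [← h2]; exact h1
      _ ≤ W n := hd
    have he : W 0 / κ * (1 / β) ^ n = W n / κ := by rw [h3]; ring
    rw [he, le_div_iff₀ hκpos, mul_comm]
    exact hk
  have hgeo : Tendsto (fun n : ℕ => W 0 / κ * (1 / β) ^ n) atTop (nhds 0) := by
    have := (tendsto_pow_atTop_nhds_zero_of_lt_one (le_of_lt (by positivity : (0:ℝ) < 1/β))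
      (by rw [div_lt_one hb0]; linarith)).const_mul (W 0 / κ)
    simpa using this
  have hsq : Tendsto (fun n : ℕ => Real.sqrt (W 0 / κ * (1 / β) ^ n)) atTop (nhds 0) := by
    have := (Real.continuous_sqrt.tendsto 0).comp hgeo
    simpa [Function.comp_def] using this
  have hshift : Tendsto (fun n : ℕ => s (n + 1)) atTop (nhds 0) :=
    squeeze_zero_norm (fun n => by simpa [Real.norm_eq_abs] using Real.abs_le_sqrt (key n)) hsq
  exact (tendsto_add_atTop_iff_nat 1).mp hshift

lemma mem_pisotSet (hβ : β ^ 3 = β ^ 2 + β + 1) (c₀ c₁ c₂ : ℤ) :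
    ((c₀ + c₁ * β + c₂ * β ^ 2) / (3 * β ^ 2 - 2 * β - 1)) ∈ PisotSet β := by
  have hb0 : (0:ℝ) < β := lt_trans (by norm_num) (tri_lb hβ)
  have hF : (0:ℝ) < 3 * β ^ 2 - 2 * β - 1 := Fpos hβ
  have hFne : (3 * β ^ 2 - 2 * β - 1 : ℝ) ≠ 0 := ne_of_gt hF
  have hbne : β ≠ 0 := ne_of_gt hb0
  set r : ℕ → ℝ := fun n => (tri n : ℝ) - β ^ n / (3 * β ^ 2 - 2 * β - 1) with hrdef
  have hrcube : ∀ n, r (n + 3) = r (n + 2) + r (n + 1) + r n := by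
    intro n
    simp only [hrdef, tri]
    push_cast
    field_simp
    linear_combination (-β ^ n / (3 * β ^ 2 - 2 * β - 1)) * hβ
  have hr0 : r 2 + (β - 1) * r 1 + r 0 / β = 0 := by
    simp only [hrdef]
    norm_num [tri]
    field_simp
    linear_combination (1 / (3 * β ^ 2 - 2 * β - 1)) * hβ - β * (mul_inv_cancel₀ hFne)
  have hrquad := quad_of_cubic hβ r hrcube hr0
  have hrzero := tendsto_zero_of_quad hβ r hrquad
  have key : ∀ n : ℕ, (c₀ + c₁ * β + c₂ * β ^ 2) / (3 * β ^ 2 - 2 * β - 1) * β ^ n =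
      ((c₀ * tri n + c₁ * tri (n + 1) + c₂ * tri (n + 2) : ℤ) : ℝ) -
      (c₀ * r n + c₁ * r (n + 1) + c₂ * r (n + 2)) := by
    intro n
    simp only [hrdef]
    push_cast
    field_simp
    ring
  have hs1 : Tendsto (fun n : ℕ => r (n + 1)) atTop (nhds 0) :=
    (tendsto_add_atTop_iff_nat 1).mpr hrzero
  have hs2 : Tendsto (fun n : ℕ => r (n + 2)) atTop (nhds 0) :=
    (tendsto_add_atTop_iff_nat 2).mpr hrzero
  have hg : Tendsto (fun n : ℕ => |(c₀ : ℝ) * r n + c₁ * r (n + 1) + c₂ * r (n + 2)|)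
      atTop (nhds 0) := by
    have := ((hrzero.const_mul (c₀ : ℝ)).add (hs1.const_mul (c₁ : ℝ))).add
      (hs2.const_mul (c₂ : ℝ))
    simp only [mul_zero, add_zero] at this
    simpa using this.abs
  refine squeeze_zero (fun n => abs_nonneg _) (fun n => ?_) hg
  rw [nearestIntDist]
  calc |(c₀ + c₁ * β + c₂ * β ^ 2) / (3 * β ^ 2 - 2 * β - 1) * β ^ n -
      (round ((c₀ + c₁ * β + c₂ * β ^ 2) / (3 * β ^ 2 - 2 * β - 1) * β ^ n) : ℤ)| ≤
      |(c₀ + c₁ * β + c₂ * β ^ 2) / (3 * β ^ 2 - 2 * β - 1) * β ^ n -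
      ((c₀ * tri n + c₁ * tri (n + 1) + c₂ * tri (n + 2) : ℤ) : ℝ)| := round_le _ _
  _ = |(c₀ : ℝ) * r n + c₁ * r (n + 1) + c₂ * r (n + 2)| := by
      rw [key n]; rw [abs_sub_comm]; congr 1; ring


/-- one step of the q-recursion -/
lemma qstep (hβ : β ^ 3 = β ^ 2 + β + 1) (hbne : β ≠ 0) (s : ℕ → ℝ)
    (hrec : ∀ n, s (n + 3) = s (n + 2) + s (n + 1) + s n) (n : ℕ) :
    s (n + 3) + (β - 1) * s (n + 2) + s (n + 1) / β =
      β * (s (n + 2) + (β - 1) * s (n + 1) + s n / β) := by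
  rw [hrec n]; field_simp; linear_combination (-s (n + 1)) * hβ

lemma hard_core (hβ : β ^ 3 = β ^ 2 + β + 1) (ζ : ℝ) (b : ℕ → ℤ)
    (hbrec : ∀ n, b (n + 3) = b (n + 2) + b (n + 1) + b n)
    (hten : Tendsto (fun n : ℕ => ζ * β ^ n - b n) atTop (nhds 0)) :
    ζ * (3 * β ^ 2 - 2 * β - 1) =
      ((b 2 - b 1 - b 0 : ℤ) : ℝ) + ((b 1 - b 0 : ℤ) : ℝ) * β + ((b 0 : ℤ) : ℝ) * β ^ 2 := by
  have hlb := tri_lb hβ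
  have hb0 : (0:ℝ) < β := by linarith
  have hbne : β ≠ 0 := ne_of_gt hb0
  have hF : (0:ℝ) < 3 * β ^ 2 - 2 * β - 1 := Fpos hβ
  have hFne : (3 * β ^ 2 - 2 * β - 1 : ℝ) ≠ 0 := ne_of_gt hF
  set ε : ℕ → ℝ := fun n => ζ * β ^ n - b n with hεdef
  have hεcube : ∀ n, ε (n + 3) = ε (n + 2) + ε (n + 1) + ε n := by
    intro n
    simp only [hεdef, hbrec n]
    push_cast
    have : β ^ (n + 3) = β ^ (n + 2) + β ^ (n + 1) + β ^ n := by
      have : β ^ (n + 3) = β ^ n * β ^ 3 := by ring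
      rw [this, hβ]; ring
    rw [this]; ring
  set q : ℕ → ℝ := fun n => ε (n + 2) + (β - 1) * ε (n + 1) + ε n / β with hqdef
  have hqstep : ∀ n, q (n + 1) = β * q n := by
    intro n
    have := qstep hβ hbne ε hεcube n
    simpa [hqdef, show n + 1 + 2 = n + 3 by omega, show n + 1 + 1 = n + 2 by omega] using this
  have hqgeo : ∀ n, q n = β ^ n * q 0 := by
    intro n; induction n with
    | zero => simp
    | succ k ih => rw [hqstep k, ih]; ring
  have hε1 : Tendsto (fun n : ℕ => ε (n + 1)) atTop (nhds 0) :=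
    (tendsto_add_atTop_iff_nat 1).mpr hten
  have hε2 : Tendsto (fun n : ℕ => ε (n + 2)) atTop (nhds 0) :=
    (tendsto_add_atTop_iff_nat 2).mpr hten
  have hqten : Tendsto q atTop (nhds 0) := by
    have := (hε2.add ((hε1.const_mul (β - 1)))).add (hten.div_const β)
    simpa using this
  have hq0 : q 0 = 0 := by
    by_contra h
    obtain ⟨N, hN⟩ := (Metric.tendsto_atTop.mp hqten |q 0| (abs_pos.mpr h))
    have h2 := hN N le_rfl
    rw [Real.dist_eq, sub_zero, hqgeo N, abs_mul, abs_pow, abs_of_pos hb0] at h2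
    nlinarith [one_le_pow₀ (by linarith : (1:ℝ) ≤ β) (n := N), abs_pos.mpr h, abs_nonneg (q 0)]
  -- the quadratic relation for ε at 0
  have hεq : ε 2 + (β - 1) * ε 1 + ε 0 / β = 0 := by
    rw [← hq0]
  have e0 : ζ * β ^ 2 - b 2 + (β - 1) * (ζ * β ^ 1 - b 1) + (ζ * β ^ 0 - b 0) / β = 0 := hεq
  have hpos : (0:ℝ) < β ^ 2 + 2 * β + 3 := by positivity
  have e1 : ζ * (β ^ 2 + 2 * β + 3) = (b 0 : ℝ) + (β ^ 2 - β) * b 1 + β * b 2 := by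
    field_simp at e0
    linear_combination e0 + (-2*ζ) * hβ
  have e2 : ζ = ((b 0 : ℝ) + (β ^ 2 - β) * b 1 + β * b 2) / (β ^ 2 + 2 * β + 3) := by
    rw [eq_div_iff (ne_of_gt hpos)]
    exact e1
  rw [e2, div_mul_eq_mul_div, div_eq_iff (ne_of_gt hpos)]
  push_cast
  linear_combination (3*(b 2 : ℝ) + (3*β - 3)*(b 1 : ℝ) + (-2 - β)*(b 0 : ℝ)) * hβ

lemma pow_cube_rec (hβ : β ^ 3 = β ^ 2 + β + 1) (n : ℕ) :
    β ^ (n + 3) = β ^ (n + 2) + β ^ (n + 1) + β ^ n := by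
  have h : β ^ (n + 3) = β ^ n * β ^ 3 := by ring
  rw [h, hβ]; ring

lemma pisot_mem_S (hβ : β ^ 3 = β ^ 2 + β + 1) {ξ : ℝ} (hξ : ξ ∈ PisotSet β) :
    ∃ c₀ c₁ c₂ : ℤ, ξ * (3 * β ^ 2 - 2 * β - 1) = c₀ + c₁ * β + c₂ * β ^ 2 := by
  have hlb := tri_lb hβ
  have hb0 : (0:ℝ) < β := by linarith
  have hbne : β ≠ 0 := ne_of_gt hb0
  set a : ℕ → ℤ := fun n => round (ξ * β ^ n) with hadef
  set ε : ℕ → ℝ := fun n => ξ * β ^ n - a n with hεdef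
  have hε : Tendsto ε atTop (nhds 0) := by
    refine squeeze_zero_norm (fun n => ?_) hξ
    simp [hεdef, hadef, nearestIntDist, Real.norm_eq_abs, PisotSet]
  have hεs : ∀ k : ℕ, Tendsto (fun n : ℕ => ε (n + k)) atTop (nhds 0) :=
    fun k => (tendsto_add_atTop_iff_nat k).mpr hε
  have hdeq : ∀ n : ℕ, ((a (n+3) : ℝ)) - a (n+2) - a (n+1) - a n =
      ε (n + 2) + ε (n + 1) + ε n - ε (n + 3) := by
    intro n
    have hp := pow_cube_rec hβ n
    simp only [hεdef]
    linear_combination ξ * hp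
  have hd : Tendsto (fun n : ℕ => ((a (n+3) : ℝ)) - a (n+2) - a (n+1) - a n)
      atTop (nhds 0) := by
    have := ((((hεs 2).add (hεs 1)).add hε).sub (hεs 3))
    simp only [add_zero, sub_zero, zero_add, zero_sub, neg_zero] at this
    exact this.congr (fun n => (hdeq n).symm)
  obtain ⟨N, hN⟩ := Metric.tendsto_atTop.mp hd (1/2) (by norm_num)
  have hrec : ∀ n, N ≤ n → a (n + 3) = a (n + 2) + a (n + 1) + a n := by
    intro n hn
    have h1 := hN n hn
    rw [Real.dist_eq, sub_zero] at h1
    have h2 : |((a (n+3) - a (n+2) - a (n+1) - a n : ℤ) : ℝ)| < 1 := by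
      push_cast
      calc |(a (n+3) : ℝ) - a (n+2) - a (n+1) - a n| < 1/2 := h1
      _ < 1 := by norm_num
    rw [← Int.cast_abs] at h2
    have h3 : |a (n+3) - a (n+2) - a (n+1) - a n| < 1 := by exact_mod_cast h2
    have h4 := abs_lt.mp h3
    omega
  have hz := hard_core hβ (ξ * β ^ N) (fun k => a (N + k))
    (by
      intro n
      have := hrec (N + n) (by omega)
      simpa [show N + n + 3 = N + (n + 3) by omega, show N + n + 2 = N + (n + 2) by omega,
        show N + n + 1 = N + (n + 1) by omega] using this)
    (by
      have h := (tendsto_add_atTop_iff_nat N).mpr hε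
      refine h.congr (fun n => ?_)
      simp only [hεdef]
      rw [show n + N = N + n by omega, pow_add]
      ring_nf)
  have desc : ∀ m : ℕ, ∀ x : ℝ,
      (∃ c₀ c₁ c₂ : ℤ, (x * β ^ m) * (3 * β ^ 2 - 2 * β - 1) = c₀ + c₁ * β + c₂ * β ^ 2) →
      ∃ c₀ c₁ c₂ : ℤ, x * (3 * β ^ 2 - 2 * β - 1) = c₀ + c₁ * β + c₂ * β ^ 2 := by
    intro m
    induction m with
    | zero => intro x hx; simpa using hx
    | succ k ih =>
      intro x hx
      obtain ⟨c₀, c₁, c₂, hc⟩ := ih (x * β) (by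
        obtain ⟨d₀, d₁, d₂, hd'⟩ := hx
        exact ⟨d₀, d₁, d₂, by rw [← hd']; ring⟩)
      refine ⟨c₁ - c₀, c₂ - c₀, c₀, ?_⟩
      push_cast
      apply mul_right_cancel₀ hbne
      linear_combination hc + (-(c₀ : ℝ)) * hβ
  exact desc N ξ ⟨_, _, _, hz⟩

lemma cubic_irred : Irreducible (X ^ 3 - X ^ 2 - X - 1 : ℚ[X]) := by
  have hdeg : (X ^ 3 - X ^ 2 - X - 1 : ℚ[X]).natDegree = 3 := by compute_degree!
  rw [irreducible_iff_roots_eq_zero_of_degree_le_three (by rw [hdeg]; norm_num) (by rw [hdeg])]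
  by_contra h
  obtain ⟨r, hr⟩ := Multiset.exists_mem_of_ne_zero h
  have hp0 : (X ^ 3 - X ^ 2 - X - 1 : ℚ[X]) ≠ 0 := by
    intro h0; rw [h0, natDegree_zero] at hdeg; omega
  have hroot : (X ^ 3 - X ^ 2 - X - 1 : ℚ[X]).IsRoot r := (mem_roots hp0).mp hr
  have hre : r ^ 3 - r ^ 2 - r - 1 = 0 := by
    have := hroot
    simp [IsRoot, eval_pow, eval_sub] at this
    linarith [this]
  have hint : IsIntegral ℤ r := by
    refine ⟨X ^ 3 - X ^ 2 - X - 1, by monicity!, ?_⟩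
    simp [eval₂_sub, eval₂_pow]
    push_cast
    linarith [hre]
  obtain ⟨z, hz⟩ := IsIntegrallyClosed.isIntegral_iff.mp hint
  have hzq : (z : ℚ) = r := by exact_mod_cast hz
  have hze : z ^ 3 - z ^ 2 - z - 1 = 0 := by
    have : ((z : ℚ)) ^ 3 - (z:ℚ) ^ 2 - z - 1 = 0 := by rw [hzq]; exact hre
    exact_mod_cast this
  have : z * (z ^ 2 - z - 1) = 1 := by ring_nf; linarith [hze]
  have hu : IsUnit z := IsUnit.of_mul_eq_one _ this
  rcases Int.isUnit_iff.mp hu with h1 | h1 <;> rw [h1] at hze <;> norm_num at hze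

lemma indep123 (hβ : β ^ 3 = β ^ 2 + β + 1) (a b c : ℤ)
    (h : (a : ℝ) + b * β + c * β ^ 2 = 0) : a = 0 ∧ b = 0 ∧ c = 0 := by
  by_contra hne
  have hmono : (X ^ 3 - X ^ 2 - X - 1 : ℚ[X]).Monic := by monicity!
  have haev : aeval β (X ^ 3 - X ^ 2 - X - 1 : ℚ[X]) = 0 := by
    simp [map_sub, map_pow]
    linarith [hβ]
  have hmin : minpoly ℚ β = (X ^ 3 - X ^ 2 - X - 1 : ℚ[X]) :=
    (minpoly.eq_of_irreducible_of_monic cubic_irred haev hmono).symm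
  set g : ℚ[X] := C (a : ℚ) + C (b : ℚ) * X + C (c : ℚ) * X ^ 2 with hg
  have hgev : aeval β g = 0 := by
    simp [hg, map_add, map_mul, map_pow]
    push_cast
    push_cast at h
    linarith [h]
  have hg0 : g ≠ 0 := by
    intro h0
    apply hne
    have e0 : g.coeff 0 = (a : ℚ) := by simp [hg]
    have e1 : g.coeff 1 = (b : ℚ) := by
      simp only [hg, coeff_add, coeff_C_mul, coeff_C, coeff_X_one, coeff_X_pow]
      norm_num
    have e2 : g.coeff 2 = (c : ℚ) := by
      simp only [hg, coeff_add, coeff_C_mul, coeff_C, coeff_X, coeff_X_pow]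
      norm_num
    rw [h0] at e0 e1 e2
    simp only [coeff_zero] at e0 e1 e2
    refine ⟨by exact_mod_cast e0.symm, by exact_mod_cast e1.symm, by exact_mod_cast e2.symm⟩
  have hdvd : minpoly ℚ β ∣ g := minpoly.dvd ℚ β hgev
  have hgd : g.natDegree ≤ 2 := by
    rw [hg]; compute_degree
  have hpd : (X ^ 3 - X ^ 2 - X - 1 : ℚ[X]).natDegree = 3 := by compute_degree!
  have := Polynomial.natDegree_le_of_dvd hdvd hg0
  rw [hmin, hpd] at this
  omega

lemma Zchar (hβ : β ^ 3 = β ^ 2 + β + 1) :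
    (Subring.closure ({β} : Set ℝ) : Set ℝ) =
      {x : ℝ | ∃ a b c : ℤ, x = (a : ℝ) + b * β + c * β ^ 2} := by
  apply Set.eq_of_subset_of_subset
  · intro x hx
    induction hx using Subring.closure_induction with
    | mem y hy =>
      rw [Set.mem_singleton_iff] at hy
      exact ⟨0, 1, 0, by rw [hy]; push_cast; ring⟩
    | zero => exact ⟨0, 0, 0, by push_cast; ring⟩
    | one => exact ⟨1, 0, 0, by push_cast; ring⟩
    | add u v hu hv hup hvp =>
      obtain ⟨a, b, c, rfl⟩ := hup
      obtain ⟨a', b', c', rfl⟩ := hvp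
      exact ⟨a + a', b + b', c + c', by push_cast; ring⟩
    | neg u hu hup =>
      obtain ⟨a, b, c, rfl⟩ := hup
      exact ⟨-a, -b, -c, by push_cast; ring⟩
    | mul u v hu hv hup hvp =>
      obtain ⟨a, b, c, rfl⟩ := hup
      obtain ⟨a', b', c', rfl⟩ := hvp
      refine ⟨a * a' + (b * c' + c * b') + c * c',
        a * b' + b * a' + (b * c' + c * b') + 2 * (c * c'),
        a * c' + b * b' + c * a' + (b * c' + c * b') + 2 * (c * c'), ?_⟩
      push_cast
      linear_combination ((b : ℝ) * c' + c * b' + c * c' * (β + 1)) * hβ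
  · rintro x ⟨a, b, c, rfl⟩
    have hβm : β ∈ Subring.closure ({β} : Set ℝ) := Subring.subset_closure rfl
    have h1 : (a : ℝ) ∈ Subring.closure ({β} : Set ℝ) := intCast_mem _ a
    have h2 : (b : ℝ) * β ∈ Subring.closure ({β} : Set ℝ) :=
      mul_mem (intCast_mem _ b) hβm
    have h3 : (c : ℝ) * β ^ 2 ∈ Subring.closure ({β} : Set ℝ) :=
      mul_mem (intCast_mem _ c) (pow_mem hβm 2)
    exact add_mem (add_mem h1 h2) h3

end TribAux

/-- for the tribonacci number `β` (the real root of `x³ = x² + x + 1`),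
the Pisot group `A_β = P_β/ℤ[β]` is isomorphic to `(ℤ/22ℤ) × (ℤ/2ℤ)`; in particular
its order is `44 = |D(β)|`. -/
theorem tribonacci_pisot_group (β : ℝ) (hβ : β ^ 3 = β ^ 2 + β + 1)
    (P : AddSubgroup ℝ) (hP : (P : Set ℝ) = PisotSet β)
    (Z : AddSubgroup ℝ) (hZ : (Z : Set ℝ) = (Subring.closure ({β} : Set ℝ) : Set ℝ)) :
    Nonempty ((↥P ⧸ Z.addSubgroupOf P) ≃+ (ZMod 22 × ZMod 2)) ∧
    Nat.card (↥P ⧸ Z.addSubgroupOf P) = 44 := by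
  have hlb := tri_lb hβ
  have hF : (0:ℝ) < 3 * β ^ 2 - 2 * β - 1 := Fpos hβ
  have hFne : (3 * β ^ 2 - 2 * β - 1 : ℝ) ≠ 0 := ne_of_gt hF
  have hmemS : ∀ x : ↥P, ∃ c₀ c₁ c₂ : ℤ,
      (x : ℝ) * (3 * β ^ 2 - 2 * β - 1) = c₀ + c₁ * β + c₂ * β ^ 2 := by
    intro x
    have hx : (x : ℝ) ∈ PisotSet β := by rw [← hP]; exact x.2
    exact pisot_mem_S hβ hx
  choose f₀ f₁ f₂ hf using hmemS
  have uniq : ∀ (x : ℝ) (c₀ c₁ c₂ d₀ d₁ d₂ : ℤ),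
      x * (3 * β ^ 2 - 2 * β - 1) = c₀ + c₁ * β + c₂ * β ^ 2 →
      x * (3 * β ^ 2 - 2 * β - 1) = d₀ + d₁ * β + d₂ * β ^ 2 →
      c₀ = d₀ ∧ c₁ = d₁ ∧ c₂ = d₂ := by
    intro x c₀ c₁ c₂ d₀ d₁ d₂ h1 h2
    have h3 : ((c₀ - d₀ : ℤ) : ℝ) + ((c₁ - d₁ : ℤ) : ℝ) * β + ((c₂ - d₂ : ℤ) : ℝ) * β ^ 2 = 0 := by
      push_cast
      linarith [h1, h2]
    obtain ⟨e1, e2, e3⟩ := indep123 hβ _ _ _ h3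
    omega
  have Fmul : ∀ a b c : ℤ, ((a : ℝ) + b * β + c * β ^ 2) * (3 * β ^ 2 - 2 * β - 1) =
      ((-a + 3*b + c : ℤ) : ℝ) + ((-2*a + 2*b + 4*c : ℤ) : ℝ) * β +
        ((3*a + b + 3*c : ℤ) : ℝ) * β ^ 2 := by
    intro a b c
    push_cast
    linear_combination ((3 * (b:ℝ) - 2 * c) + 3 * c * (β + 1)) * hβ
  set φf : ↥P → ZMod 22 × ZMod 2 := fun x =>
    (((9 * f₀ x - 3 * f₁ x + f₂ x : ℤ) : ZMod 22), ((f₁ x : ℤ) : ZMod 2)) with hφf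
  have hadd : ∀ x y : ↥P, φf (x + y) = φf x + φf y := by
    intro x y
    have h1 := hf x
    have h2 := hf y
    have h3 := hf (x + y)
    have h4 : ((x + y : ↥P) : ℝ) * (3 * β ^ 2 - 2 * β - 1) =
        ((f₀ x + f₀ y : ℤ) : ℝ) + ((f₁ x + f₁ y : ℤ) : ℝ) * β +
          ((f₂ x + f₂ y : ℤ) : ℝ) * β ^ 2 := by
      push_cast
      push_cast at h1 h2
      linarith [h1, h2]
    obtain ⟨e1, e2, e3⟩ := uniq _ _ _ _ _ _ _ h3 h4
    rw [hφf]
    simp only [Prod.mk_add_mk, Prod.mk.injEq]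
    constructor
    · rw [e1, e2, e3]; push_cast; ring
    · rw [e2]; push_cast; ring
  set φ : ↥P →+ ZMod 22 × ZMod 2 := AddMonoidHom.mk' φf hadd with hφ
  have hφap : ∀ x : ↥P, φ x = (((9 * f₀ x - 3 * f₁ x + f₂ x : ℤ) : ZMod 22),
      ((f₁ x : ℤ) : ZMod 2)) := fun x => rfl
  have hφ0 : ∀ x : ↥P, φ x = 0 ↔ (22 ∣ 9 * f₀ x - 3 * f₁ x + f₂ x) ∧ (2 ∣ f₁ x) := by
    intro x
    rw [hφap x, Prod.ext_iff]
    simp only [Prod.fst_zero, Prod.snd_zero]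
    rw [ZMod.intCast_zmod_eq_zero_iff_dvd, ZMod.intCast_zmod_eq_zero_iff_dvd]
    norm_num
  have hker : ∀ x : ↥P, φ x = 0 ↔ (x : ℝ) ∈ Z := by
    intro x
    rw [hφ0 x]
    constructor
    · rintro ⟨⟨k, hk⟩, ⟨m, hm⟩⟩
      have hM := Fmul (m - 2 * f₀ x + 5 * k) k (m - f₀ x + 2 * k)
      have e0 : -(m - 2 * f₀ x + 5 * k) + 3 * k + (m - f₀ x + 2 * k) = f₀ x := by omega
      have e1 : -2 * (m - 2 * f₀ x + 5 * k) + 2 * k + 4 * (m - f₀ x + 2 * k) = f₁ x := by omega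
      have e2 : 3 * (m - 2 * f₀ x + 5 * k) + k + 3 * (m - f₀ x + 2 * k) = f₂ x := by omega
      rw [e0, e1, e2] at hM
      have hxe : (x : ℝ) = ((m - 2 * f₀ x + 5 * k : ℤ) : ℝ) + ((k : ℤ) : ℝ) * β +
          ((m - f₀ x + 2 * k : ℤ) : ℝ) * β ^ 2 := by
        apply mul_right_cancel₀ hFne
        rw [hf x, ← hM]
      rw [← SetLike.mem_coe, hZ, Zchar hβ]
      exact ⟨_, _, _, hxe⟩
    · intro hxZ
      rw [← SetLike.mem_coe, hZ, Zchar hβ] at hxZ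
      obtain ⟨a, b, c, hx⟩ := hxZ
      have hM := Fmul a b c
      rw [← hx] at hM
      obtain ⟨e1, e2, e3⟩ := uniq _ _ _ _ _ _ _ (hf x) hM
      exact ⟨⟨b, by omega⟩, ⟨-a + b + 2 * c, by omega⟩⟩
  -- surjectivity
  have hx2P : β / (3 * β ^ 2 - 2 * β - 1) ∈ P := by
    rw [← SetLike.mem_coe, hP]
    have h := mem_pisotSet hβ 0 1 0
    simpa using h
  have hx3P : β ^ 2 / (3 * β ^ 2 - 2 * β - 1) ∈ P := by
    rw [← SetLike.mem_coe, hP]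
    have h := mem_pisotSet hβ 0 0 1
    simpa using h
  set x₂ : ↥P := ⟨_, hx2P⟩ with hx₂
  set x₃ : ↥P := ⟨_, hx3P⟩ with hx₃
  have hc2 : f₀ x₂ = 0 ∧ f₁ x₂ = 1 ∧ f₂ x₂ = 0 := by
    refine uniq (x₂ : ℝ) _ _ _ 0 1 0 (hf x₂) ?_
    rw [hx₂]
    push_cast
    rw [div_mul_cancel₀ _ hFne]; ring
  have hc3 : f₀ x₃ = 0 ∧ f₁ x₃ = 0 ∧ f₂ x₃ = 1 := by
    refine uniq (x₃ : ℝ) _ _ _ 0 0 1 (hf x₃) ?_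
    rw [hx₃]
    push_cast
    rw [div_mul_cancel₀ _ hFne]; ring
  have hφx₂ : φ x₂ = ((-3 : ZMod 22), (1 : ZMod 2)) := by
    rw [hφap, hc2.1, hc2.2.1, hc2.2.2]
    norm_num
  have hφx₃ : φ x₃ = ((1 : ZMod 22), (0 : ZMod 2)) := by
    rw [hφap, hc3.1, hc3.2.1, hc3.2.2]
    norm_num
  have hsurj : Function.Surjective φ := by
    rintro ⟨p, q⟩
    refine ⟨((p.val : ℤ) + 3 * (q.val : ℤ)) • x₃ + (q.val : ℤ) • x₂, ?_⟩
    rw [map_add, map_zsmul, map_zsmul, hφx₂, hφx₃]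
    have h22 : ((p.val : ℤ) : ZMod 22) = p := by
      push_cast
      rw [ZMod.natCast_val, ZMod.cast_id]
    have h2 : ((q.val : ℤ) : ZMod 2) = q := by
      push_cast
      rw [ZMod.natCast_val, ZMod.cast_id]
    ext
    · simp only [Prod.fst_add, zsmul_eq_mul, Prod.fst_mul, Prod.fst_intCast]
      push_cast [ZMod.cast_id]
      ring_nf
      exact ZMod.natCast_rightInverse p
    · simp only [Prod.snd_add, zsmul_eq_mul, Prod.snd_mul, Prod.snd_intCast]
      push_cast [ZMod.cast_id]
      ring_nf
      exact ZMod.natCast_rightInverse q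
  have hkerEq : Z.addSubgroupOf P = φ.ker := by
    ext x
    rw [AddSubgroup.mem_addSubgroupOf, AddMonoidHom.mem_ker, hker x]
  rw [hkerEq]
  have e := QuotientAddGroup.quotientKerEquivOfSurjective φ hsurj
  refine ⟨⟨e⟩, ?_⟩
  rw [Nat.card_congr e.toEquiv, Nat.card_prod, Nat.card_zmod, Nat.card_zmod]
end

section
/- Let β be the real root of x³ = x + 1 (the smallest Pisot number, a Pisot unit). Then the Pisot group A_β = P_β/ℤ[β] is cyclic of order 23, i.e. isomorphic to ℤ/23ℤ; here 23 = |D(β)| where D(β) = −23 is the discriminant of x³ − x − 1. -/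
open Filter Polynomial

namespace SmallestPisot

/-- Rational root lemma: `q³ - q` is never an odd integer for rational `q`. -/
lemma odd_cube_lemma (c : ℤ) (hc : Odd c) (q : ℚ) : q^3 - q ≠ (c:ℚ) := by
  intro h
  have hd0 : (q.den : ℚ) ≠ 0 := by exact_mod_cast q.den_ne_zero
  have h1 : q.num ^ 3 - q.num * q.den^2 = c * q.den^3 := by
    have h0 : ((q.num : ℚ)^3 - q.num * q.den^2) * q.den = (c * q.den^3) * q.den := by
      have hq := Rat.num_div_den q
      rw [← hq] at h
      field_simp at h
      linear_combination (q.den:ℚ) * h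
    exact_mod_cast mul_right_cancel₀ hd0 h0
  have hd : (q.den : ℤ) ∣ q.num ^ 3 := ⟨c * q.den^2 + q.num * q.den, by linarith⟩
  have hcop : Nat.Coprime q.num.natAbs q.den := q.reduced
  have hone : q.den = 1 := by
    have h3 : q.den ∣ q.num.natAbs ^ 3 := by
      have h2 : (q.den:ℤ) ∣ ((q.num^3).natAbs : ℤ) := by rwa [Int.dvd_natAbs]
      rw [Int.natAbs_pow] at h2
      exact_mod_cast h2
    exact Nat.Coprime.eq_one_of_dvd ((Nat.Coprime.pow_left 3 hcop).symm) h3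
  obtain ⟨m, hm⟩ : ∃ m, q.num = m := ⟨q.num, rfl⟩
  have hq : (q:ℚ) = (m:ℚ) := by rw [← hm, ← Rat.num_div_den q, hone]; simp
  rw [hq] at h
  have h2 : m^3 - m = c := by exact_mod_cast h
  have heven : Even (m^3 - m) := by
    rcases Int.even_or_odd m with ⟨k,hk⟩|⟨k,hk⟩
    · exact ⟨4*k^3 - k, by rw [hk]; ring⟩
    · exact ⟨4*k^3 + 6*k^2 + 2*k, by rw [hk]; ring⟩
  rw [h2] at heven
  exact (Int.not_odd_iff_even.mpr heven) hc

variable {β : ℝ}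

lemma one_lt (hβ : β ^ 3 = β + 1) : 1 < β := by
  nlinarith [sq_nonneg β, sq_nonneg (β-1), sq_nonneg (β+1), sq_nonneg (β^2-1), sq_nonneg (β^2+β)]

lemma gt76 (hβ : β ^ 3 = β + 1) : 7/6 < β := by
  have h1 := one_lt hβ
  by_contra h
  push_neg at h
  nlinarith [mul_nonneg (mul_nonneg (sub_nonneg.mpr h1.le) (sub_nonneg.mpr h)) (sub_nonneg.mpr h),
    sq_nonneg (β-1), mul_nonneg (sub_nonneg.mpr h1.le) (sub_nonneg.mpr h)]

lemma sqlt2 (hβ : β ^ 3 = β + 1) : β^2 < 2 := by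
  have h1 := one_lt hβ; nlinarith

lemma sq_sub_one_lt_one (hβ : β ^ 3 = β + 1) : β^2 - 1 < 1 := by
  have := sqlt2 hβ; linarith

lemma sq_sub_one_pos (hβ : β ^ 3 = β + 1) : 0 < β^2 - 1 := by
  have := one_lt hβ; nlinarith

lemma three_sq_sub_four_pos (hβ : β ^ 3 = β + 1) : 0 < 3*β^2 - 4 := by
  have := gt76 hβ; nlinarith

lemma beta_mul_inv (hβ : β ^ 3 = β + 1) : β * (β^2 - 1) = 1 := by linear_combination hβ

lemma norm_identity (hβ : β ^ 3 = β + 1) : (3*β^2-1) * ((-6*β^2+9*β+4)/23) = 1 := by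
  linear_combination ((27 - 18*β)/23) * hβ

lemma beta_not_rat (hβ : β ^ 3 = β + 1) (q : ℚ) : β ≠ (q:ℝ) := by
  intro h
  have hq : q^3 - q = (1:ℤ) := by
    have : (q:ℝ)^3 = q + 1 := by rw [← h]; exact hβ
    have : (q:ℝ)^3 - q = ((1:ℤ):ℝ) := by push_cast; linarith
    exact_mod_cast this
  exact odd_cube_lemma 1 ⟨0, by ring⟩ q hq

/-- Linear independence of `1, β, β²` over `ℚ`. -/
lemma indep (hβ : β ^ 3 = β + 1) (x y z : ℚ) (h : (x:ℝ) + y*β + z*β^2 = 0) :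
    x = 0 ∧ y = 0 ∧ z = 0 := by
  by_cases hz : z = 0
  · subst hz
    by_cases hy : y = 0
    · subst hy
      simp at h
      exact ⟨by exact_mod_cast h, rfl, rfl⟩
    · exfalso
      apply beta_not_rat hβ (-x/y)
      have hy' : (y:ℝ) ≠ 0 := by exact_mod_cast hy
      push_cast
      field_simp
      skip
      linear_combination h
  · exfalso
    have hz' : (z:ℝ) ≠ 0 := by exact_mod_cast hz
    set a : ℚ := -y/z with ha
    set b : ℚ := -x/z with hb
    have h2 : β^2 = (b:ℝ) + (a:ℝ)*β := by
      push_cast [ha, hb]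
      field_simp
      skip
      linear_combination h
    have h3 : ((a:ℝ)^2 + b - 1)*β = 1 - a*b := by
      have hb3 : β + 1 = β*β^2 := by rw [← hβ]; ring
      have : β + 1 = (b:ℝ)*β + a*((b:ℝ) + a*β) := by
        calc β + 1 = β*β^2 := hb3
        _ = β*((b:ℝ) + (a:ℝ)*β) := by rw [h2]
        _ = (b:ℝ)*β + a*β^2 := by ring
        _ = (b:ℝ)*β + a*((b:ℝ) + a*β) := by rw [h2]
      linear_combination -this
    by_cases hc : a^2 + b - 1 = 0
    · have hc' : ((a:ℝ)^2 + b - 1) = 0 := by exact_mod_cast hc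
      rw [hc'] at h3
      have hab : a*b = 1 := by
        have : (1:ℝ) - a*b = 0 := by linarith [h3]
        have : ((a*b : ℚ):ℝ) = ((1:ℚ):ℝ) := by push_cast; linarith
        exact_mod_cast this
      have hbb : b = 1 - a^2 := by linarith [hc]
      have : a^3 - a = ((-1:ℤ):ℚ) := by
        rw [hbb] at hab; push_cast; nlinarith [hab]
      exact odd_cube_lemma (-1) ⟨-1, by ring⟩ a this
    · apply beta_not_rat hβ ((1 - a*b)/(a^2+b-1))
      have hc' : ((a:ℝ)^2 + b - 1) ≠ 0 := by
        intro hh; apply hc; exact_mod_cast hh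
      push_cast
      field_simp
      linarith [h3]

end SmallestPisot

-- PART 2 (appended for testing)
namespace SmallestPisot
variable {β : ℝ}

/-- The "trace" sequence attached to coordinates `(x, y, z)`. -/
def tseq (x y z : ℝ) : ℕ → ℝ
  | 0 => 3*x+2*z
  | 1 => 2*y+3*z
  | 2 => 2*x+3*y+2*z
  | (n+3) => tseq x y z (n+1) + tseq x y z n

lemma tseq_add3 (x y z : ℝ) (n : ℕ) :
    tseq x y z (n+3) = tseq x y z (n+1) + tseq x y z n := rfl

lemma tseq_key (hβ : β ^ 3 = β + 1) (x y z : ℝ) : ∀ n : ℕ,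
    tseq x y z (n+2) + β * tseq x y z (n+1) + (β^2-1) * tseq x y z n
      = (3*β^2-1)*(x+y*β+z*β^2)*β^n := by
  intro n
  induction n with
  | zero =>
    show (2*x+3*y+2*z) + β * (2*y+3*z) + (β^2-1) * (3*x+2*z) = _
    linear_combination (-3*y - 3*z*β) * hβ
  | succ n ih =>
    rw [tseq_add3]
    have hpow : (3*β^2-1)*(x+y*β+z*β^2)*β^(n+1) = β * ((3*β^2-1)*(x+y*β+z*β^2)*β^n) := by
      ring
    rw [hpow, ← ih]
    linear_combination (-(tseq x y z n)) * hβ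
end SmallestPisot

-- PART 3
namespace SmallestPisot
variable {β : ℝ}

lemma tseq_tendsto (hβ : β ^ 3 = β + 1) (x y z : ℝ) :
    Tendsto (fun n : ℕ => tseq x y z n - (x+y*β+z*β^2)*β^n) atTop (nhds 0) := by
  set ξ := x+y*β+z*β^2 with hξ
  set s : ℕ → ℝ := fun n => tseq x y z n - ξ*β^n with hs
  have hrec : ∀ n, s (n+2) = -β * s (n+1) - (β^2-1) * s n := by
    intro n
    have hk := tseq_key hβ x y z n
    simp only [hs]
    have hp2 : β^(n+2) = β^2 * β^n := by ring
    have hp1 : β^(n+1) = β * β^n := by ring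
    rw [hp2, hp1]
    linear_combination hk
  set V : ℕ → ℝ := fun n => (s (n+1))^2 + β * (s (n+1)) * (s n) + (β^2-1) * (s n)^2 with hV
  have hVstep : ∀ n, V (n+1) = (β^2-1) * V n := by
    intro n
    simp only [hV]
    rw [hrec n]
    ring
  have hVn : ∀ n, V n = (β^2-1)^n * V 0 := by
    intro n
    induction n with
    | zero => simp
    | succ n ih => rw [hVstep n, ih]; ring
  have hV0 : Tendsto V atTop (nhds 0) := by
    have h1 : Tendsto (fun n : ℕ => (β^2-1)^n * V 0) atTop (nhds 0) := by
      have := (tendsto_pow_atTop_nhds_zero_of_lt_one (le_of_lt (sq_sub_one_pos hβ))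
        (sq_sub_one_lt_one hβ)).mul_const (V 0)
      simpa using this
    exact h1.congr (fun n => (hVn n).symm)
  have hVlow : ∀ n, (3*β^2-4) * (s n)^2 ≤ 4 * V n := by
    intro n
    simp only [hV]
    nlinarith [sq_nonneg (2 * s (n+1) + β * s n)]
  have hsq : Tendsto (fun n => (s n)^2) atTop (nhds 0) := by
    have hc : 0 < 3*β^2-4 := three_sq_sub_four_pos hβ
    have hup : ∀ n, (s n)^2 ≤ (4/(3*β^2-4)) * V n := by
      intro n
      rw [div_mul_eq_mul_div, le_div_iff₀ hc]
      linarith [hVlow n]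
    have hVconst : Tendsto (fun n => (4/(3*β^2-4)) * V n) atTop (nhds 0) := by
      have := hV0.const_mul (4/(3*β^2-4))
      simpa using this
    exact squeeze_zero (fun n => sq_nonneg _) hup hVconst
  have habs : Tendsto (fun n => |s n|) atTop (nhds 0) := by
    have hcont : Tendsto (fun n => Real.sqrt ((s n)^2)) atTop (nhds (Real.sqrt 0)) :=
      (Real.continuous_sqrt.continuousAt).tendsto.comp hsq
    simpa [Real.sqrt_sq_eq_abs] using hcont
  exact (tendsto_zero_iff_abs_tendsto_zero s).mpr habs

/-- nearest integer distance is at most distance to any integer -/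
lemma nearestIntDist_le (x : ℝ) (m : ℤ) : nearestIntDist x ≤ |x - m| := by
  unfold nearestIntDist
  rcases eq_or_ne m (round x) with h|h
  · rw [h]
  · have h1 := abs_sub_round x
    have h2 : (1:ℝ) ≤ |(m : ℝ) - round x| := by
      rw [← Int.cast_sub, ← Int.cast_abs]
      exact_mod_cast Int.one_le_abs (sub_ne_zero.mpr h)
    have h3 := abs_sub_abs_le_abs_sub ((m:ℝ) - round x) (x - round x)
    have h4 : |(m:ℝ) - round x - (x - round x)| = |x - m| := by rw [abs_sub_comm]; ring_nf
    nlinarith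

end SmallestPisot

-- PART 4
namespace SmallestPisot
variable {β : ℝ}

/-- A rational is integral. -/
def IntQ (q : ℚ) : Prop := ∃ m : ℤ, q = (m:ℚ)

lemma IntQ.add {a b : ℚ} (ha : IntQ a) (hb : IntQ b) : IntQ (a+b) := by
  obtain ⟨m, hm⟩ := ha; obtain ⟨n, hn⟩ := hb; exact ⟨m+n, by rw [hm, hn]; push_cast; ring⟩

lemma IntQ.sub {a b : ℚ} (ha : IntQ a) (hb : IntQ b) : IntQ (a-b) := by
  obtain ⟨m, hm⟩ := ha; obtain ⟨n, hn⟩ := hb; exact ⟨m-n, by rw [hm, hn]; push_cast; ring⟩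

lemma IntQ.num_add {a b : ℚ} (ha : IntQ a) (hb : IntQ b) : (a+b).num = a.num + b.num := by
  obtain ⟨m, hm⟩ := ha; obtain ⟨n, hn⟩ := hb
  rw [hm, hn, ← Int.cast_add, Rat.num_intCast]
  simp [hm, hn]

lemma IntQ.cast_num {a : ℚ} (ha : IntQ a) : ((a.num : ℚ)) = a := by
  obtain ⟨m, hm⟩ := ha; simp [hm]

/-- The integer sequence determined by three initial values. -/
def iseq (m₁ m₂ m₃ : ℤ) : ℕ → ℤ
  | 0 => m₁
  | 1 => m₂
  | 2 => m₃
  | (n+3) => iseq m₁ m₂ m₃ (n+1) + iseq m₁ m₂ m₃ n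

lemma tseq_eq_iseq (x y z : ℝ) (m₁ m₂ m₃ : ℤ)
    (h1 : 3*x+2*z = (m₁:ℝ)) (h2 : 2*y+3*z = (m₂:ℝ)) (h3 : 2*x+3*y+2*z = (m₃:ℝ)) :
    ∀ n, tseq x y z n = ((iseq m₁ m₂ m₃ n : ℤ) : ℝ) := by
  have key : ∀ n, tseq x y z n = ((iseq m₁ m₂ m₃ n : ℤ) : ℝ)
      ∧ tseq x y z (n+1) = ((iseq m₁ m₂ m₃ (n+1) : ℤ) : ℝ)
      ∧ tseq x y z (n+2) = ((iseq m₁ m₂ m₃ (n+2) : ℤ) : ℝ) := by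
    intro n
    induction n with
    | zero => exact ⟨h1, h2, h3⟩
    | succ n ih =>
      obtain ⟨ha, hb, hc⟩ := ih
      refine ⟨hb, hc, ?_⟩
      rw [tseq_add3]
      show tseq x y z (n+1) + tseq x y z n = ((iseq m₁ m₂ m₃ (n+3) : ℤ) : ℝ)
      have : iseq m₁ m₂ m₃ (n+3) = iseq m₁ m₂ m₃ (n+1) + iseq m₁ m₂ m₃ n := rfl
      rw [this, ha, hb]
      push_cast
      ring
  exact fun n => (key n).1

/-- Lemma B: sufficient condition to lie in the Pisot set. -/
lemma mem_pisot_of (hβ : β ^ 3 = β + 1) (x y z : ℚ)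
    (h1 : IntQ (3*x+2*z)) (h2 : IntQ (2*y+3*z)) (h3 : IntQ (2*x+3*y+2*z)) :
    ((x:ℝ) + (y:ℝ)*β + (z:ℝ)*β^2) ∈ PisotSet β := by
  obtain ⟨m₁, hm₁⟩ := h1; obtain ⟨m₂, hm₂⟩ := h2; obtain ⟨m₃, hm₃⟩ := h3
  have e1 : 3*(x:ℝ)+2*(z:ℝ) = (m₁:ℝ) := by exact_mod_cast congrArg (Rat.cast : ℚ → ℝ) hm₁
  have e2 : 2*(y:ℝ)+3*(z:ℝ) = (m₂:ℝ) := by exact_mod_cast congrArg (Rat.cast : ℚ → ℝ) hm₂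
  have e3 : 2*(x:ℝ)+3*(y:ℝ)+2*(z:ℝ) = (m₃:ℝ) := by exact_mod_cast congrArg (Rat.cast : ℚ → ℝ) hm₃
  have hiq := tseq_eq_iseq (x:ℝ) y z m₁ m₂ m₃ e1 e2 e3
  have hts := tseq_tendsto hβ (x:ℝ) y z
  unfold PisotSet
  simp only [Set.mem_setOf_eq]
  apply squeeze_zero (fun n => abs_nonneg _)
    (g := fun n => |tseq (x:ℝ) y z n - ((x:ℝ)+(y:ℝ)*β+(z:ℝ)*β^2)*β^n|)
  · intro n
    have := nearestIntDist_le (((x:ℝ)+(y:ℝ)*β+(z:ℝ)*β^2)*β^n) (iseq m₁ m₂ m₃ n)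
    rw [← hiq n] at this
    calc nearestIntDist (((x:ℝ)+(y:ℝ)*β+(z:ℝ)*β^2)*β^n)
        ≤ |((x:ℝ)+(y:ℝ)*β+(z:ℝ)*β^2)*β^n - tseq (x:ℝ) y z n| := this
      _ = |tseq (x:ℝ) y z n - ((x:ℝ)+(y:ℝ)*β+(z:ℝ)*β^2)*β^n| := abs_sub_comm _ _
  · exact ((tendsto_zero_iff_abs_tendsto_zero _).mp hts)

end SmallestPisot

-- PART 5
namespace SmallestPisot
variable {β : ℝ}

lemma IntQ.zsmul (k : ℤ) {a : ℚ} (ha : IntQ a) : IntQ ((k:ℚ)*a) := by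
  obtain ⟨m, hm⟩ := ha; exact ⟨k*m, by rw [hm]; push_cast; ring⟩

lemma intq_den_mul (q : ℚ) (k : ℕ) (h : q.den ∣ k) : IntQ ((k:ℚ) * q) := by
  obtain ⟨c, hc⟩ := h
  refine ⟨(c:ℤ) * q.num, ?_⟩
  subst hc
  have hden : (q.den:ℚ) ≠ 0 := by exact_mod_cast q.den_ne_zero
  have key : (q.den:ℚ) * q = q.num := by
    rw [mul_comm, Rat.mul_den_eq_num]
  push_cast
  linear_combination (c:ℚ) * key

lemma int_tendsto_eventually_zero (a : ℕ → ℤ)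
    (h : Tendsto (fun n => (a n : ℝ)) atTop (nhds 0)) : ∃ N, ∀ n, N ≤ n → a n = 0 := by
  obtain ⟨N, hN⟩ := Metric.tendsto_atTop.mp h 1 one_pos
  refine ⟨N, fun n hn => ?_⟩
  have h1 := hN n hn
  rw [Real.dist_eq, sub_zero] at h1
  have h2 : |a n| < 1 := by exact_mod_cast h1
  rw [abs_lt] at h2
  omega

/-- Membership in the rational span of `1, β, β²`. -/
def InQ (β ξ : ℝ) : Prop := ∃ x y z : ℚ, ξ = (x:ℝ) + (y:ℝ)*β + (z:ℝ)*β^2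

lemma InQ.mul (hβ : β ^ 3 = β + 1) {u v : ℝ} (hu : InQ β u) (hv : InQ β v) :
    InQ β (u*v) := by
  obtain ⟨a, b, c, rfl⟩ := hu
  obtain ⟨d, e, f, rfl⟩ := hv
  refine ⟨a*d+b*f+c*e, a*e+b*d+b*f+c*e+c*f, a*f+b*e+c*d+c*f, ?_⟩
  push_cast
  linear_combination ((b:ℝ)*f+(c:ℝ)*e)*hβ + (c:ℝ)*f*β*hβ

lemma InQ.pow (hβ : β ^ 3 = β + 1) {u : ℝ} (hu : InQ β u) : ∀ n : ℕ, InQ β (u^n) := by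
  intro n
  induction n with
  | zero => exact ⟨1, 0, 0, by norm_num⟩
  | succ n ih => rw [pow_succ]; exact ih.mul hβ hu

/-- The rational trace sequence. -/
def tseqQ (x y z : ℚ) : ℕ → ℚ
  | 0 => 3*x+2*z
  | 1 => 2*y+3*z
  | 2 => 2*x+3*y+2*z
  | (n+3) => tseqQ x y z (n+1) + tseqQ x y z n

lemma tseqQ_add3 (x y z : ℚ) (n : ℕ) :
    tseqQ x y z (n+3) = tseqQ x y z (n+1) + tseqQ x y z n := rfl

lemma tseq_cast (x y z : ℚ) : ∀ n, tseq (x:ℝ) (y:ℝ) (z:ℝ) n = ((tseqQ x y z n : ℚ) : ℝ) := by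
  have key : ∀ n, (tseq (x:ℝ) (y:ℝ) (z:ℝ) n = ((tseqQ x y z n : ℚ) : ℝ))
      ∧ (tseq (x:ℝ) (y:ℝ) (z:ℝ) (n+1) = ((tseqQ x y z (n+1) : ℚ) : ℝ))
      ∧ (tseq (x:ℝ) (y:ℝ) (z:ℝ) (n+2) = ((tseqQ x y z (n+2) : ℚ) : ℝ)) := by
    intro n
    induction n with
    | zero =>
      refine ⟨?_, ?_, ?_⟩ <;> · show _ = _ ; push_cast [tseqQ, tseq] ; ring
    | succ n ih =>
      obtain ⟨ha, hb, hc⟩ := ih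
      refine ⟨hb, hc, ?_⟩
      rw [tseq_add3, tseqQ_add3, ha, hb]
      push_cast
      ring
  exact fun n => (key n).1

/-- Lemma A: the hard (Pisot) direction. -/
lemma pisot_to_coords (hβ : β ^ 3 = β + 1) {ξ : ℝ} (h : ξ ∈ PisotSet β) :
    ∃ x y z : ℚ, ξ = (x:ℝ) + (y:ℝ)*β + (z:ℝ)*β^2 ∧
      IntQ (3*x+2*z) ∧ IntQ (2*y+3*z) ∧ IntQ (2*x+3*y+2*z) := by
  have hb1 : 1 < β := one_lt hβ
  have hb0 : 0 < β := lt_trans one_pos hb1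
  set a : ℕ → ℤ := fun n => round (ξ * β^n) with ha
  set ε : ℕ → ℝ := fun n => ξ*β^n - a n with hεdef
  have hε : Tendsto ε atTop (nhds 0) := by
    rw [tendsto_zero_iff_abs_tendsto_zero]
    exact h
  -- eventually the rounds satisfy the recurrence
  have hbtend : Tendsto (fun n => ((a (n+3) - a (n+1) - a n : ℤ) : ℝ)) atTop (nhds 0) := by
    have h1 : Tendsto (fun n => ε (n+1) + ε n - ε (n+3)) atTop (nhds 0) := by
      have t1 := hε.comp (tendsto_add_atTop_nat 1)
      have t3 := hε.comp (tendsto_add_atTop_nat 3)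
      have := (t1.add hε).sub t3
      simpa using this
    apply h1.congr
    intro n
    have p3 : β^(n+3) = β^n * β^3 := by rw [pow_add]
    have p1 : β^(n+1) = β^n * β := by rw [pow_add]; norm_num
    simp only [hεdef]
    push_cast
    rw [p3, p1, hβ]
    ring
  obtain ⟨N, hN⟩ := int_tendsto_eventually_zero _ hbtend
  have hrec : ∀ n, N ≤ n → a (n+3) = a (n+1) + a n := by
    intro n hn
    have := hN n hn
    omega
  -- the geometric sequence q
  set q : ℕ → ℝ := fun k => (a (k+N+2) : ℝ) + β * a (k+N+1) + (β^2-1) * a (k+N) with hq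
  have hqstep : ∀ k, q (k+1) = β * q k := by
    intro k
    have hr := hrec (k+N) (Nat.le_add_left N k)
    show (a (k+1+N+2) : ℝ) + β * a (k+1+N+1) + (β^2-1) * a (k+1+N) = β * q k
    have e3 : k+1+N+2 = k+N+3 := by omega
    have e2 : k+1+N+1 = k+N+2 := by omega
    have e1 : k+1+N = k+N+1 := by omega
    rw [e3, e2, e1, hr]
    simp only [hq]
    push_cast
    linear_combination (-(a (k+N) : ℝ)) * hβ
  have hqpow : ∀ k, q k = β^k * q 0 := by
    intro k
    induction k with
    | zero => simp
    | succ k ih => rw [hqstep k, ih]; ring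
  set c : ℝ := ξ*(3*β^2-1)*β^N with hc
  have hδ : Tendsto (fun k => q k - c * β^k) atTop (nhds 0) := by
    have h1 : Tendsto (fun k => -(ε (k+N+2) + β * ε (k+N+1) + (β^2-1) * ε (k+N))) atTop (nhds 0) := by
      have t2 : Tendsto (fun k : ℕ => ε (k+N+2)) atTop (nhds 0) := by
        simpa [Function.comp_def, add_assoc] using hε.comp (tendsto_add_atTop_nat (N+2))
      have t1 : Tendsto (fun k : ℕ => ε (k+N+1)) atTop (nhds 0) := by
        simpa [Function.comp_def, add_assoc] using hε.comp (tendsto_add_atTop_nat (N+1))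
      have t0 : Tendsto (fun k : ℕ => ε (k+N)) atTop (nhds 0) := by
        simpa [Function.comp_def, add_assoc] using hε.comp (tendsto_add_atTop_nat N)
      have := ((t2.add (t1.const_mul β)).add (t0.const_mul (β^2-1))).neg
      simpa using this
    apply h1.congr
    intro k
    simp only [hεdef, hq, hc]
    have p2 : β^(k+N+2) = β^k * β^N * β^2 := by rw [pow_add, pow_add]
    have p1 : β^(k+N+1) = β^k * β^N * β := by rw [pow_add, pow_add]; norm_num
    have p0 : β^(k+N) = β^k * β^N := by rw [pow_add]
    push_cast
    rw [p2, p1, p0]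
    ring
  have hq0 : q 0 = c := by
    have hle : ∀ k, |q 0 - c| ≤ |q k - c*β^k| := by
      intro k
      rw [hqpow k]
      have h1 : (1:ℝ) ≤ β^k := one_le_pow₀ hb1.le
      calc |q 0 - c| = 1 * |q 0 - c| := by ring
        _ ≤ β^k * |q 0 - c| := by
            exact mul_le_mul_of_nonneg_right h1 (abs_nonneg _)
        _ = |β^k * (q 0 - c)| := by
            rw [abs_mul, abs_of_nonneg (pow_nonneg hb0.le k)]
        _ = |β^k * q 0 - c*β^k| := by ring_nf
    have h0 : |q 0 - c| ≤ |(0:ℝ)| := ge_of_tendsto' hδ.abs hle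
    rw [abs_zero] at h0
    have h00 : |q 0 - c| = 0 := le_antisymm h0 (abs_nonneg _)
    have := abs_eq_zero.mp h00
    linarith [this]
  -- express ξ with rational coordinates
  have hξc : ξ = c * ((β^2-1)^N * ((-6*β^2+9*β+4)/23)) := by
    have hb : β * (β^2-1) = 1 := beta_mul_inv hβ
    have hpow : β^N * (β^2-1)^N = 1 := by rw [← mul_pow, hb, one_pow]
    have hn := norm_identity hβ
    calc ξ = ξ * ((3*β^2-1) * ((-6*β^2+9*β+4)/23)) * (β^N * (β^2-1)^N) := by
          rw [hn, hpow]; ring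
      _ = ξ*(3*β^2-1)*β^N * ((β^2-1)^N * ((-6*β^2+9*β+4)/23)) := by ring
      _ = c * ((β^2-1)^N * ((-6*β^2+9*β+4)/23)) := by rw [hc]
  have hInQ : InQ β ξ := by
    rw [hξc]
    have hc1 : InQ β c := by
      rw [← hq0]
      refine ⟨((a (0+N+2) - a (0+N) : ℤ) : ℚ), ((a (0+N+1) : ℤ) : ℚ), ((a (0+N) : ℤ) : ℚ), ?_⟩
      simp only [hq]
      push_cast
      ring
    have hc2 : InQ β ((β^2-1)^N) := InQ.pow hβ ⟨-1, 0, 1, by push_cast; ring⟩ N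
    have hc3 : InQ β ((-6*β^2+9*β+4)/23) := ⟨4/23, 9/23, -6/23, by push_cast; ring⟩
    exact hc1.mul hβ (hc2.mul hβ hc3)
  obtain ⟨x, y, z, hxyz⟩ := hInQ
  refine ⟨x, y, z, hxyz, ?_⟩
  -- integrality of the trace sequence
  have hcast : ∀ n, tseq (x:ℝ) (y:ℝ) (z:ℝ) n = ((tseqQ x y z n : ℚ):ℝ) := tseq_cast x y z
  have hts := tseq_tendsto hβ (x:ℝ) (y:ℝ) (z:ℝ)
  have hta : Tendsto (fun n => ((tseqQ x y z n : ℚ):ℝ) - (a n : ℝ)) atTop (nhds 0) := by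
    have hsum := hts.add hε
    rw [add_zero] at hsum
    apply hsum.congr
    intro n
    simp only [hεdef]
    rw [hcast n, ← hxyz]
    ring
  set D : ℕ := x.den * y.den * z.den with hD
  have hDpos : 0 < D := by
    rw [hD]; exact Nat.mul_pos (Nat.mul_pos x.pos y.pos) z.pos
  have hdx : IntQ ((D:ℚ) * x) := intq_den_mul x D ⟨y.den*z.den, by rw [hD]; ring⟩
  have hdy : IntQ ((D:ℚ) * y) := intq_den_mul y D ⟨x.den*z.den, by rw [hD]; ring⟩
  have hdz : IntQ ((D:ℚ) * z) := intq_den_mul z D ⟨x.den*y.den, by rw [hD]; ring⟩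
  have hDint : ∀ n, IntQ ((D:ℚ) * tseqQ x y z n) := by
    have key : ∀ n, IntQ ((D:ℚ) * tseqQ x y z n) ∧ IntQ ((D:ℚ) * tseqQ x y z (n+1))
        ∧ IntQ ((D:ℚ) * tseqQ x y z (n+2)) := by
      intro n
      induction n with
      | zero =>
        refine ⟨?_, ?_, ?_⟩
        · have e : (D:ℚ) * tseqQ x y z 0 = ((3:ℤ):ℚ)*((D:ℚ)*x) + ((2:ℤ):ℚ)*((D:ℚ)*z) := by
            show (D:ℚ) * (3*x+2*z) = _
            push_cast; ring
          rw [e]; exact (IntQ.zsmul 3 hdx).add (IntQ.zsmul 2 hdz)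
        · have e : (D:ℚ) * tseqQ x y z 1 = ((2:ℤ):ℚ)*((D:ℚ)*y) + ((3:ℤ):ℚ)*((D:ℚ)*z) := by
            show (D:ℚ) * (2*y+3*z) = _
            push_cast; ring
          rw [e]; exact (IntQ.zsmul 2 hdy).add (IntQ.zsmul 3 hdz)
        · have e : (D:ℚ) * tseqQ x y z 2
              = ((2:ℤ):ℚ)*((D:ℚ)*x) + (((3:ℤ):ℚ)*((D:ℚ)*y) + ((2:ℤ):ℚ)*((D:ℚ)*z)) := by
            show (D:ℚ) * (2*x+3*y+2*z) = _
            push_cast; ring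
          rw [e]; exact (IntQ.zsmul 2 hdx).add ((IntQ.zsmul 3 hdy).add (IntQ.zsmul 2 hdz))
      | succ n ih =>
        obtain ⟨ha', hb', hc'⟩ := ih
        refine ⟨hb', hc', ?_⟩
        have e : (D:ℚ) * tseqQ x y z (n+3)
            = (D:ℚ) * tseqQ x y z (n+1) + (D:ℚ) * tseqQ x y z n := by
          rw [tseqQ_add3]; ring
        rw [e]; exact hb'.add ha'
    exact fun n => (key n).1
  have hjn : ∀ n, ((((D:ℚ) * tseqQ x y z n).num : ℤ):ℚ) = (D:ℚ) * tseqQ x y z n :=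
    fun n => (hDint n).cast_num
  have hw : Tendsto (fun n => ((((D:ℚ) * tseqQ x y z n).num - D * a n : ℤ):ℝ)) atTop (nhds 0) := by
    have h1 := hta.const_mul (D:ℝ)
    rw [mul_zero] at h1
    apply h1.congr
    intro n
    have h2 : ((((D:ℚ) * tseqQ x y z n).num : ℤ):ℝ) = (D:ℝ) * ((tseqQ x y z n : ℚ):ℝ) := by
      have := congrArg (fun r : ℚ => (r:ℝ)) (hjn n)
      push_cast at this ⊢
      linarith [this]
    push_cast
    rw [h2]
    push_cast
    ring
  obtain ⟨N₂, hN₂⟩ := int_tendsto_eventually_zero _ hw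
  have hevq : ∀ n, N₂ ≤ n → IntQ (tseqQ x y z n) := by
    intro n hn
    refine ⟨a n, ?_⟩
    have hDq : ((D:ℚ)) ≠ 0 := by
      exact_mod_cast hDpos.ne'
    have h0 : ((D:ℚ) * tseqQ x y z n).num = D * a n := by
      have := hN₂ n hn; omega
    have h1 : (D:ℚ) * tseqQ x y z n = (D:ℚ) * ((a n : ℤ):ℚ) := by
      rw [← hjn n, h0]; push_cast; ring
    exact mul_left_cancel₀ hDq h1
  have hall : ∀ d n, N₂ ≤ n + d → IntQ (tseqQ x y z n) := by
    intro d
    induction d with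
    | zero => intro n hn; exact hevq n (by omega)
    | succ d ih =>
      intro n hn
      have h3 : IntQ (tseqQ x y z (n+3)) := ih (n+3) (by omega)
      have h1 : IntQ (tseqQ x y z (n+1)) := ih (n+1) (by omega)
      have e : tseqQ x y z n = tseqQ x y z (n+3) - tseqQ x y z (n+1) := by
        rw [tseqQ_add3]; ring
      rw [e]; exact h3.sub h1
  exact ⟨hall N₂ 0 (by omega), hall N₂ 1 (by omega), hall N₂ 2 (by omega)⟩

end SmallestPisot


-- PART 6
namespace SmallestPisot
variable {β : ℝ}

lemma mem_closure_iff (hβ : β ^ 3 = β + 1) (r : ℝ) :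
    r ∈ Subring.closure ({β} : Set ℝ) ↔ ∃ a b c : ℤ, r = (a:ℝ) + (b:ℝ)*β + (c:ℝ)*β^2 := by
  constructor
  · intro h
    have hle : Subring.closure ({β} : Set ℝ) ≤
        { carrier := {ξ : ℝ | ∃ a b c : ℤ, ξ = (a:ℝ) + (b:ℝ)*β + (c:ℝ)*β^2}
          zero_mem' := ⟨0,0,0, by norm_num⟩
          one_mem' := ⟨1,0,0, by norm_num⟩
          add_mem' := by
            rintro u v ⟨a,b,c,rfl⟩ ⟨d,e,f,rfl⟩
            exact ⟨a+d, b+e, c+f, by push_cast; ring⟩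
          neg_mem' := by
            rintro u ⟨a,b,c,rfl⟩
            exact ⟨-a, -b, -c, by push_cast; ring⟩
          mul_mem' := by
            rintro u v ⟨a,b,c,rfl⟩ ⟨d,e,f,rfl⟩
            refine ⟨a*d+b*f+c*e, a*e+b*d+b*f+c*e+c*f, a*f+b*e+c*d+c*f, ?_⟩
            push_cast
            linear_combination ((b:ℝ)*(f:ℝ)+(c:ℝ)*(e:ℝ))*hβ + (c:ℝ)*(f:ℝ)*β*hβ } := by
      apply Subring.closure_le.mpr
      intro s hs
      rw [Set.mem_singleton_iff] at hs
      exact ⟨0, 1, 0, by rw [hs]; push_cast; ring⟩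
    exact hle h
  · rintro ⟨a,b,c,rfl⟩
    have hb : β ∈ Subring.closure ({β} : Set ℝ) := Subring.subset_closure rfl
    exact add_mem (add_mem (intCast_mem _ a)
      (mul_mem (intCast_mem _ b) hb))
      (mul_mem (intCast_mem _ c) (pow_mem hb 2))

end SmallestPisot

open SmallestPisot

/-- for the smallest Pisot number `β` (the real root of `x³ = x + 1`),
the Pisot group `A_β = P_β/ℤ[β]` is cyclic of order `23 = |D(β)|`, i.e. isomorphic
to `ℤ/23ℤ`. -/
theorem smallest_pisot_group (β : ℝ) (hβ : β ^ 3 = β + 1)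
    (P : AddSubgroup ℝ) (hP : (P : Set ℝ) = PisotSet β)
    (Z : AddSubgroup ℝ) (hZ : (Z : Set ℝ) = (Subring.closure ({β} : Set ℝ) : Set ℝ)) :
    Nonempty ((↥P ⧸ Z.addSubgroupOf P) ≃+ ZMod 23) ∧
    Nat.card (↥P ⧸ Z.addSubgroupOf P) = 23 := by
  classical
  have hmemP : ∀ p : ↥P, ((p:ℝ)) ∈ PisotSet β := by
    intro p
    have : ((p:ℝ)) ∈ (P : Set ℝ) := p.2
    rwa [hP] at this
  have key : ∀ p : ↥P, ∃ v : ℚ × ℚ × ℚ, ((p:ℝ) = (v.1:ℝ) + (v.2.1:ℝ)*β + (v.2.2:ℝ)*β^2 ∧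
      IntQ (3*v.1+2*v.2.2) ∧ IntQ (2*v.2.1+3*v.2.2) ∧ IntQ (2*v.1+3*v.2.1+2*v.2.2)) := by
    intro p
    obtain ⟨x,y,z,h1,h2,h3,h4⟩ := pisot_to_coords hβ (hmemP p)
    exact ⟨(x,y,z), h1, h2, h3, h4⟩
  let co : ↥P → ℚ × ℚ × ℚ := fun p => (key p).choose
  have hco1 : ∀ p : ↥P, (p:ℝ) = ((co p).1:ℝ) + ((co p).2.1:ℝ)*β + ((co p).2.2:ℝ)*β^2 :=
    fun p => (key p).choose_spec.1
  have hcoI : ∀ p : ↥P, IntQ (3*(co p).1+2*(co p).2.2) ∧ IntQ (2*(co p).2.1+3*(co p).2.2)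
      ∧ IntQ (2*(co p).1+3*(co p).2.1+2*(co p).2.2) :=
    fun p => (key p).choose_spec.2
  have uniq : ∀ (p : ↥P) (v : ℚ × ℚ × ℚ),
      ((p:ℝ) = (v.1:ℝ) + (v.2.1:ℝ)*β + (v.2.2:ℝ)*β^2) → co p = v := by
    intro p v hv
    have h1 := hco1 p
    have hz : (((co p).1 - v.1 : ℚ):ℝ) + (((co p).2.1 - v.2.1 : ℚ):ℝ)*β
        + (((co p).2.2 - v.2.2 : ℚ):ℝ)*β^2 = 0 := by
      push_cast
      rw [hv] at h1
      linarith [h1]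
    obtain ⟨e1, e2, e3⟩ := indep hβ _ _ _ hz
    have f1 : (co p).1 = v.1 := by linarith [sub_eq_zero.mp (by linarith [e1] : ((co p).1 - v.1 : ℚ) = 0)]
    have f2 : (co p).2.1 = v.2.1 := by linarith [sub_eq_zero.mp (by linarith [e2] : ((co p).2.1 - v.2.1 : ℚ) = 0)]
    have f3 : (co p).2.2 = v.2.2 := by linarith [sub_eq_zero.mp (by linarith [e3] : ((co p).2.2 - v.2.2 : ℚ) = 0)]
    exact Prod.ext f1 (Prod.ext f2 f3)
  have hcoadd : ∀ p q : ↥P, co (p+q) = co p + co q := by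
    intro p q
    apply uniq
    have h1 := hco1 p
    have h2 := hco1 q
    have : ((p+q : ↥P):ℝ) = (p:ℝ) + (q:ℝ) := rfl
    rw [this, h1, h2]
    simp only [Prod.fst_add, Prod.snd_add]
    push_cast
    ring
  -- the homomorphism to ZMod 23
  let Φ : ↥P →+ ZMod 23 := AddMonoidHom.mk'
    (fun p => (((3*(3*(co p).1+2*(co p).2.2).num + (2*(co p).2.1+3*(co p).2.2).num
      + 7*(2*(co p).1+3*(co p).2.1+2*(co p).2.2).num : ℤ)) : ZMod 23))
    (by
      intro p q
      obtain ⟨i1p, i2p, i3p⟩ := hcoI p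
      obtain ⟨i1q, i2q, i3q⟩ := hcoI q
      have hm1 : (3*(co (p+q)).1+2*(co (p+q)).2.2).num
          = (3*(co p).1+2*(co p).2.2).num + (3*(co q).1+2*(co q).2.2).num := by
        rw [show (3*(co (p+q)).1+2*(co (p+q)).2.2 : ℚ)
            = (3*(co p).1+2*(co p).2.2) + (3*(co q).1+2*(co q).2.2) from by
          rw [hcoadd]; simp only [Prod.fst_add, Prod.snd_add]; ring]
        exact IntQ.num_add i1p i1q
      have hm2 : (2*(co (p+q)).2.1+3*(co (p+q)).2.2).num
          = (2*(co p).2.1+3*(co p).2.2).num + (2*(co q).2.1+3*(co q).2.2).num := by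
        rw [show (2*(co (p+q)).2.1+3*(co (p+q)).2.2 : ℚ)
            = (2*(co p).2.1+3*(co p).2.2) + (2*(co q).2.1+3*(co q).2.2) from by
          rw [hcoadd]; simp only [Prod.fst_add, Prod.snd_add]; ring]
        exact IntQ.num_add i2p i2q
      have hm3 : (2*(co (p+q)).1+3*(co (p+q)).2.1+2*(co (p+q)).2.2).num
          = (2*(co p).1+3*(co p).2.1+2*(co p).2.2).num
            + (2*(co q).1+3*(co q).2.1+2*(co q).2.2).num := by
        rw [show (2*(co (p+q)).1+3*(co (p+q)).2.1+2*(co (p+q)).2.2 : ℚ)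
            = (2*(co p).1+3*(co p).2.1+2*(co p).2.2)
              + (2*(co q).1+3*(co q).2.1+2*(co q).2.2) from by
          rw [hcoadd]; simp only [Prod.fst_add, Prod.snd_add]; ring]
        exact IntQ.num_add i3p i3q
      rw [hm1, hm2, hm3]
      push_cast
      ring)
  -- surjectivity
  have hp0mem : ((40/23 : ℚ):ℝ) + ((-48/23:ℚ):ℝ)*β + ((32/23:ℚ):ℝ)*β^2 ∈ P := by
    rw [← SetLike.mem_coe, hP]
    exact mem_pisot_of hβ (40/23) (-48/23) (32/23)
      ⟨8, by norm_num⟩ ⟨0, by norm_num⟩ ⟨0, by norm_num⟩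
  set p₀ : ↥P := ⟨_, hp0mem⟩ with hp₀
  have hco0 : co p₀ = (40/23, -48/23, 32/23) := uniq p₀ _ rfl
  have hΦ0 : Φ p₀ = 1 := by
    show (((3*(3*(co p₀).1+2*(co p₀).2.2).num + (2*(co p₀).2.1+3*(co p₀).2.2).num
      + 7*(2*(co p₀).1+3*(co p₀).2.1+2*(co p₀).2.2).num : ℤ)) : ZMod 23) = 1
    rw [hco0]
    have e1 : (3*(40/23:ℚ)+2*(32/23:ℚ)) = ((8:ℤ):ℚ) := by norm_num
    have e2 : (2*(-48/23:ℚ)+3*(32/23:ℚ)) = ((0:ℤ):ℚ) := by norm_num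
    have e3 : (2*(40/23:ℚ)+3*(-48/23:ℚ)+2*(32/23:ℚ)) = ((0:ℤ):ℚ) := by norm_num
    show (((3*((3*(40/23:ℚ)+2*(32/23:ℚ)).num) + ((2*(-48/23:ℚ)+3*(32/23:ℚ)).num)
      + 7*((2*(40/23:ℚ)+3*(-48/23:ℚ)+2*(32/23:ℚ)).num) : ℤ)) : ZMod 23) = 1
    rw [e1, e2, e3]
    simp only [Rat.num_intCast]
    decide
  have hsurj : Function.Surjective Φ := by
    intro t
    obtain ⟨k, rfl⟩ := ZMod.intCast_surjective t
    refine ⟨k • p₀, ?_⟩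
    rw [map_zsmul, hΦ0]
    simp
  -- kernel
  have hker : Φ.ker = Z.addSubgroupOf P := by
    ext p
    rw [AddMonoidHom.mem_ker, AddSubgroup.mem_addSubgroupOf]
    have hZiff : ∀ r : ℝ, r ∈ Z ↔ ∃ a b c : ℤ, r = (a:ℝ) + (b:ℝ)*β + (c:ℝ)*β^2 := by
      intro r
      rw [← SetLike.mem_coe, hZ, SetLike.mem_coe]
      exact mem_closure_iff hβ r
    obtain ⟨i1, i2, i3⟩ := hcoI p
    obtain ⟨M1, hM1⟩ := i1
    obtain ⟨M2, hM2⟩ := i2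
    obtain ⟨M3, hM3⟩ := i3
    have hn1 : (3*(co p).1+2*(co p).2.2).num = M1 := by rw [hM1, Rat.num_intCast]
    have hn2 : (2*(co p).2.1+3*(co p).2.2).num = M2 := by rw [hM2, Rat.num_intCast]
    have hn3 : (2*(co p).1+3*(co p).2.1+2*(co p).2.2).num = M3 := by rw [hM3, Rat.num_intCast]
    have hΦp : Φ p = (((3*M1 + M2 + 7*M3 : ℤ)) : ZMod 23) := by
      show (((3*(3*(co p).1+2*(co p).2.2).num + (2*(co p).2.1+3*(co p).2.2).num
        + 7*(2*(co p).1+3*(co p).2.1+2*(co p).2.2).num : ℤ)) : ZMod 23) = _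
      rw [hn1, hn2, hn3]
    constructor
    · intro h0
      rw [hΦp, ZMod.intCast_zmod_eq_zero_iff_dvd] at h0
      obtain ⟨k, hk⟩ := h0
      have hkq : 3*(M1:ℚ) + M2 + 7*M3 = 23*k := by exact_mod_cast hk
      have hx : (co p).1 = ((M1 + 2*M3 - 6*k : ℤ):ℚ) := by
        push_cast
        linear_combination (5/23)*hM1 - (6/23)*hM2 + (4/23)*hM3 - (6/23)*hkq
      have hy : (co p).2.1 = ((M3 - 2*k : ℤ):ℚ) := by
        push_cast
        linear_combination (-6/23)*hM1 - (2/23)*hM2 + (9/23)*hM3 - (2/23)*hkq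
      have hzz : (co p).2.2 = ((2*M1 + M2 + 4*M3 - 14*k : ℤ):ℚ) := by
        push_cast
        linear_combination (4/23)*hM1 + (9/23)*hM2 - (6/23)*hM3 - (14/23)*hkq
      rw [hZiff]
      refine ⟨M1 + 2*M3 - 6*k, M3 - 2*k, 2*M1 + M2 + 4*M3 - 14*k, ?_⟩
      rw [hco1 p, hx, hy, hzz]
      push_cast
      ring
    · intro hzmem
      obtain ⟨A, B, C, hABC⟩ := (hZiff _).mp hzmem
      have hcov : co p = ((A:ℚ), (B:ℚ), (C:ℚ)) := by
        apply uniq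
        rw [hABC]
        push_cast
        ring
      have g1 : (3*(co p).1+2*(co p).2.2 : ℚ) = ((3*A+2*C : ℤ):ℚ) := by
        rw [hcov]; push_cast; ring
      have g2 : (2*(co p).2.1+3*(co p).2.2 : ℚ) = ((2*B+3*C : ℤ):ℚ) := by
        rw [hcov]; push_cast; ring
      have g3 : (2*(co p).1+3*(co p).2.1+2*(co p).2.2 : ℚ) = ((2*A+3*B+2*C : ℤ):ℚ) := by
        rw [hcov]; push_cast; ring
      have hn1' : M1 = 3*A+2*C := by
        have := hn1; rw [g1, Rat.num_intCast] at this; omega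
      have hn2' : M2 = 2*B+3*C := by
        have := hn2; rw [g2, Rat.num_intCast] at this; omega
      have hn3' : M3 = 2*A+3*B+2*C := by
        have := hn3; rw [g3, Rat.num_intCast] at this; omega
      rw [hΦp, ZMod.intCast_zmod_eq_zero_iff_dvd]
      exact ⟨A+B+C, by rw [hn1', hn2', hn3']; ring⟩
  -- conclusion
  have e : (↥P ⧸ Z.addSubgroupOf P) ≃+ ZMod 23 := by
    rw [← hker]
    exact QuotientAddGroup.quotientKerEquivOfSurjective Φ hsurj
  refine ⟨⟨e⟩, ?_⟩
  rw [Nat.card_congr e.toEquiv, Nat.card_zmod]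
end

section
/- Let β be the positive real root of x⁴ = x³ + 1 (the second smallest Pisot number, a Pisot unit). Then x₀ := β^{−2} + β^{−3} satisfies x₀ ∈ ℤ[β], 0 < x₀ < 1, and the identity β^{−2} + β^{−3} = Σ_{j=0}^∞ β^{−(5j+1)} holds; moreover T_βⁿ(x₀) ≠ 0 for every n ≥ 0, so x₀ ∈ ℤ[β] ∩ [0,1) has an infinite β-expansion and β is not finitary: Fin(β) ≠ ℤ[β] ∩ [0,1). -/
/-- The β-transformation `T_β(x) = βx - ⌊βx⌋`. -/
noncomputable def betaMap (β : ℝ) (x : ℝ) : ℝ := β * x - (⌊β * x⌋ : ℤ)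

/-- `Fin(β)`: the points of `[0,1)` with finite greedy β-expansion, i.e. those
`x ∈ [0,1)` with `T_βⁿ(x) = 0` for some `n ≥ 0`. -/
def finExpSet (β : ℝ) : Set ℝ :=
  {x : ℝ | x ∈ Set.Ico (0 : ℝ) 1 ∧ ∃ n : ℕ, (betaMap β)^[n] x = 0}

/-- for the second smallest Pisot number `β` (the real root `> 1` of
`x⁴ = x³ + 1`), the point `x₀ = β⁻² + β⁻³` lies in `ℤ[β] ∩ (0,1)`, satisfies
`β⁻² + β⁻³ = Σ_{j≥0} β^{-(5j+1)}`, and `T_βⁿ(x₀) ≠ 0` for every `n`; hence `β` is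
not finitary: `Fin(β) ≠ ℤ[β] ∩ [0,1)`. -/
theorem second_pisot_not_finitary (β : ℝ) (hβ : β ^ 4 = β ^ 3 + 1) (hβ1 : 1 < β) :
    (β ^ 2)⁻¹ + (β ^ 3)⁻¹ ∈ Subring.closure ({β} : Set ℝ) ∧
    0 < (β ^ 2)⁻¹ + (β ^ 3)⁻¹ ∧ (β ^ 2)⁻¹ + (β ^ 3)⁻¹ < 1 ∧
    (β ^ 2)⁻¹ + (β ^ 3)⁻¹ = ∑' j : ℕ, (β ^ (5 * j + 1))⁻¹ ∧
    (∀ n : ℕ, (betaMap β)^[n] ((β ^ 2)⁻¹ + (β ^ 3)⁻¹) ≠ 0) ∧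
    finExpSet β ≠ (Subring.closure ({β} : Set ℝ) : Set ℝ) ∩ Set.Ico (0 : ℝ) 1 := by
  have hβ0 : (0:ℝ) < β := by linarith
  have hne : β ≠ 0 := ne_of_gt hβ0
  have hlo : (13:ℝ)/10 < β := by
    by_contra h
    push_neg at h
    have h3 : β ^ 3 ≤ (13/10:ℝ) ^ 3 := pow_le_pow_left₀ (by linarith) h 3
    have h4 : β ^ 4 ≤ (13/10) * β ^ 3 := by nlinarith [pow_pos hβ0 3]
    nlinarith
  have hhi : β < (3:ℝ)/2 := by
    by_contra h
    push_neg at h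
    have h3 : (3/2:ℝ) ^ 3 ≤ β ^ 3 := pow_le_pow_left₀ (by norm_num) h 3
    have h4 : (3/2) * β ^ 3 ≤ β ^ 4 := by nlinarith [pow_pos hβ0 3]
    nlinarith
  set x₀ : ℝ := (β ^ 2)⁻¹ + (β ^ 3)⁻¹ with hx
  have hx0 : 0 < x₀ := by positivity
  have hx1 : x₀ < 1 := by
    rw [hx, ← sub_pos]
    have h1 : 1 - ((β ^ 2)⁻¹ + (β ^ 3)⁻¹) = (β^3 - β - 1) / β^3 := by field_simp; ring
    rw [h1]
    apply div_pos _ (by positivity)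
    nlinarith
  -- membership
  have hβinv : β⁻¹ = β ^ 3 - β ^ 2 := by
    field_simp
    linear_combination -hβ
  have hmem : x₀ ∈ Subring.closure ({β} : Set ℝ) := by
    have hβm : β ∈ Subring.closure ({β} : Set ℝ) := Subring.subset_closure rfl
    have : x₀ = (β ^ 3 - β ^ 2) ^ 2 + (β ^ 3 - β ^ 2) ^ 3 := by
      rw [hx, ← hβinv, ← inv_pow, ← inv_pow]
    rw [this]
    exact add_mem (pow_mem (sub_mem (pow_mem hβm 3) (pow_mem hβm 2)) 2)
      (pow_mem (sub_mem (pow_mem hβm 3) (pow_mem hβm 2)) 3)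
  -- tsum
  have hr1 : (β ^ 5)⁻¹ < 1 := by
    rw [inv_lt_one_iff₀]; right; exact one_lt_pow₀ hβ1 (by norm_num)
  have hr0 : (0:ℝ) ≤ (β ^ 5)⁻¹ := by positivity
  have htsum : x₀ = ∑' j : ℕ, (β ^ (5 * j + 1))⁻¹ := by
    have hterm : ∀ j : ℕ, (β ^ (5 * j + 1))⁻¹ = ((β ^ 5)⁻¹) ^ j * β⁻¹ := by
      intro j
      rw [pow_add, pow_mul, pow_one, mul_inv, inv_pow]
    rw [tsum_congr hterm, tsum_mul_right, tsum_geometric_of_lt_one hr0 hr1, hx]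
    have h51 : (1:ℝ) < β ^ 5 := one_lt_pow₀ hβ1 (by norm_num)
    have hsub : (1:ℝ) - (β ^ 5)⁻¹ = (β ^ 5 - 1) / β ^ 5 := by field_simp
    rw [hsub]
    rw [div_eq_mul_inv, mul_inv, inv_inv]
    have h50 : β ^ 5 - 1 ≠ 0 := by intro h; nlinarith
    field_simp
    linear_combination (-β ^ 3 + β + 1) * hβ
  -- orbit
  have hltx : ∀ j : ℕ, (β ^ j)⁻¹ * x₀ < 1 := by
    intro j
    calc (β ^ j)⁻¹ * x₀ ≤ 1 * x₀ := by
          apply mul_le_mul_of_nonneg_right _ (le_of_lt hx0)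
          rw [inv_le_one_iff₀]; right; exact one_le_pow₀ (le_of_lt hβ1)
      _ = x₀ := one_mul _
      _ < 1 := hx1
  have hposj : ∀ j : ℕ, 0 < (β ^ j)⁻¹ * x₀ := by intro j; positivity
  have hstep : ∀ k : ℕ, 1 ≤ k → k ≤ 4 →
      betaMap β ((β ^ k)⁻¹ * x₀) = (β ^ (k - 1))⁻¹ * x₀ := by
    intro k hk1 hk4
    have hmul : β * ((β ^ k)⁻¹ * x₀) = (β ^ (k - 1))⁻¹ * x₀ := by
      obtain ⟨m, rfl⟩ : ∃ m, k = m + 1 := ⟨k - 1, (Nat.succ_pred_eq_of_pos hk1).symm⟩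
      simp only [Nat.add_sub_cancel]
      rw [pow_succ]
      field_simp
    unfold betaMap
    rw [hmul]
    have hfl : ⌊(β ^ (k-1))⁻¹ * x₀⌋ = 0 :=
      Int.floor_eq_zero_iff.mpr ⟨le_of_lt (hposj _), hltx _⟩
    rw [hfl]; simp
  have hstep0 : betaMap β x₀ = (β ^ 4)⁻¹ * x₀ := by
    unfold betaMap
    have hval : β * x₀ = β⁻¹ + (β^2)⁻¹ := by rw [hx]; field_simp
    have hfl : ⌊β * x₀⌋ = 1 := by
      rw [Int.floor_eq_iff]
      constructor
      · rw [hval]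
        have : β⁻¹ + (β^2)⁻¹ = (β + 1)/β^2 := by field_simp
        rw [this]
        rw [le_div_iff₀ (by positivity)]
        push_cast
        nlinarith
      · rw [hval]
        push_cast
        have h1 : β⁻¹ < 1 := by rw [inv_lt_one_iff₀]; right; exact hβ1
        have h2 : (β^2)⁻¹ < 1 := by
          rw [inv_lt_one_iff₀]; right; exact one_lt_pow₀ hβ1 (by norm_num)
        linarith
    rw [hfl]
    push_cast
    rw [hx]
    field_simp
    linear_combination (-β ^ 3 + β + 1) * hβ
  have key : ∀ n : ℕ, ∃ k : ℕ, k ≤ 4 ∧ (betaMap β)^[n] x₀ = (β ^ k)⁻¹ * x₀ := by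
    intro n
    induction n with
    | zero => exact ⟨0, by norm_num, by simp⟩
    | succ n ih =>
      obtain ⟨k, hk4, heq⟩ := ih
      rw [Function.iterate_succ_apply', heq]
      rcases Nat.eq_zero_or_pos k with hk0 | hk1
      · subst hk0
        refine ⟨4, le_refl _, ?_⟩
        simpa using hstep0
      · exact ⟨k - 1, le_trans (Nat.sub_le _ _) hk4, hstep k hk1 hk4⟩
  have hnever : ∀ n : ℕ, (betaMap β)^[n] x₀ ≠ 0 := by
    intro n h
    obtain ⟨k, _, heq⟩ := key n
    rw [heq] at h
    exact (hposj k).ne' h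
  refine ⟨hmem, hx0, hx1, htsum, hnever, ?_⟩
  intro h
  have hx₀mem : x₀ ∈ finExpSet β := by
    rw [h]
    exact ⟨hmem, le_of_lt hx0, hx1⟩
  obtain ⟨_, n, hn⟩ := hx₀mem
  exact hnever n hn
end

section
/- Let β = (1+√5)/2 be the golden mean and let (F_n) be the Fibonacci sequence with F₁ = 1, F₂ = 2 and F_{n+2} = F_{n+1} + F_n. Then for every even k ≥ 2, F_k = β^{−k} + Σ_{j=0}^{k/2 − 1} β^{k−1−4j} (exponents k−1, k−5, …, −k+3, together with −k), and for every odd k ≥ 1, F_k = Σ_{j=0}^{(k−1)/2} β^{k−1−4j} (exponents k−1, k−5, …, −k+1). -/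
/-- for the golden mean `β = (1+√5)/2` and the Fibonacci sequence
`F₁ = 1, F₂ = 2, F_{n+2} = F_{n+1} + F_n`, one has, for even `k ≥ 2`,
`F_k = β^{k-1} + β^{k-5} + ⋯ + β^{-k+3} + β^{-k}`, and for odd `k ≥ 1`,
`F_k = β^{k-1} + β^{k-5} + ⋯ + β^{-k+1}`. -/
theorem fibonacci_golden_mean_expansions (β : ℝ) (hβ : β = (1 + Real.sqrt 5) / 2)
    (F : ℕ → ℕ) (hF1 : F 1 = 1) (hF2 : F 2 = 2)
    (hFrec : ∀ n : ℕ, 1 ≤ n → F (n + 2) = F (n + 1) + F n) :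
    (∀ k : ℕ, 2 ≤ k → Even k →
      (F k : ℝ) = β ^ (-(k : ℤ)) +
        ∑ j ∈ Finset.range (k / 2), β ^ ((k : ℤ) - 1 - 4 * (j : ℤ))) ∧
    (∀ k : ℕ, 1 ≤ k → Odd k →
      (F k : ℝ) = ∑ j ∈ Finset.range ((k - 1) / 2 + 1), β ^ ((k : ℤ) - 1 - 4 * (j : ℤ))) := by
  have h5 : Real.sqrt 5 ^ 2 = 5 := Real.sq_sqrt (by norm_num)
  have hs5 : (0:ℝ) ≤ Real.sqrt 5 := Real.sqrt_nonneg 5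
  have hβpos : 0 < β := by rw [hβ]; positivity
  have hβ0 : β ≠ 0 := ne_of_gt hβpos
  have hβ2 : β ^ 2 = β + 1 := by rw [hβ]; nlinarith [h5]
  have hz : ∀ a b : ℤ, a = b → β ^ a = β ^ b := fun a b h => by rw [h]
  have hstep : ∀ a : ℤ, β ^ (a + 2) = β ^ (a + 1) + β ^ a := by
    intro a
    rw [zpow_add₀ hβ0 a 2, zpow_add₀ hβ0 a 1, zpow_one]
    have h2 : β ^ (2:ℤ) = β + 1 := by
      rw [show (2:ℤ) = ((2:ℕ):ℤ) by norm_num, zpow_natCast, hβ2]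
    rw [h2]; ring
  set S : ℕ → ℤ → ℝ := fun n e => ∑ j ∈ Finset.range n, β ^ (e - 4 * (j:ℤ)) with hS
  have hsum : ∀ (n : ℕ) (e : ℤ), S n (e + 2) = S n (e + 1) + S n e := by
    intro n e
    simp only [hS]
    rw [← Finset.sum_add_distrib]
    refine Finset.sum_congr rfl fun j _ => ?_
    rw [show e + 2 - 4 * (j:ℤ) = (e - 4 * j) + 2 by ring,
        show e + 1 - 4 * (j:ℤ) = (e - 4 * j) + 1 by ring]
    exact hstep _
  have hsucc : ∀ (n : ℕ) (e : ℤ), S (n + 1) e = S n e + β ^ (e - 4 * (n:ℤ)) := by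
    intro n e; simp only [hS]; rw [Finset.sum_range_succ]
  have key : ∀ m : ℕ,
      ((F (2 * m + 1) : ℝ) = S (m + 1) (2 * (m:ℤ))) ∧
      ((F (2 * m + 2) : ℝ) = β ^ (-(2 * (m:ℤ) + 2)) + S (m + 1) (2 * (m:ℤ) + 1)) := by
    intro m
    induction m with
    | zero =>
      constructor
      · simp [hS, hF1]
      · simp only [hS]
        norm_num [hF2, Finset.sum_range_one, zpow_neg]
        have h2 : β ^ (2:ℤ) = β + 1 := by
          rw [show (2:ℤ) = ((2:ℕ):ℤ) by norm_num, zpow_natCast]; exact hβ2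
        rw [hβ2]
        have hpos : (0:ℝ) < β + 1 := by linarith
        field_simp
        nlinarith [hβ2]
    | succ n ih =>
      obtain ⟨ihP, ihQ⟩ := ih
      have hP' : (F (2 * (n+1) + 1) : ℝ) = S (n + 1 + 1) (2 * ((n:ℤ) + 1)) := by
        have hr := hFrec (2*n+1) (by omega)
        rw [show 2 * (n+1) + 1 = (2*n+1) + 2 by ring, hr]
        push_cast
        rw [ihP, ihQ]
        rw [show (2 : ℤ) * ((n:ℤ) + 1) = (2 * (n:ℤ)) + 2 by ring]
        rw [hsucc (n+1) ((2 * (n:ℤ)) + 2), hsum]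
        rw [hz ((2 * (n:ℤ)) + 2 - 4 * (((n+1):ℕ):ℤ)) (-(2 * (n:ℤ) + 2)) (by push_cast; ring)]
        ring
      constructor
      · rw [hP']; push_cast; ring_nf
      · have hr := hFrec (2*n+2) (by omega)
        rw [show 2 * (n+1) + 2 = (2*n+2) + 2 by ring, hr,
            show (2*n+2) + 1 = 2 * (n+1) + 1 by ring]
        push_cast
        rw [hP', ihQ]
        rw [show (2 : ℤ) * ((n:ℤ) + 1) + 1 = (2 * (n:ℤ) + 1) + 2 by ring, hsum (n+1+1)]
        rw [show (2 * (n:ℤ) + 1) + 1 = 2 * ((n:ℤ) + 1) by ring]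
        rw [hsucc (n+1) (2 * (n:ℤ) + 1)]
        have hkey : β ^ (-(2 * ((n:ℤ)+1) + 2)) + β ^ (2 * (n:ℤ) + 1 - 4 * (((n+1):ℕ):ℤ)) =
            β ^ (-(2 * (n:ℤ) + 2)) := by
          rw [hz (-(2 * (n:ℤ) + 2)) ((-(2 * ((n:ℤ)+1) + 2)) + 2) (by ring),
              hz (2 * (n:ℤ) + 1 - 4 * (((n+1):ℕ):ℤ)) ((-(2 * ((n:ℤ)+1) + 2)) + 1)
                (by push_cast; ring),
              hstep]
          ring
        linarith [hkey]
  constructor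
  · intro k hk2 hke
    have hex : ∃ m : ℕ, k = 2 * m + 2 := by
      obtain ⟨t, ht⟩ := hke; exact ⟨t - 1, by omega⟩
    obtain ⟨m, rfl⟩ := hex
    rw [show (2*m+2)/2 = m + 1 from by omega]
    rw [(key m).2]
    have h1 : β ^ (-(2 * (m:ℤ) + 2)) = β ^ (-((2*m+2 : ℕ) : ℤ)) := hz _ _ (by push_cast; ring)
    have h2 : S (m+1) (2 * (m:ℤ) + 1) =
        ∑ j ∈ Finset.range (m+1), β ^ (((2*m+2 : ℕ) : ℤ) - 1 - 4 * (j:ℤ)) :=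
      Finset.sum_congr rfl fun j _ => hz _ _ (by push_cast; ring)
    rw [h1, h2]
  · intro k hk1 hko
    obtain ⟨m, rfl⟩ := hko
    rw [show (2*m+1-1)/2 + 1 = m + 1 from by omega]
    rw [(key m).1]
    exact Finset.sum_congr rfl fun j _ => hz _ _ (by push_cast; ring)
end
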